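/- arXiv:1611.08870 — 4 statements merged into one kernel-verified Lean document; each statement's English description precedes it below -/
import Mathlib

section
/- Suppose that for every λ in an index set Λ with 1 ≤ |Λ| ≤ ω, H(λ) is a π-tree on a topological space X_λ and cofin(ω) ≫ Rise_{H(λ)}(X_λ). Suppose also that a space Y has a π-tree. Then the product space Y × ∏_{λ∈Λ} X_λ has a π-tree. -/
open Set

universe u v

/-- A family `γ` π-refines `δ`: every nonempty member of `δ` contains a
nonempty member of `γ`. -/
def PiRefines {α : Type*} (γ δ : Set (Set α)) : Prop :=
  ∀ D ∈ δ, D.Nonempty → ∃ G ∈ γ, G.Nonempty ∧ G ⊆ D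

/-- The finite intersection property. -/
def HasFIP {α : Type*} (γ : Set (Set α)) : Prop :=
  ∀ δ : Set (Set α), δ ⊆ γ → δ.Finite → δ.Nonempty → (⋂₀ δ).Nonempty

/-- `cofin A` is the family of complements in `A` of finite subsets of `A`. -/
def cofin (A : Set ℕ) : Set (Set ℕ) :=
  {B | ∃ C : Set ℕ, C.Finite ∧ C ⊆ A ∧ B = A \ C}

/-- A foliage tree on `X`: a set-theoretic tree (strict partial order with
well-ordered sets of strict predecessors) with a leaf (a subset of `X`)
attached to each node. -/
structure FoliageTree (X : Type u) where
  Node : Type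
  lt : Node → Node → Prop
  lt_irrefl : ∀ a, ¬ lt a a
  lt_trans : ∀ {a b c}, lt a b → lt b c → lt a c
  wellOrdered : ∀ a : Node, IsWellOrder {b : Node // lt b a} fun x y => lt x.1 y.1
  leaf : Node → Set X

/-- Strict proper-extension order on finite sequences of naturals. -/
def seqLT (a b : List ℕ) : Prop := a <+: b ∧ a ≠ b

namespace FoliageTree

variable {X : Type u}

/-- The sons (immediate successors) of a node. -/
def Sons (F : FoliageTree X) (x : F.Node) : Set F.Node :=
  {s | F.lt x s ∧ ¬ ∃ t, F.lt x t ∧ F.lt t s}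

/-- A node is maximal if it has no strict successor. -/
def IsMaxNode (F : FoliageTree X) (x : F.Node) : Prop := ¬ ∃ s, F.lt x s

/-- A chain of nodes. -/
def IsChainN (F : FoliageTree X) (C : Set F.Node) : Prop :=
  ∀ x ∈ C, ∀ y ∈ C, F.lt x y ∨ x = y ∨ F.lt y x

/-- A branch is a maximal chain. -/
def IsBranch (F : FoliageTree X) (B : Set F.Node) : Prop :=
  F.IsChainN B ∧ ∀ C, F.IsChainN C → B ⊆ C → B = C

/-- The height of a node: the order type of its set of strict predecessors. -/
noncomputable def height (F : FoliageTree X) (v : F.Node) : Ordinal :=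
  @Ordinal.type {b : F.Node // F.lt b v} (fun x y => F.lt x.1 y.1) (F.wellOrdered v)

/-- `shoot F v`: unions of leaves over cofinite sets of sons of `v`. -/
def shoot (F : FoliageTree X) (v : F.Node) : Set (Set X) :=
  {S | ∃ C : Set F.Node, C ⊆ F.Sons v ∧ (F.Sons v \ C).Finite ∧ S = ⋃ s ∈ C, F.leaf s}

/-- `scope F p`: the nodes whose leaf contains `p`. -/
def scope (F : FoliageTree X) (p : X) : Set F.Node := {x | p ∈ F.leaf x}

/-- The union of all leaves. -/
def flesh (F : FoliageTree X) : Set X := ⋃ x, F.leaf x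

/-- `F` is a foliage `ω,ω`-tree: its skeleton is order-isomorphic to
`(ω^{<ω}, ⊂)`. -/
def IsOmegaOmegaTree (F : FoliageTree X) : Prop := Nonempty (F.lt ≃r seqLT)

/-- `F` is locally strict: the leaf of every non-maximal node is the disjoint
union of the leaves of its sons. -/
def LocallyStrict (F : FoliageTree X) : Prop :=
  ∀ x, ¬ F.IsMaxNode x →
    F.leaf x = (⋃ s ∈ F.Sons x, F.leaf s) ∧
      ∀ s ∈ F.Sons x, ∀ t ∈ F.Sons x, s ≠ t → Disjoint (F.leaf s) (F.leaf t)

/-- `F` has strict branches: it has nodes, and along every branch the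
intersection of the leaves is a singleton. -/
def StrictBranches (F : FoliageTree X) : Prop :=
  Nonempty F.Node ∧ ∀ B, F.IsBranch B → ∃ p, (⋂ x ∈ B, F.leaf x) = {p}

/-- `r` is the root: the least node. -/
def IsRoot (F : FoliageTree X) (r : F.Node) : Prop := ∀ x, r = x ∨ F.lt r x

/-- All leaves are open. -/
def OpenIn [TopologicalSpace X] (F : FoliageTree X) : Prop := ∀ x, IsOpen (F.leaf x)

/-- `F` is a Baire foliage tree on `X`. -/
def IsBaireFoliageTree [TopologicalSpace X] (F : FoliageTree X) : Prop :=
  F.OpenIn ∧ F.LocallyStrict ∧ F.IsOmegaOmegaTree ∧ F.StrictBranches ∧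
    ∃ r, F.IsRoot r ∧ F.leaf r = Set.univ

/-- `F` grows into `X`. -/
def GrowsInto [TopologicalSpace X] (F : FoliageTree X) : Prop :=
  ∀ p : X, ∀ U ∈ nhds p, ∃ z ∈ F.scope p, PiRefines (F.shoot z) {U}

/-- `F` is a π-tree on `X`. -/
def IsPiTree [TopologicalSpace X] (F : FoliageTree X) : Prop :=
  F.IsBaireFoliageTree ∧ F.GrowsInto

/-- `rise F p U`: the set of (finite) heights of nodes `v` whose leaf contains
`p` and whose shoot π-refines `{U}`. -/
noncomputable def rise (F : FoliageTree X) (p : X) (U : Set X) : Set ℕ :=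
  {n | ∃ v ∈ F.scope p, PiRefines (F.shoot v) {U} ∧ F.height v = (n : Ordinal)}

/-- `Rise F`: all sets `rise F p U` for `p ∈ X` and `U` a neighbourhood of `p`. -/
def Rise [TopologicalSpace X] (F : FoliageTree X) : Set (Set ℕ) :=
  {R | ∃ p U, U ∈ nhds p ∧ R = F.rise p U}

end FoliageTree

/-! ### Auxiliary development -/

noncomputable section
open scoped Classical

namespace PTAux

universe w

/-! #### List / `seqLT` basics -/

lemma seqLT_length {a b : List ℕ} (h : seqLT a b) : a.length < b.length := by
  rcases h with ⟨hp, hne⟩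
  rcases lt_or_eq_of_le hp.length_le with h | h
  · exact h
  · exact absurd (hp.eq_of_length h) hne

lemma seqLT_concat (a : List ℕ) (k : ℕ) : seqLT a (a ++ [k]) :=
  ⟨⟨[k], rfl⟩, by simp⟩

lemma seqLT_trans {a b c : List ℕ} (h1 : seqLT a b) (h2 : seqLT b c) : seqLT a c := by
  refine ⟨h1.1.trans h2.1, fun h => ?_⟩
  have l1 := seqLT_length h1
  have l2 := seqLT_length h2
  rw [h] at l1; omega

lemma take_prefix_take {s : List ℕ} {m m' : ℕ} (h : m ≤ m') :
    s.take m <+: s.take m' := by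
  have h1 : (s.take m').take m = s.take m := by
    rw [List.take_take, min_eq_left h]
  rw [← h1]; exact List.take_prefix _ _

lemma eq_concat_of_prefix_len {a s : List ℕ} (h : a <+: s) (hl : s.length = a.length + 1) :
    ∃ k, s = a ++ [k] := by
  obtain ⟨t, rfl⟩ := h
  have : t.length = 1 := by simp at hl; omega
  obtain ⟨k, rfl⟩ := List.length_eq_one_iff.1 this
  exact ⟨k, rfl⟩

lemma seqLT_son_iff {a s : List ℕ} :
    (seqLT a s ∧ ¬ ∃ t, seqLT a t ∧ seqLT t s) ↔ ∃ k, s = a ++ [k] := by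
  constructor
  · rintro ⟨h1, h2⟩
    have hl := seqLT_length h1
    by_cases hlen : s.length = a.length + 1
    · exact eq_concat_of_prefix_len h1.1 hlen
    · exfalso; apply h2
      have hta : a <+: s.take (a.length + 1) := by
        have h2 := take_prefix_take (s := s) (m := a.length) (m' := a.length + 1) (by omega)
        rwa [← List.prefix_iff_eq_take.1 h1.1] at h2
      have hlt : (s.take (a.length + 1)).length = a.length + 1 := by
        rw [List.length_take]; omega
      refine ⟨s.take (a.length + 1), ⟨hta, ?_⟩, ⟨List.take_prefix _ _, ?_⟩⟩
      · intro h
        have := congrArg List.length h; rw [hlt] at this; omega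
      · intro h
        have := congrArg List.length h; rw [hlt] at this; omega
  · rintro ⟨k, rfl⟩
    refine ⟨seqLT_concat a k, ?_⟩
    rintro ⟨t, ht1, ht2⟩
    have l1 := seqLT_length ht1
    have l2 := seqLT_length ht2
    simp at l2; omega

/-- every maximal `seqLT`-chain is the set of finite initial segments of an
infinite branch -/
lemma maxChain_spec {B : Set (List ℕ)} (hB : IsMaxChain seqLT B) :
    ∃ ℓ : ℕ → List ℕ, (∀ n, (ℓ n).length = n) ∧ (∀ n m, n ≤ m → ℓ n <+: ℓ m) ∧
      B = Set.range ℓ := by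
  have hchain := hB.1
  -- comparability
  have hcomp : ∀ x ∈ B, ∀ y ∈ B, x <+: y ∨ y <+: x := by
    intro x hx y hy
    by_cases hxy : x = y
    · exact Or.inl (hxy ▸ List.prefix_refl x)
    · rcases hchain hx hy hxy with h | h
      · exact Or.inl h.1
      · exact Or.inr h.1
  -- closed under take
  have htake : ∀ x ∈ B, ∀ m, x.take m ∈ B := by
    intro x hx m
    by_cases h : x.take m = x
    · rwa [h]
    have hlt : (x.take m).length < x.length := by
      have : (x.take m).length = min m x.length := List.length_take
      rcases lt_or_ge m x.length with hm | hm
      · omega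
      · exfalso; exact h (List.take_of_length_le hm)
    have hmem : IsChain seqLT (insert (x.take m) B) := by
      refine hchain.insert ?_
      intro y hy hne
      rcases hcomp x hx y hy with hxy | hyx
      · left
        refine ⟨(List.take_prefix m x).trans hxy, ?_⟩
        intro hh
        have := congrArg List.length hh
        have := hxy.length_le
        omega
      · rcases List.prefix_or_prefix_of_prefix hyx (List.take_prefix m x) with h1 | h1
        · exact Or.inr ⟨h1, fun hh => hne.symm hh⟩
        · exact Or.inl ⟨h1, hne⟩
    have heq := hB.2 hmem (Set.subset_insert _ _)
    rw [heq]; exact Set.mem_insert _ _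
  -- B nonempty
  have hne : B.Nonempty := by
    by_contra h
    rw [Set.not_nonempty_iff_eq_empty] at h
    have hch : IsChain seqLT ({[]} : Set (List ℕ)) := by
      intro x hx y hy hxy
      simp at hx hy; rw [hx, hy] at hxy; exact absurd rfl hxy
    have := hB.2 hch (by rw [h]; exact Set.empty_subset _)
    rw [h] at this
    exact (Set.singleton_nonempty ([] : List ℕ)).ne_empty this.symm
  -- unbounded lengths
  have hunb : ∀ n, ∃ x ∈ B, n ≤ x.length := by
    by_contra h
    push_neg at h
    obtain ⟨n, hn⟩ := h
    -- lengths bounded: get a maximal-length element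
    have hSne : (List.length '' B).Nonempty := hne.image _
    have hbdd : BddAbove (List.length '' B) := by
      refine ⟨n, ?_⟩; rintro m ⟨x, hx, rfl⟩; exact le_of_lt (hn x hx)
    obtain ⟨x, hx, hxm⟩ : ∃ x ∈ B, ∀ y ∈ B, y.length ≤ x.length := by
      have hmem := Nat.sSup_mem hSne hbdd
      obtain ⟨x, hx, hxe⟩ := hmem
      exact ⟨x, hx, fun y hy => hxe ▸ le_csSup hbdd ⟨y, hy, rfl⟩⟩
    have hch : IsChain seqLT (insert (x ++ [0]) B) := by
      refine hchain.insert ?_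
      intro y hy hne'
      rcases hcomp y hy x hx with h1 | h1
      · right
        refine ⟨h1.trans ⟨[0], rfl⟩, ?_⟩
        intro hh
        have := congrArg List.length hh; simp at this
        have := hxm y hy; omega
      · have : y = x := (h1.eq_of_length (le_antisymm h1.length_le (hxm y hy))).symm
        right; subst this; exact ⟨⟨[0], rfl⟩, by simp⟩
    have heq := hB.2 hch (Set.subset_insert _ _)
    have hmem : x ++ [0] ∈ B := by rw [heq]; exact Set.mem_insert _ _
    have := hxm _ hmem; simp at this
  -- unique element of each length
  have huniq : ∀ x ∈ B, ∀ y ∈ B, x.length = y.length → x = y := by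
    intro x hx y hy hxy
    rcases hcomp x hx y hy with h | h
    · exact h.eq_of_length hxy
    · exact (h.eq_of_length hxy.symm).symm
  have hex : ∀ n : ℕ, ∃ x, x ∈ B ∧ x.length = n := by
    intro n
    obtain ⟨x, hx, hxl⟩ := hunb n
    refine ⟨x.take n, htake x hx n, ?_⟩
    rw [List.length_take]; omega
  choose ℓ hℓB hℓlen using hex
  refine ⟨ℓ, hℓlen, ?_, ?_⟩
  · intro n m hnm
    rcases hcomp _ (hℓB n) _ (hℓB m) with h | h
    · exact h
    · have := h.length_le; rw [hℓlen, hℓlen] at this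
      have : n = m := le_antisymm hnm this
      subst this; exact List.prefix_refl _
  · ext x
    constructor
    · intro hx
      exact ⟨x.length, huniq _ (hℓB _) _ hx (hℓlen _)⟩
    · rintro ⟨n, rfl⟩; exact hℓB n

/-- well-order structure on proper prefixes -/
lemma wellOrderPrefix (a : List ℕ) :
    IsWellOrder {b : List ℕ // seqLT b a} (fun x y => seqLT x.1 y.1) := by
  have htri : ∀ x y : {b : List ℕ // seqLT b a}, seqLT x.1 y.1 ∨ x = y ∨ seqLT y.1 x.1 := by
    intro x y
    rcases List.prefix_or_prefix_of_prefix x.2.1 y.2.1 with h | h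
    · by_cases hxy : x.1 = y.1
      · exact Or.inr (Or.inl (Subtype.ext hxy))
      · exact Or.inl ⟨h, hxy⟩
    · by_cases hxy : x.1 = y.1
      · exact Or.inr (Or.inl (Subtype.ext hxy))
      · exact Or.inr (Or.inr ⟨h, fun hh => hxy hh.symm⟩)
  refine { wf := ?_, trichotomous := fun x y h1 h2 => ((htri x y).resolve_left h1).resolve_right h2 }
  · exact Subrelation.wf (fun {x y} h => seqLT_length h)
      (InvImage.wf (fun x : {b : List ℕ // seqLT b a} => x.1.length) wellFounded_lt)

end PTAux

namespace PTAux

variable {X : Type u}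

/-! #### Generic foliage-tree lemmas -/

lemma isChainN_iff (F : FoliageTree X) (C : Set F.Node) :
    F.IsChainN C ↔ IsChain F.lt C := by
  constructor
  · intro h x hx y hy hne
    rcases h x hx y hy with h | h | h
    · exact Or.inl h
    · exact absurd h hne
    · exact Or.inr h
  · intro h x hx y hy
    by_cases hxy : x = y
    · exact Or.inr (Or.inl hxy)
    · rcases h hx hy hxy with h | h
      · exact Or.inl h
      · exact Or.inr (Or.inr h)

lemma isBranch_iff_isMaxChain (F : FoliageTree X) (B : Set F.Node) :
    F.IsBranch B ↔ IsMaxChain F.lt B := by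
  unfold FoliageTree.IsBranch IsMaxChain
  rw [isChainN_iff]
  constructor
  · rintro ⟨h1, h2⟩
    exact ⟨h1, fun C hC hBC => h2 C ((isChainN_iff F C).2 hC) hBC⟩
  · rintro ⟨h1, h2⟩
    exact ⟨h1, fun C hC hBC => h2 ((isChainN_iff F C).1 hC) hBC⟩

/-- every chain extends to a branch whose leaves intersect in a point -/
lemma exists_branch_point (F : FoliageTree X) (hS : F.StrictBranches)
    {C : Set F.Node} (hC : IsChain F.lt C) :
    ∃ B p, IsMaxChain F.lt B ∧ C ⊆ B ∧ (⋂ x ∈ B, F.leaf x) = {p} := by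
  obtain ⟨B, hB, hCB⟩ := hC.exists_maxChain
  obtain ⟨p, hp⟩ := hS.2 B ((isBranch_iff_isMaxChain F B).2 hB)
  exact ⟨B, p, hB, hCB, hp⟩

/-! #### Normalized trees on `ω^{<ω}` -/

/-- a normalized Baire foliage tree, with nodes the finite sequences -/
structure Norm (X : Type u) [TopologicalSpace X] where
  L : List ℕ → Set X
  root : L [] = Set.univ
  opn : ∀ a, IsOpen (L a)
  cover : ∀ a, L a = ⋃ k, L (a ++ [k])
  disj : ∀ a {j k : ℕ}, j ≠ k → Disjoint (L (a ++ [j])) (L (a ++ [k]))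
  nonemp : ∀ a, (L a).Nonempty
  strict : ∀ g : ℕ → ℕ, ∃ p, (⋂ n, L ((List.range n).map g)) = {p}

variable [TopologicalSpace X]

lemma gen_prefix_sub {L : List ℕ → Set X} (hcov : ∀ a, L a = ⋃ k, L (a ++ [k]))
    {a b : List ℕ} (h : a <+: b) : L b ⊆ L a := by
  obtain ⟨t, rfl⟩ := h
  induction t using List.reverseRecOn with
  | nil => simp
  | append_singleton t k ih =>
    refine subset_trans ?_ ih
    rw [← List.append_assoc]
    rw [hcov (a ++ t)]
    exact Set.subset_iUnion (fun k => L ((a ++ t) ++ [k])) k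

namespace Norm

variable (N : Norm X)

lemma son_sub (a : List ℕ) (k : ℕ) : N.L (a ++ [k]) ⊆ N.L a :=
  gen_prefix_sub N.cover ⟨[k], rfl⟩

lemma prefix_sub {a b : List ℕ} (h : a <+: b) : N.L b ⊆ N.L a :=
  gen_prefix_sub N.cover h

lemma mem_cover {x : X} {a : List ℕ} (h : x ∈ N.L a) : ∃ k, x ∈ N.L (a ++ [k]) := by
  rw [N.cover a] at h; simpa using h

/-- nodes whose leaves share a point are comparable -/
lemma comparable {x : X} : ∀ {a b : List ℕ}, x ∈ N.L a → x ∈ N.L b →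
    a <+: b ∨ b <+: a := by
  have main : ∀ n : ℕ, ∀ a b : List ℕ, a.length + b.length ≤ n →
      x ∈ N.L a → x ∈ N.L b → a <+: b ∨ b <+: a := by
    intro n
    induction n with
    | zero =>
      intro a b hn _ _
      have ha : a = [] := by
        cases a with | nil => rfl | cons _ _ => simp at hn
      subst ha; exact Or.inl (List.nil_prefix)
    | succ n ih =>
      intro a b hn ha hb
      rcases List.eq_nil_or_concat a with rfl | ⟨a₀, j, rfl⟩
      · exact Or.inl List.nil_prefix
      rcases List.eq_nil_or_concat b with rfl | ⟨b₀, k, rfl⟩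
      · exact Or.inr List.nil_prefix
      simp only [List.concat_eq_append] at ha hb hn ⊢
      have ha₀ : x ∈ N.L a₀ := N.son_sub a₀ j ha
      have hb₀ : x ∈ N.L b₀ := N.son_sub b₀ k hb
      have hlen : a₀.length + 1 + (b₀.length + 1) ≤ n + 1 := by simpa using hn
      rcases ih a₀ (b₀ ++ [k]) (by simp; omega) ha₀ hb with h1 | h1
      swap
      · exact Or.inr (h1.trans ⟨[j], rfl⟩)
      rcases ih (a₀ ++ [j]) b₀ (by simp; omega) ha hb₀ with h2 | h2
      · exact Or.inl (h2.trans ⟨[k], rfl⟩)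
      -- now a₀ <+: b₀ ++ [k] and b₀ <+: a₀ ++ [j]
      have l1 := h1.length_le
      have l2 := h2.length_le
      simp at l1 l2
      rcases Nat.lt_trichotomy a₀.length b₀.length with hl | hl | hl
      · -- |a₀| < |b₀| : then b₀ = a₀ ++ [j]
        have : b₀ = a₀ ++ [j] := h2.eq_of_length (by simp; omega)
        exact Or.inl (this ▸ ⟨[k], rfl⟩)
      · -- equal lengths: a₀ = b₀
        have hab : a₀ = b₀ := by
          have h3 : a₀ <+: b₀ := by
            have h4 := take_prefix_take (s := b₀ ++ [k]) (m := a₀.length) (m' := b₀.length) (by omega)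
            rwa [← List.prefix_iff_eq_take.1 h1, List.take_left] at h4
          exact h3.eq_of_length hl
        subst hab
        by_cases hjk : j = k
        · subst hjk; exact Or.inl (List.prefix_refl _)
        · exfalso
          exact Set.disjoint_left.1 (N.disj a₀ hjk) ha hb
      · have : a₀ = b₀ ++ [k] := h1.eq_of_length (by simp; omega)
        exact Or.inr (this ▸ ⟨[j], rfl⟩)
  intro a b ha hb
  exact main (a.length + b.length) a b le_rfl ha hb

lemma uniq_len {x : X} {a b : List ℕ} (ha : x ∈ N.L a) (hb : x ∈ N.L b)
    (hl : a.length = b.length) : a = b := by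
  rcases N.comparable ha hb with h | h
  · exact h.eq_of_length hl
  · exact (h.eq_of_length hl.symm).symm

lemma not_sub_of_seqLT {a b : List ℕ} (h : seqLT b a) : ¬ (N.L b ⊆ N.L a) := by
  intro hsub
  have hlb := seqLT_length h
  -- b ++ [j] is a prefix of a for some j
  obtain ⟨j, hj⟩ : ∃ j, b ++ [j] <+: a := by
    have h4 := take_prefix_take (s := a) (m := b.length) (m' := b.length + 1) (by omega)
    rw [← List.prefix_iff_eq_take.1 h.1] at h4
    obtain ⟨j, hj⟩ := eq_concat_of_prefix_len h4 (by rw [List.length_take]; omega)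
    exact ⟨j, hj ▸ List.take_prefix _ _⟩
  have h5 : N.L a ⊆ N.L (b ++ [j]) := N.prefix_sub hj
  obtain ⟨x, hx⟩ := N.nonemp (b ++ [j + 1])
  have hx1 : x ∈ N.L (b ++ [j]) := h5 (hsub (N.son_sub b (j+1) hx))
  exact Set.disjoint_left.1 (N.disj b (by omega : j + 1 ≠ j)) hx hx1

lemma point_ext {x : X} {a : List ℕ} (h : x ∈ N.L a) (m : ℕ) :
    ∃ b, a <+: b ∧ b.length = a.length + m ∧ x ∈ N.L b := by
  induction m with
  | zero => exact ⟨a, List.prefix_refl _, rfl, h⟩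
  | succ m ih =>
    obtain ⟨b, hab, hbl, hxb⟩ := ih
    obtain ⟨k, hk⟩ := N.mem_cover hxb
    exact ⟨b ++ [k], hab.trans ⟨[k], rfl⟩, by simp [hbl]; omega, hk⟩

/-- `GoodAt a U`: all but finitely many sons of `a` have leaf inside `U` -/
def GoodAt (a : List ℕ) (U : Set X) : Prop := {k : ℕ | ¬ N.L (a ++ [k]) ⊆ U}.Finite

lemma GoodAt.mono {a : List ℕ} {U V : Set X} (hUV : U ⊆ V) (h : N.GoodAt a U) :
    N.GoodAt a V :=
  h.subset (fun k hk h2 => hk (h2.trans hUV))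

lemma GoodAt.bound {a : List ℕ} {U : Set X} (h : N.GoodAt a U) :
    ∃ β, ∀ k, β ≤ k → N.L (a ++ [k]) ⊆ U := by
  obtain ⟨β, hβ⟩ := h.bddAbove
  refine ⟨β + 1, fun k hk => ?_⟩
  by_contra hc
  have := hβ hc
  omega

end Norm

end PTAux

namespace PTAux

section Extract

variable {X : Type u} [TopologicalSpace X] (F : FoliageTree X)

variable (e : F.lt ≃r seqLT)

lemma lt_iff (x y : F.Node) : F.lt x y ↔ seqLT (e x) (e y) := e.map_rel_iff.symm

lemma sons_transfer (a : List ℕ) :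
    F.Sons (e.symm a) = Set.range fun k => e.symm (a ++ [k]) := by
  ext s
  have h1 : F.lt (e.symm a) s ↔ seqLT a (e s) := by
    rw [lt_iff F e, e.apply_symm_apply]
  have h2 : (∃ t, F.lt (e.symm a) t ∧ F.lt t s) ↔ ∃ u, seqLT a u ∧ seqLT u (e s) := by
    constructor
    · rintro ⟨t, ht1, ht2⟩
      rw [lt_iff F e, e.apply_symm_apply] at ht1
      rw [lt_iff F e] at ht2
      exact ⟨e t, ht1, ht2⟩
    · rintro ⟨u, hu1, hu2⟩
      refine ⟨e.symm u, ?_, ?_⟩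
      · rw [lt_iff F e, e.apply_symm_apply, e.apply_symm_apply]; exact hu1
      · rw [lt_iff F e, e.apply_symm_apply]; exact hu2
  simp only [FoliageTree.Sons, Set.mem_setOf_eq, Set.mem_range]
  rw [h1]
  constructor
  · rintro ⟨hlt, hmid⟩
    obtain ⟨k, hk⟩ := seqLT_son_iff.1 ⟨hlt, fun hc => hmid (h2.2 hc)⟩
    exact ⟨k, by rw [← hk, e.symm_apply_apply]⟩
  · rintro ⟨k, hk⟩
    have hes : e s = a ++ [k] := by rw [← hk, e.apply_symm_apply]
    have := seqLT_son_iff.2 ⟨k, hes⟩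
    exact ⟨this.1, fun hc => this.2 (h2.1 hc)⟩

/-- order iso between proper prefixes of `a` and `Fin a.length` -/
def prefIso (a : List ℕ) :
    (fun x y : {b : List ℕ // seqLT b a} => seqLT x.1 y.1) ≃r
      ((· < ·) : Fin a.length → Fin a.length → Prop) where
  toFun x := ⟨x.1.length, seqLT_length x.2⟩
  invFun j := ⟨a.take j.1, ⟨List.take_prefix _ _, fun h => by
    have := congrArg List.length h
    rw [List.length_take] at this
    have := j.2
    omega⟩⟩
  left_inv x := Subtype.ext (List.prefix_iff_eq_take.1 x.2.1).symm
  right_inv j := by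
    apply Fin.ext
    simp only [List.length_take]
    have := j.2
    omega
  map_rel_iff' := by
    intro x y
    simp only [Equiv.coe_fn_mk, Fin.mk_lt_mk]
    constructor
    · intro h
      rcases List.prefix_or_prefix_of_prefix x.2.1 y.2.1 with hc | hc
      · exact ⟨hc, fun hh => by rw [hh] at h; exact lt_irrefl _ h⟩
      · exfalso; have := hc.length_le; omega
    · exact seqLT_length

/-- order iso between predecessors of `v` and proper prefixes of `e v` -/
def predIso (v : F.Node) :
    (fun x y : {b : F.Node // F.lt b v} => F.lt x.1 y.1) ≃r
      (fun x y : {b : List ℕ // seqLT b (e v)} => seqLT x.1 y.1) where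
  toEquiv := e.toEquiv.subtypeEquiv fun b => (lt_iff F e b v)
  map_rel_iff' := by
    intro x y
    simp only [Equiv.subtypeEquiv_apply]
    exact e.map_rel_iff

lemma height_eq (v : F.Node) : F.height v = ((e v).length : Ordinal) := by
  have h1 := (@Ordinal.type_eq _ _ (fun x y : {b : F.Node // F.lt b v} => F.lt x.1 y.1)
      ((· < ·) : Fin (e v).length → Fin (e v).length → Prop) (F.wellOrdered v)
      inferInstance).2 ⟨(predIso F e v).trans (prefIso (e v))⟩
  exact h1.trans (Ordinal.type_fin _)

variable (hPi : F.IsPiTree)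

def normL : List ℕ → Set X := fun a => F.leaf (e.symm a)

lemma normL_notMax (a : List ℕ) : ¬ F.IsMaxNode (e.symm a) := by
  intro h
  exact h ⟨e.symm (a ++ [0]), by
    rw [lt_iff F e, e.apply_symm_apply, e.apply_symm_apply]
    exact seqLT_concat a 0⟩

lemma normL_cover (hLS : F.LocallyStrict) (a : List ℕ) :
    normL F e a = ⋃ k, normL F e (a ++ [k]) := by
  have h := (hLS (e.symm a) (normL_notMax F e a)).1
  rw [normL, h, sons_transfer F e a, Set.biUnion_range]
  rfl

lemma normL_disj (hLS : F.LocallyStrict) (a : List ℕ) {j k : ℕ} (hjk : j ≠ k) :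
    Disjoint (normL F e (a ++ [j])) (normL F e (a ++ [k])) := by
  have h := (hLS (e.symm a) (normL_notMax F e a)).2
  refine h _ ?_ _ ?_ ?_
  · rw [sons_transfer F e a]; exact ⟨j, rfl⟩
  · rw [sons_transfer F e a]; exact ⟨k, rfl⟩
  · intro hc
    apply hjk
    have := congrArg e hc
    rw [e.apply_symm_apply, e.apply_symm_apply] at this
    have h2 := List.append_cancel_left this
    simpa using h2

lemma normL_root (hr : ∃ r, F.IsRoot r ∧ F.leaf r = Set.univ) :
    normL F e [] = Set.univ := by
  obtain ⟨r, hr1, hr2⟩ := hr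
  have : r = e.symm [] := by
    rcases hr1 (e.symm []) with h | h
    · exact h
    · exfalso
      rw [lt_iff F e, e.apply_symm_apply] at h
      rcases h with ⟨hp, hne⟩
      have h5 := hp.length_le
      simp at h5
      exact hne h5
  rw [normL, ← this, hr2]

lemma normL_nonemp (hSB : F.StrictBranches) (a : List ℕ) : (normL F e a).Nonempty := by
  have hC : IsChain F.lt ({e.symm a} : Set F.Node) := by
    intro x hx y hy hne
    simp at hx hy
    rw [hx, hy] at hne
    exact absurd rfl hne
  obtain ⟨B, p, hB, hCB, hp⟩ := exists_branch_point F hSB hC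
  refine ⟨p, ?_⟩
  have hpmem : p ∈ ⋂ x ∈ B, F.leaf x := by rw [hp]; rfl
  exact Set.mem_iInter₂.1 hpmem _ (hCB rfl)

lemma normL_strict (hSB : F.StrictBranches) (hLS : F.LocallyStrict) (g : ℕ → ℕ) :
    ∃ p, (⋂ n, normL F e ((List.range n).map g)) = {p} := by
  have hcov := normL_cover F e hLS
  have hsq : ∀ n m : ℕ, n ≤ m → (List.range n).map g <+: (List.range m).map g := by
    intro n m hnm
    have h1 : ((List.range m).map g).take n = (List.range n).map g := by
      rw [← List.map_take, List.take_range, min_eq_left hnm]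
    rw [← h1]; exact List.take_prefix _ _
  have hsqlen : ∀ n : ℕ, ((List.range n).map g).length = n := by simp
  have hC : IsChain F.lt (Set.range fun n => e.symm ((List.range n).map g)) := by
    rintro _ ⟨n, rfl⟩ _ ⟨m, rfl⟩ hne
    rcases Nat.lt_trichotomy n m with h | h | h
    · left
      rw [lt_iff F e, e.apply_symm_apply, e.apply_symm_apply]
      refine ⟨hsq n m (le_of_lt h), fun hc => ?_⟩
      have := congrArg List.length hc
      rw [hsqlen, hsqlen] at this
      omega
    · exact absurd (by rw [h]) hne
    · right
      rw [lt_iff F e, e.apply_symm_apply, e.apply_symm_apply]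
      refine ⟨hsq m n (le_of_lt h), fun hc => ?_⟩
      have := congrArg List.length hc
      rw [hsqlen, hsqlen] at this
      omega
  obtain ⟨B, p, hB, hCB, hp⟩ := exists_branch_point F hSB hC
  refine ⟨p, ?_⟩
  apply subset_antisymm
  · intro x hx
    have : x ∈ ⋂ b ∈ B, F.leaf b := by
      refine Set.mem_iInter₂.2 fun b hb => ?_
      -- b is below some node of the chain
      have hex : ∃ n, b = e.symm ((List.range n).map g) ∨ F.lt b (e.symm ((List.range n).map g)) := by
        by_contra hcon
        push_neg at hcon
        have hlt : ∀ n, F.lt (e.symm ((List.range n).map g)) b := by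
          intro n
          rcases hcon n with ⟨h1, h2⟩
          have hmem := hCB (Set.mem_range_self n)
          by_cases hbe : b = e.symm ((List.range n).map g)
          · exact absurd hbe h1
          · rcases hB.1 hb hmem hbe with h | h
            · exact absurd h h2
            · exact h
        have := hlt ((e b).length)
        rw [lt_iff F e, e.apply_symm_apply] at this
        have hl := seqLT_length this
        rw [hsqlen] at hl
        omega
      obtain ⟨n, hn⟩ := hex
      have hxn : x ∈ normL F e ((List.range n).map g) := Set.mem_iInter.1 hx n
      rcases hn with rfl | hn
      · exact hxn
      · rw [lt_iff F e] at hn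
        have hpre : (e b) <+: (List.range n).map g := by
          have := hn.1
          rwa [e.apply_symm_apply] at this
        have : normL F e ((List.range n).map g) ⊆ normL F e (e b) := gen_prefix_sub hcov hpre
        have := this hxn
        rwa [normL, e.symm_apply_apply] at this
    rw [hp] at this
    exact this
  · intro x hx
    simp only [Set.mem_singleton_iff] at hx
    refine Set.mem_iInter.2 fun n => ?_
    rw [hx]
    have hpmem : p ∈ ⋂ b ∈ B, F.leaf b := by rw [hp]; rfl
    exact Set.mem_iInter₂.1 hpmem _ (hCB (Set.mem_range_self n))

end Extract

end PTAux

namespace PTAux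

section Extract2

variable {X : Type u} [TopologicalSpace X] (F : FoliageTree X) (hPi : F.IsPiTree)

def eF : F.lt ≃r seqLT := Classical.choice hPi.1.2.2.1

/-- the normalized tree obtained from a π-tree -/
def normOf : Norm X where
  L := normL F (eF F hPi)
  root := normL_root F (eF F hPi) hPi.1.2.2.2.2
  opn a := hPi.1.1 _
  cover := normL_cover F (eF F hPi) hPi.1.2.1
  disj a _ _ h := normL_disj F (eF F hPi) hPi.1.2.1 a h
  nonemp := normL_nonemp F (eF F hPi) hPi.1.2.2.2.1
  strict := normL_strict F (eF F hPi) hPi.1.2.2.2.1 hPi.1.2.1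

/-- transfer of a shoot refinement to the `GoodAt` predicate -/
lemma goodAt_of_shoot {U : Set X} (hUne : U.Nonempty) (z : F.Node)
    (href : PiRefines (F.shoot z) {U}) :
    (normOf F hPi).GoodAt ((eF F hPi) z) U := by
  set e := eF F hPi
  obtain ⟨S, hS, hSne, hSU⟩ := href U rfl hUne
  obtain ⟨C, hCsub, hCfin, rfl⟩ := hS
  have hbad : {k : ℕ | ¬ (normOf F hPi).L (e z ++ [k]) ⊆ U} ⊆
      (fun k => e.symm (e z ++ [k])) ⁻¹' (F.Sons z \ C) := by
    intro k hk
    simp only [Set.mem_setOf_eq] at hk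
    constructor
    · have := sons_transfer F e (e z)
      rw [e.symm_apply_apply] at this
      rw [this]
      exact ⟨k, rfl⟩
    · intro hmem
      apply hk
      refine subset_trans ?_ hSU
      intro x hx
      exact Set.mem_biUnion hmem hx
  refine Set.Finite.subset (Set.Finite.preimage ?_ hCfin) hbad
  intro k _ k' _ h
  have := congrArg e h
  rw [e.apply_symm_apply, e.apply_symm_apply] at this
  have := List.append_cancel_left this
  simpa using this

lemma normOf_grow : ∀ p U, U ∈ nhds p →
    ∃ b, p ∈ (normOf F hPi).L b ∧ (normOf F hPi).GoodAt b U := by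
  intro p U hU
  obtain ⟨z, hz, href⟩ := hPi.2 p U hU
  refine ⟨(eF F hPi) z, ?_, goodAt_of_shoot F hPi ⟨p, mem_of_mem_nhds hU⟩ z href⟩
  show p ∈ F.leaf ((eF F hPi).symm ((eF F hPi) z))
  rw [(eF F hPi).symm_apply_apply]
  exact hz

/-- unbounded rises, valid for any π-tree -/
lemma norm_unb {N : Norm X} (hg : ∀ p U, U ∈ nhds p → ∃ b, p ∈ N.L b ∧ N.GoodAt b U) :
    ∀ y (V : Set X), V ∈ nhds y → ∀ M, ∃ b, y ∈ N.L b ∧ M ≤ b.length ∧ N.GoodAt b V := by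
  intro y V hV M
  have hy0 : y ∈ N.L [] := by rw [N.root]; trivial
  obtain ⟨a, _, hal, hya⟩ := N.point_ext hy0 (M + 1)
  simp only [List.length_nil, Nat.zero_add] at hal
  have hVa : V ∩ N.L a ∈ nhds y := Filter.inter_mem hV ((N.opn a).mem_nhds hya)
  obtain ⟨b, hyb, hgood⟩ := hg y _ hVa
  refine ⟨b, hyb, ?_, Norm.GoodAt.mono N Set.inter_subset_left hgood⟩
  obtain ⟨β, hβ⟩ := hgood.bound
  have hsub : N.L (b ++ [β]) ⊆ N.L a := (hβ β le_rfl).trans Set.inter_subset_right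
  obtain ⟨x, hx⟩ := N.nonemp (b ++ [β])
  rcases N.comparable (hsub hx) hx with h | h
  · have := h.length_le; simp at this; omega
  · by_cases heq : b ++ [β] = a
    · have := congrArg List.length heq; simp at this; omega
    · exact absurd hsub (N.not_sub_of_seqLT ⟨h, heq⟩)

/-- cofinite rises transfer to the normalized tree -/
lemma normOf_cof (hc : PiRefines (cofin Set.univ) F.Rise) :
    ∀ p U, U ∈ nhds p → ∃ Cf : Set ℕ, Cf.Finite ∧
      ∀ b, p ∈ (normOf F hPi).L b → b.length ∉ Cf → (normOf F hPi).GoodAt b U := by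
  intro p U hU
  set e := eF F hPi with he
  have hne : (F.rise p U).Nonempty := by
    obtain ⟨z, hz, href⟩ := hPi.2 p U hU
    exact ⟨(e z).length, z, hz, href, height_eq F e z⟩
  obtain ⟨G, hG, hGne, hGsub⟩ := hc _ ⟨p, U, hU, rfl⟩ hne
  obtain ⟨Cf, hCfin, _, rfl⟩ := hG
  refine ⟨Cf, hCfin, ?_⟩
  intro b hpb hbl
  have hmem : b.length ∈ F.rise p U := hGsub ⟨trivial, hbl⟩
  obtain ⟨v, hv, href, hht⟩ := hmem
  have hlen : (e v).length = b.length := by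
    have h2 := (height_eq F e v).symm.trans hht
    exact_mod_cast h2
  have hpev : p ∈ (normOf F hPi).L (e v) := by
    show p ∈ F.leaf (e.symm (e v))
    rw [e.symm_apply_apply]
    exact hv
  have heb : e v = b := (normOf F hPi).uniq_len hpev hpb hlen
  rw [← heb]
  exact goodAt_of_shoot F hPi ⟨p, mem_of_mem_nhds hU⟩ v href

end Extract2

end PTAux

namespace PTAux

section Product

variable {Λ : Type} {Y : Type u} {X : Λ → Type u}

/-- the factor spaces, indexed by `Option Λ` (with `none` for `Y`) -/
def ZXf (Y : Type u) (X : Λ → Type u) : Option Λ → Type u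
  | none => Y
  | some l => X l

variable [TopologicalSpace Y] [∀ l, TopologicalSpace (X l)]

instance ZXtop : ∀ i, TopologicalSpace (ZXf Y X i)
  | none => inferInstanceAs (TopologicalSpace Y)
  | some l => inferInstanceAs (TopologicalSpace (X l))

variable (NY : Norm Y) (NX : ∀ l, Norm (X l))

/-- normalized trees on the factors -/
def NNf : ∀ i, Norm (ZXf Y X i)
  | none => NY
  | some l => NX l

/-- coordinates of a point of the product -/
def zpf (z : Y × ∀ l, X l) : ∀ i, ZXf Y X i
  | none => z.1
  | some l => z.2 l

variable (f : ℕ → Λ) (hf : Function.Surjective f)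

/-- canonical index of `l` -/
def pre (l : Λ) : ℕ := Nat.find (hf l)

lemma f_pre (l : Λ) : f (pre f hf l) = l := Nat.find_spec (hf l)

lemma pre_f_le (r : ℕ) : pre f hf (f r) ≤ r := Nat.find_le rfl

lemma pre_inj : Function.Injective (pre f hf) := by
  intro l l' h
  have h1 := f_pre f hf l
  have h2 := f_pre f hf l'
  rw [← h1, ← h2, h]

/-- rank of a coordinate -/
def rk : Option Λ → ℕ
  | none => 0
  | some l => pre f hf l + 1

lemma rk_inj : Function.Injective (rk f hf) := by
  intro i j h
  match i, j with
  | none, none => rfl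
  | none, some l => simp [rk] at h
  | some l, none => simp [rk] at h
  | some l, some l' =>
    simp only [rk, Nat.add_right_cancel_iff] at h
    rw [pre_inj f hf h]

/-- inverse of the rank function -/
def rkinv : ℕ → Option (Option Λ)
  | 0 => some none
  | (r+1) => if pre f hf (f r) = r then some (some (f r)) else none

lemma rkinv_rk (i : Option Λ) : rkinv f hf (rk f hf i) = some i := by
  match i with
  | none => rfl
  | some l =>
    show rkinv f hf (pre f hf l + 1) = some (some l)
    rw [rkinv]
    have h1 : f (pre f hf l) = l := f_pre f hf l
    have h2 : pre f hf (f (pre f hf l)) = pre f hf l := by rw [h1]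
    rw [if_pos h2, h1]

lemma rk_of_rkinv {r : ℕ} {i : Option Λ} (h : rkinv f hf r = some i) :
    rk f hf i = r := by
  match r with
  | 0 => simp [rkinv] at h; rw [← h]; rfl
  | r + 1 =>
    rw [rkinv] at h
    by_cases hc : pre f hf (f r) = r
    · rw [if_pos hc] at h
      have : i = some (f r) := by simpa using h.symm
      rw [this]
      show pre f hf (f r) + 1 = r + 1
      omega
    · rw [if_neg hc] at h; simp at h

/-- list of active coordinates below stage `c`, in order of rank -/
def DD : ℕ → List (Option Λ)
  | 0 => []
  | (c+1) => DD c ++ (rkinv f hf c).toList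

lemma mem_DD {i : Option Λ} {c : ℕ} : i ∈ DD f hf c ↔ rk f hf i < c := by
  induction c with
  | zero => simp [DD]
  | succ c ih =>
    rw [DD, List.mem_append]
    constructor
    · rintro (h | h)
      · have := ih.1 h; omega
      · rcases Option.mem_toList.1 h with h2
        have := rk_of_rkinv f hf h2
        omega
    · intro h
      rcases Nat.lt_or_ge (rk f hf i) c with h2 | h2
      · exact Or.inl (ih.2 h2)
      · have : rk f hf i = c := by omega
        right
        rw [Option.mem_toList, ← this]
        exact rkinv_rk f hf i
  
lemma DD_pairwise (c : ℕ) : (DD f hf c).Pairwise (fun i j => rk f hf i < rk f hf j) := by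
  induction c with
  | zero => simp [DD]
  | succ c ih =>
    rw [DD, List.pairwise_append]
    refine ⟨ih, ?_, ?_⟩
    · match h : rkinv f hf c with
      | Option.none => simp
      | Option.some i => simp
    · intro i hi j hj
      have h1 := (mem_DD f hf).1 hi
      have h2 := rk_of_rkinv f hf (Option.mem_toList.1 hj)
      omega

lemma DD_nodup (c : ℕ) : (DD f hf c).Nodup :=
  (DD_pairwise f hf c).imp (fun h => fun he => by rw [he] at h; exact lt_irrefl _ h)

lemma DD_prefix {c c' : ℕ} (h : c ≤ c') : DD f hf c <+: DD f hf c' := by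
  induction c' with
  | zero => 
    have : c = 0 := by omega
    subst this; exact List.prefix_refl _
  | succ c' ih =>
    rcases Nat.lt_or_ge c (c' + 1) with h2 | h2
    · exact (ih (by omega)).trans ⟨_, rfl⟩
    · have : c = c' + 1 := by omega
      subst this; exact List.prefix_refl _

lemma DD_head {c : ℕ} (hc : 1 ≤ c) : ∃ t, DD f hf c = none :: t := by
  have h1 : DD f hf 1 = [none] := rfl
  obtain ⟨t, ht⟩ := DD_prefix f hf hc
  rw [h1] at ht
  exact ⟨t, ht.symm⟩

lemma DD_len1 {c : ℕ} (hc : 1 ≤ c) : 1 ≤ (DD f hf c).length := by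
  obtain ⟨t, ht⟩ := DD_head f hf hc
  rw [ht]; simp

lemma DD_two {c : ℕ} (hc : 2 ≤ c) : 2 ≤ (DD f hf c).length := by
  have h2 : DD f hf 2 = [none, some (f 0)] := by
    show (([] ++ (rkinv f hf 0).toList) ++ (rkinv f hf 1).toList) = _
    have : rkinv f hf 1 = some (some (f 0)) := by
      rw [rkinv]
      rw [if_pos (Nat.le_zero.1 (pre_f_le f hf 0))]
    rw [this]; rfl
  have := (DD_prefix f hf hc).length_le
  rw [h2] at this
  simpa using this

lemma DD_getD_zero {c : ℕ} (hc : 1 ≤ c) : (DD f hf c).getD 0 none = none := by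
  obtain ⟨t, ht⟩ := DD_head f hf hc
  rw [ht]; rfl

lemma DD_getD_mem {c m : ℕ} (h : m < (DD f hf c).length) :
    (DD f hf c).getD m none ∈ DD f hf c := by
  rw [List.getD_eq_getElem _ _ h]
  exact List.getElem_mem _

lemma DD_getD_lt {c m1 m2 : ℕ} (h12 : m1 < m2) (h : m2 < (DD f hf c).length) :
    rk f hf ((DD f hf c).getD m1 none) < rk f hf ((DD f hf c).getD m2 none) := by
  rw [List.getD_eq_getElem _ _ (lt_trans h12 h), List.getD_eq_getElem _ _ h]
  exact (List.pairwise_iff_getElem.1 (DD_pairwise f hf c)) m1 m2 _ _ h12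

lemma DD_getD_ne_none {c m : ℕ} (hm : 1 ≤ m) (h : m < (DD f hf c).length) :
    (DD f hf c).getD m none ≠ none := by
  have hc : 1 ≤ c := by
    by_contra hc
    have : c = 0 := by omega
    subst this
    simp [DD] at h
  have h0 := DD_getD_lt f hf (show 0 < m by omega) h
  rw [DD_getD_zero f hf hc] at h0
  intro hc2
  rw [hc2] at h0
  exact lt_irrefl _ h0

/-- machine state -/
structure MS (Λ : Type) : Type where
  c : ℕ
  q : ℕ
  adv : Bool
  pos : Option Λ → List ℕ × ℕ

/-- resolution move -/
def resolvePos (i0 : Option Λ) (k : ℕ) (pos : Option Λ → List ℕ × ℕ) :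
    Option Λ → List ℕ × ℕ :=
  fun i => if i = i0 then ((pos i).1 ++ [(pos i).2 + k], 0) else pos i

/-- triangular move -/
def triPos (c : ℕ) (istar : Option Λ) (κ : ℕ) (pos : Option Λ → List ℕ × ℕ) :
    Option Λ → List ℕ × ℕ :=
  fun i => if rk f hf i < c then
      (if i = istar then ((pos i).1 ++ [(pos i).2 + κ], 0)
       else if rk f hf i < rk f hf istar then ((pos i).1, (pos i).2 + κ + 1)
       else ((pos i).1, (pos i).2 + κ))
    else pos i

/-- one step of the machine -/
def step (σ : MS Λ) (k : ℕ) : MS Λ :=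
  let D := DD f hf σ.c
  let n := D.length
  if σ.q = 0 then
    { c := σ.c, q := 1, adv := decide (k % n = 0),
      pos := triPos f hf σ.c (D.getD (k % n) none) (k / n) σ.pos }
  else if σ.q < n then
    { c := σ.c, q := σ.q + 1, adv := σ.adv, pos := resolvePos (D.getD σ.q none) k σ.pos }
  else
    { c := σ.c + 1, q := 0, adv := false,
      pos := resolvePos (if σ.adv then D.getD (n - 1) none else none) k σ.pos }

def initMS : MS Λ := ⟨1, 0, false, fun _ => ([], 0)⟩

def mstate (a : List ℕ) : MS Λ := a.foldl (step f hf) initMS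

lemma mstate_concat (a : List ℕ) (k : ℕ) :
    mstate f hf (a ++ [k]) = step f hf (mstate f hf a) k :=
  List.foldl_concat _ _ _ _

/-- current trace of coordinate `i` -/
def AAf (i : Option Λ) (s : List ℕ × ℕ) : Set (ZXf Y X i) :=
  ⋃ k, (NNf NY NX i).L (s.1 ++ [s.2 + k])

/-- the leaf attached to a machine state -/
def leafOf (σ : MS Λ) : Set (Y × ∀ l, X l) :=
  {z | ∀ i, zpf z i ∈ AAf NY NX i (σ.pos i)}

lemma AAf_zero (i : Option Λ) (v : List ℕ) :
    AAf NY NX i (v, 0) = (NNf NY NX i).L v := by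
  rw [(NNf NY NX i).cover v]
  simp [AAf]

lemma AAf_sub_L (i : Option Λ) (s : List ℕ × ℕ) :
    AAf NY NX i s ⊆ (NNf NY NX i).L s.1 := by
  refine Set.iUnion_subset fun k => ?_
  exact (NNf NY NX i).son_sub s.1 (s.2 + k)

lemma L_sub_AAf {i : Option Λ} {v : List ℕ} {m j : ℕ} (h : m ≤ j) :
    (NNf NY NX i).L (v ++ [j]) ⊆ AAf NY NX i (v, m) := by
  intro x hx
  exact Set.mem_iUnion.2 ⟨j - m, by rw [show m + (j - m) = j by omega]; exact hx⟩

lemma AAf_anti {i : Option Λ} {v : List ℕ} {m m' : ℕ} (h : m ≤ m') :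
    AAf NY NX i (v, m') ⊆ AAf NY NX i (v, m) := by
  refine Set.iUnion_subset fun k => ?_
  exact L_sub_AAf NY NX (by omega : m ≤ m' + k)

lemma AAf_nonemp (i : Option Λ) (s : List ℕ × ℕ) : (AAf NY NX i s).Nonempty := by
  obtain ⟨x, hx⟩ := (NNf NY NX i).nonemp (s.1 ++ [s.2])
  exact ⟨x, Set.mem_iUnion.2 ⟨0, by simpa using hx⟩⟩

/-- index of the son of `s` whose leaf contains `x` -/
def kvf (i : Option Λ) (x : ZXf Y X i) (s : List ℕ × ℕ) : ℕ :=
  sInf {κ | x ∈ (NNf NY NX i).L (s.1 ++ [s.2 + κ])}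

lemma kvf_spec {i : Option Λ} {x : ZXf Y X i} {s : List ℕ × ℕ}
    (h : x ∈ AAf NY NX i s) :
    x ∈ (NNf NY NX i).L (s.1 ++ [s.2 + kvf NY NX i x s]) := by
  have hne : {κ | x ∈ (NNf NY NX i).L (s.1 ++ [s.2 + κ])}.Nonempty := by
    rw [AAf, Set.mem_iUnion] at h
    exact h
  exact Nat.sInf_mem hne

lemma kvf_uniq {i : Option Λ} {x : ZXf Y X i} {s : List ℕ × ℕ} {κ : ℕ}
    (h : x ∈ (NNf NY NX i).L (s.1 ++ [s.2 + κ])) : κ = kvf NY NX i x s := by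
  have h2 := kvf_spec NY NX (Set.mem_iUnion.2 ⟨κ, h⟩)
  by_contra hne
  have : s.2 + κ ≠ s.2 + kvf NY NX i x s := by omega
  exact Set.disjoint_left.1 ((NNf NY NX i).disj s.1 this) h h2

end Product

end PTAux

namespace PTAux

section Product2

variable {Λ : Type} {Y : Type u} {X : Λ → Type u}
variable [TopologicalSpace Y] [∀ l, TopologicalSpace (X l)]
variable (NY : Norm Y) (NX : ∀ l, Norm (X l))
variable (f : ℕ → Λ) (hf : Function.Surjective f)

/-! #### step rewriting -/

lemma step_tri {σ : MS Λ} (h : σ.q = 0) (k : ℕ) :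
    step f hf σ k = MS.mk σ.c 1 (decide (k % (DD f hf σ.c).length = 0))
      (triPos f hf σ.c ((DD f hf σ.c).getD (k % (DD f hf σ.c).length) none)
        (k / (DD f hf σ.c).length) σ.pos) := by
  simp only [step]
  rw [if_pos h]

lemma step_res {σ : MS Λ} (h0 : ¬ σ.q = 0) (h1 : σ.q < (DD f hf σ.c).length) (k : ℕ) :
    step f hf σ k = MS.mk σ.c (σ.q + 1) σ.adv
      (resolvePos ((DD f hf σ.c).getD σ.q none) k σ.pos) := by
  simp only [step]
  rw [if_neg h0, if_pos h1]

lemma step_fin {σ : MS Λ} (h0 : ¬ σ.q = 0) (h1 : ¬ σ.q < (DD f hf σ.c).length) (k : ℕ) :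
    step f hf σ k = MS.mk (σ.c + 1) 0 false
      (resolvePos (if σ.adv then (DD f hf σ.c).getD ((DD f hf σ.c).length - 1) none
        else none) k σ.pos) := by
  simp only [step]
  rw [if_neg h0, if_neg h1]

lemma resolvePos_eq_target {i0 : Option Λ} (k : ℕ) (pos : Option Λ → List ℕ × ℕ)
    {i : Option Λ} (h : i = i0) :
    resolvePos i0 k pos i = ((pos i).1 ++ [(pos i).2 + k], 0) := by
  simp [resolvePos, h]

lemma resolvePos_eq_other {i0 : Option Λ} (k : ℕ) (pos : Option Λ → List ℕ × ℕ)
    {i : Option Λ} (h : ¬ i = i0) :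
    resolvePos i0 k pos i = pos i := by
  simp [resolvePos, h]

lemma triPos_eq_single {c : ℕ} {istar : Option Λ} (κ : ℕ) (pos : Option Λ → List ℕ × ℕ)
    {i : Option Λ} (h1 : rk f hf i < c) (h2 : i = istar) :
    triPos f hf c istar κ pos i = ((pos i).1 ++ [(pos i).2 + κ], 0) := by
  subst h2
  simp [triPos, h1]

lemma triPos_eq_before {c : ℕ} {istar : Option Λ} (κ : ℕ) (pos : Option Λ → List ℕ × ℕ)
    {i : Option Λ} (h1 : rk f hf i < c) (h2 : ¬ i = istar) (h3 : rk f hf i < rk f hf istar) :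
    triPos f hf c istar κ pos i = ((pos i).1, (pos i).2 + κ + 1) := by
  simp [triPos, h1, h2, h3]

lemma triPos_eq_after {c : ℕ} {istar : Option Λ} (κ : ℕ) (pos : Option Λ → List ℕ × ℕ)
    {i : Option Λ} (h1 : rk f hf i < c) (h2 : ¬ i = istar) (h3 : ¬ rk f hf i < rk f hf istar) :
    triPos f hf c istar κ pos i = ((pos i).1, (pos i).2 + κ) := by
  simp [triPos, h1, h2, h3]

lemma triPos_eq_out {c : ℕ} {istar : Option Λ} (κ : ℕ) (pos : Option Λ → List ℕ × ℕ)
    {i : Option Λ} (h1 : ¬ rk f hf i < c) :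
    triPos f hf c istar κ pos i = pos i := by
  simp [triPos, h1]

/-! #### per-step monotonicity -/

lemma AAf_pos_step_sub (σ : MS Λ) (k : ℕ) (i : Option Λ) :
    AAf NY NX i ((step f hf σ k).pos i) ⊆ AAf NY NX i (σ.pos i) := by
  have key : ∀ (p : List ℕ × ℕ) (j : ℕ),
      AAf NY NX i (p.1 ++ [p.2 + j], 0) ⊆ AAf NY NX i p := by
    intro p j
    rw [AAf_zero]
    exact L_sub_AAf NY NX (by omega)
  have keyr : ∀ (i0 : Option Λ) (kk : ℕ) (pos : Option Λ → List ℕ × ℕ),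
      AAf NY NX i (resolvePos i0 kk pos i) ⊆ AAf NY NX i (pos i) := by
    intro i0 kk pos
    by_cases h : i = i0
    · rw [resolvePos_eq_target kk pos h]; exact key _ _
    · rw [resolvePos_eq_other kk pos h]
  have keyt : ∀ (c : ℕ) (istar : Option Λ) (κ : ℕ) (pos : Option Λ → List ℕ × ℕ),
      AAf NY NX i (triPos f hf c istar κ pos i) ⊆ AAf NY NX i (pos i) := by
    intro c istar κ pos
    by_cases h1 : rk f hf i < c
    · by_cases h2 : i = istar
      · rw [triPos_eq_single f hf κ pos h1 h2]; exact key _ _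
      · by_cases h3 : rk f hf i < rk f hf istar
        · rw [triPos_eq_before f hf κ pos h1 h2 h3]
          exact AAf_anti NY NX (by omega)
        · rw [triPos_eq_after f hf κ pos h1 h2 h3]
          exact AAf_anti NY NX (by omega)
    · rw [triPos_eq_out f hf κ pos h1]
  by_cases h0 : σ.q = 0
  · rw [step_tri f hf h0]; exact keyt _ _ _ _
  · by_cases h1 : σ.q < (DD f hf σ.c).length
    · rw [step_res f hf h0 h1]; exact keyr _ _ _
    · rw [step_fin f hf h0 h1]; exact keyr _ _ _

lemma leafOf_step_sub (σ : MS Λ) (k : ℕ) :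
    leafOf NY NX (step f hf σ k) ⊆ leafOf NY NX σ :=
  fun z hz i => AAf_pos_step_sub NY NX f hf σ k i (hz i)

/-! #### invariants -/

structure Inv (σ : MS Λ) : Prop where
  hc : 1 ≤ σ.c
  hq : σ.q ≤ (DD f hf σ.c).length
  hout : ∀ i, ¬ rk f hf i < σ.c → σ.pos i = ([], 0)

lemma inv_init : Inv f hf (initMS : MS Λ) :=
  ⟨le_refl 1, by simp [initMS], fun i _ => rfl⟩

lemma inv_step {σ : MS Λ} (h : Inv f hf σ) (k : ℕ) : Inv f hf (step f hf σ k) := by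
  by_cases h0 : σ.q = 0
  · rw [step_tri f hf h0]
    refine ⟨h.hc, ?_, ?_⟩
    · exact DD_len1 f hf h.hc
    · intro i hi
      dsimp only at hi ⊢
      rw [triPos_eq_out f hf _ _ hi]
      exact h.hout i hi
  · by_cases h1 : σ.q < (DD f hf σ.c).length
    · rw [step_res f hf h0 h1]
      refine ⟨h.hc, ?_, ?_⟩
      · dsimp only; omega
      · intro i hi
        dsimp only at hi ⊢
        rw [resolvePos_eq_other _ _ ?_]
        · exact h.hout i hi
        · intro he
          apply hi
          rw [he]
          exact (mem_DD f hf).1 (DD_getD_mem f hf h1)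
    · rw [step_fin f hf h0 h1]
      have hc := h.hc
      refine ⟨by dsimp only; omega, by dsimp only; omega, ?_⟩
      intro i hi
      dsimp only at hi ⊢
      have hi' : ¬ rk f hf i < σ.c := by omega
      rw [resolvePos_eq_other _ _ ?_]
      · exact h.hout i hi'
      · intro he
        apply hi'
        rw [he]
        split
        · refine (mem_DD f hf).1 (DD_getD_mem f hf ?_)
          have := DD_len1 f hf h.hc
          omega
        · show rk f hf none < σ.c
          exact h.hc

lemma inv_mstate (a : List ℕ) : Inv f hf (mstate f hf a : MS Λ) := by
  induction a using List.reverseRecOn with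
  | nil => exact inv_init f hf
  | append_singleton a k ih =>
    rw [mstate_concat]
    exact inv_step f hf ih k

/-! #### the partition property of a step -/

lemma step_exists {σ : MS Λ} (hinv : Inv f hf σ) {z : Y × ∀ l, X l}
    (hz : z ∈ leafOf NY NX σ) : ∃ k, z ∈ leafOf NY NX (step f hf σ k) := by
  by_cases h0 : σ.q = 0
  · -- triangular step
    set n := (DD f hf σ.c).length with hn
    have hn1 : 1 ≤ n := DD_len1 f hf hinv.hc
    set KV : Option Λ → ℕ := fun i => kvf NY NX i (zpf z i) (σ.pos i) with hKV
    have hP : ∃ t, ∃ m, m < n ∧ KV ((DD f hf σ.c).getD m none) = t :=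
      ⟨_, 0, by omega, rfl⟩
    set μ := Nat.find hP with hμ
    have hP' : ∃ m, m < n ∧ KV ((DD f hf σ.c).getD m none) = μ := Nat.find_spec hP
    set ms := Nat.find hP' with hms
    obtain ⟨hmlt, hKVi⟩ : ms < n ∧ KV ((DD f hf σ.c).getD ms none) = μ := Nat.find_spec hP'
    set istar := (DD f hf σ.c).getD ms none with histar
    have hmin : ∀ i, rk f hf i < σ.c → μ ≤ KV i := by
      intro i hi
      obtain ⟨m, hm, hgm⟩ := List.getElem_of_mem ((mem_DD f hf).2 hi)
      have : KV i = KV ((DD f hf σ.c).getD m none) := by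
        rw [List.getD_eq_getElem _ _ hm, hgm]
      rw [this]
      exact Nat.find_le ⟨m, hm, rfl⟩
    have hfirst : ∀ m, m < ms → KV ((DD f hf σ.c).getD m none) ≠ μ := by
      intro m hm hKVm
      exact Nat.find_min hP' hm ⟨by omega, hKVm⟩
    refine ⟨ms + μ * n, ?_⟩
    rw [step_tri f hf h0]
    have hdec1 : (ms + μ * n) % n = ms := by
      rw [Nat.add_mul_mod_self_right, Nat.mod_eq_of_lt hmlt]
    have hdec2 : (ms + μ * n) / n = μ := by
      rw [Nat.add_mul_div_right _ _ (by omega : 0 < n), Nat.div_eq_of_lt hmlt]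
      omega
    intro i
    show zpf z i ∈ AAf NY NX i
      (triPos f hf σ.c ((DD f hf σ.c).getD ((ms + μ * n) % n) none) ((ms + μ * n) / n) σ.pos i)
    rw [hdec1, hdec2, ← histar]
    by_cases hin : rk f hf i < σ.c
    · have hrki : rk f hf istar < σ.c :=
        (mem_DD f hf).1 (DD_getD_mem f hf (by omega))
      by_cases heq : i = istar
      · rw [triPos_eq_single f hf _ _ hin heq]
        rw [AAf_zero]
        have hsp : zpf z i ∈ (NNf NY NX i).L ((σ.pos i).1 ++ [(σ.pos i).2 + KV i]) :=
          kvf_spec NY NX (hz i)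
        have h2 : KV i = μ := by rw [heq]; exact hKVi
        rwa [h2] at hsp
      · by_cases hrk : rk f hf i < rk f hf istar
        · rw [triPos_eq_before f hf _ _ hin heq hrk]
          -- KV i ≥ μ + 1
          have hge : μ + 1 ≤ KV i := by
            rcases Nat.lt_or_ge μ (KV i) with h | h
            · omega
            · exfalso
              have heqμ : KV i = μ := le_antisymm h (hmin i hin)
              obtain ⟨m, hm, hgm⟩ := List.getElem_of_mem ((mem_DD f hf).2 hin)
              have hgd : (DD f hf σ.c).getD m none = i := by
                rw [List.getD_eq_getElem _ _ hm, hgm]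
              have hmms : m < ms := by
                rcases Nat.lt_trichotomy m ms with h2 | h2 | h2
                · exact h2
                · exfalso; apply heq; rw [← hgd, h2]
                · exfalso
                  have h3 := DD_getD_lt f hf h2 hm
                  rw [hgd, ← histar] at h3
                  omega
              exact hfirst m hmms (by rw [hgd]; exact heqμ)
          have hsp : zpf z i ∈ (NNf NY NX i).L ((σ.pos i).1 ++ [(σ.pos i).2 + KV i]) :=
            kvf_spec NY NX (hz i)
          refine Set.mem_iUnion.2 ⟨KV i - (μ + 1), ?_⟩
          show zpf z i ∈ (NNf NY NX i).L ((σ.pos i).1 ++ [(σ.pos i).2 + μ + 1 + (KV i - (μ+1))])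
          have harith : (σ.pos i).2 + μ + 1 + (KV i - (μ+1)) = (σ.pos i).2 + KV i := by omega
          rw [harith]
          exact hsp
        · rw [triPos_eq_after f hf _ _ hin heq hrk]
          have hge : μ ≤ KV i := hmin i hin
          have hsp : zpf z i ∈ (NNf NY NX i).L ((σ.pos i).1 ++ [(σ.pos i).2 + KV i]) :=
            kvf_spec NY NX (hz i)
          refine Set.mem_iUnion.2 ⟨KV i - μ, ?_⟩
          show zpf z i ∈ (NNf NY NX i).L ((σ.pos i).1 ++ [(σ.pos i).2 + μ + (KV i - μ)])
          have harith : (σ.pos i).2 + μ + (KV i - μ) = (σ.pos i).2 + KV i := by omega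
          rw [harith]
          exact hsp
    · rw [triPos_eq_out f hf _ _ hin]
      exact hz i
  · -- resolution step
    have key : ∀ i0 : Option Λ, ∃ k, ∀ i,
        zpf z i ∈ AAf NY NX i (resolvePos i0 k σ.pos i) := by
      intro i0
      refine ⟨kvf NY NX i0 (zpf z i0) (σ.pos i0), fun i => ?_⟩
      by_cases h : i = i0
      · subst h
        rw [resolvePos_eq_target _ _ rfl, AAf_zero]
        exact kvf_spec NY NX (hz i)
      · rw [resolvePos_eq_other _ _ h]
        exact hz i
    by_cases h1 : σ.q < (DD f hf σ.c).length
    · obtain ⟨k, hk⟩ := key ((DD f hf σ.c).getD σ.q none)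
      refine ⟨k, ?_⟩
      rw [step_res f hf h0 h1]
      exact hk
    · obtain ⟨k, hk⟩ := key (if σ.adv then (DD f hf σ.c).getD ((DD f hf σ.c).length - 1) none else none)
      refine ⟨k, ?_⟩
      rw [step_fin f hf h0 h1]
      exact hk

lemma step_disj {σ : MS Λ} (hinv : Inv f hf σ) {k k' : ℕ} (hkk : k ≠ k') :
    Disjoint (leafOf NY NX (step f hf σ k)) (leafOf NY NX (step f hf σ k')) := by
  rw [Set.disjoint_left]
  intro z hz1 hz2
  have hz : z ∈ leafOf NY NX σ := leafOf_step_sub NY NX f hf σ k hz1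
  set KV : Option Λ → ℕ := fun i => kvf NY NX i (zpf z i) (σ.pos i) with hKV
  -- helper for resolution steps
  have keyres : ∀ i0 : Option Λ,
      (∀ i, zpf z i ∈ AAf NY NX i (resolvePos i0 k σ.pos i)) →
      (∀ i, zpf z i ∈ AAf NY NX i (resolvePos i0 k' σ.pos i)) → False := by
    intro i0 m1 m2
    have e1 := m1 i0; have e2 := m2 i0
    rw [resolvePos_eq_target _ _ rfl, AAf_zero] at e1 e2
    have u1 := kvf_uniq NY NX e1
    have u2 := kvf_uniq NY NX e2
    exact hkk (u1.trans u2.symm)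
  by_cases h0 : σ.q = 0
  · -- triangular
    set n := (DD f hf σ.c).length with hn
    have hn1 : 1 ≤ n := DD_len1 f hf hinv.hc
    rw [step_tri f hf h0] at hz1 hz2
    set m1 := k % n with hm1
    set μ1 := k / n with hμ1
    set m2 := k' % n with hm2
    set μ2 := k' / n with hμ2
    set i1 := (DD f hf σ.c).getD m1 none with hi1
    set i2 := (DD f hf σ.c).getD m2 none with hi2
    have hm1n : m1 < n := Nat.mod_lt _ (by omega)
    have hm2n : m2 < n := Nat.mod_lt _ (by omega)
    have hr1 : rk f hf i1 < σ.c := (mem_DD f hf).1 (DD_getD_mem f hf hm1n)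
    have hr2 : rk f hf i2 < σ.c := (mem_DD f hf).1 (DD_getD_mem f hf hm2n)
    have e1 := hz1 i1
    dsimp only at e1
    rw [show (triPos f hf σ.c i1 μ1 σ.pos i1) = ((σ.pos i1).1 ++ [(σ.pos i1).2 + μ1], 0)
      from triPos_eq_single f hf _ _ hr1 rfl, AAf_zero] at e1
    have e2 := hz2 i2
    dsimp only at e2
    rw [show (triPos f hf σ.c i2 μ2 σ.pos i2) = ((σ.pos i2).1 ++ [(σ.pos i2).2 + μ2], 0)
      from triPos_eq_single f hf _ _ hr2 rfl, AAf_zero] at e2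
    have u1 : μ1 = KV i1 := kvf_uniq NY NX e1
    have u2 : μ2 = KV i2 := kvf_uniq NY NX e2
    -- main helper: if ma < mb then contradiction
    have main : ∀ (ma mb μa μb : ℕ), ma < n → mb < n → ma < mb →
        μa = KV ((DD f hf σ.c).getD ma none) →
        μb = KV ((DD f hf σ.c).getD mb none) →
        (∀ i, zpf z i ∈ AAf NY NX i
          (triPos f hf σ.c ((DD f hf σ.c).getD ma none) μa σ.pos i)) →
        (∀ i, zpf z i ∈ AAf NY NX i
          (triPos f hf σ.c ((DD f hf σ.c).getD mb none) μb σ.pos i)) → False := by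
      intro ma mb μa μb hma hmb hab hua hub mza mzb
      set ia := (DD f hf σ.c).getD ma none
      set ib := (DD f hf σ.c).getD mb none
      have hrab : rk f hf ia < rk f hf ib := DD_getD_lt f hf hab hmb
      have hne : ia ≠ ib := fun h => by rw [h] at hrab; exact lt_irrefl _ hrab
      have hra : rk f hf ia < σ.c := (mem_DD f hf).1 (DD_getD_mem f hf hma)
      have hrb : rk f hf ib < σ.c := (mem_DD f hf).1 (DD_getD_mem f hf hmb)
      -- z in piece b, coordinate ia: before-case
      have eb := mzb ia
      rw [triPos_eq_before f hf _ _ hra hne hrab] at eb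
      obtain ⟨j, hj⟩ := Set.mem_iUnion.1 eb
      have : (σ.pos ia).2 + μb + 1 + j = (σ.pos ia).2 + (μb + 1 + j) := by omega
      rw [this] at hj
      have ha2 : μb + 1 + j = KV ia := kvf_uniq NY NX hj
      -- z in piece a, coordinate ib: after-case
      have ea := mza ib
      rw [triPos_eq_after f hf _ _ hrb (fun h => hne h.symm)
        (by omega : ¬ rk f hf ib < rk f hf ia)] at ea
      obtain ⟨j', hj'⟩ := Set.mem_iUnion.1 ea
      have : (σ.pos ib).2 + μa + j' = (σ.pos ib).2 + (μa + j') := by omega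
      rw [this] at hj'
      have hb2 : μa + j' = KV ib := kvf_uniq NY NX hj'
      omega
    rcases Nat.lt_trichotomy m1 m2 with hc | hc | hc
    · exact main m1 m2 μ1 μ2 hm1n hm2n hc u1 u2 hz1 hz2
    · -- same position: same coordinate, so μ1 = μ2, so k = k'
      apply hkk
      have hii : i1 = i2 := by rw [hi1, hi2, hc]
      have hμ : μ1 = μ2 := by rw [u1, u2, hii]
      have hμ' : k / n = k' / n := hμ
      have hm' : k % n = k' % n := hc
      calc k = n * (k / n) + k % n := (Nat.div_add_mod k n).symm
        _ = n * (k' / n) + k' % n := by rw [hμ', hm']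
        _ = k' := Nat.div_add_mod k' n
    · exact main m2 m1 μ2 μ1 hm2n hm1n hc u2 u1 hz2 hz1
  · by_cases h1 : σ.q < (DD f hf σ.c).length
    · rw [step_res f hf h0 h1] at hz1 hz2
      exact keyres _ hz1 hz2
    · rw [step_fin f hf h0 h1] at hz1 hz2
      exact keyres _ hz1 hz2

end Product2

end PTAux

namespace PTAux

section Product3

variable {Λ : Type} {Y : Type u} {X : Λ → Type u}
variable [TopologicalSpace Y] [∀ l, TopologicalSpace (X l)]
variable (NY : Norm Y) (NX : ∀ l, Norm (X l))
variable (f : ℕ → Λ) (hf : Function.Surjective f)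

lemma DD_one : DD f hf 1 = [none] := rfl

lemma pos_fst_cases (σ : MS Λ) (k : ℕ) (i : Option Λ) :
    ((step f hf σ k).pos i).1 = (σ.pos i).1 ∨
      ∃ j, (step f hf σ k).pos i = ((σ.pos i).1 ++ [j], 0) := by
  have keyr : ∀ (i0 : Option Λ) (kk : ℕ) (pos : Option Λ → List ℕ × ℕ),
      (resolvePos i0 kk pos i).1 = (pos i).1 ∨
        ∃ j, resolvePos i0 kk pos i = ((pos i).1 ++ [j], 0) := by
    intro i0 kk pos
    by_cases h : i = i0
    · rw [resolvePos_eq_target kk pos h]; exact Or.inr ⟨_, rfl⟩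
    · rw [resolvePos_eq_other kk pos h]; exact Or.inl rfl
  have keyt : ∀ (c : ℕ) (istar : Option Λ) (κ : ℕ) (pos : Option Λ → List ℕ × ℕ),
      (triPos f hf c istar κ pos i).1 = (pos i).1 ∨
        ∃ j, triPos f hf c istar κ pos i = ((pos i).1 ++ [j], 0) := by
    intro c istar κ pos
    by_cases h1 : rk f hf i < c
    · by_cases h2 : i = istar
      · rw [triPos_eq_single f hf κ pos h1 h2]; exact Or.inr ⟨_, rfl⟩
      · by_cases h3 : rk f hf i < rk f hf istar
        · rw [triPos_eq_before f hf κ pos h1 h2 h3]; exact Or.inl rfl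
        · rw [triPos_eq_after f hf κ pos h1 h2 h3]; exact Or.inl rfl
    · rw [triPos_eq_out f hf κ pos h1]; exact Or.inl rfl
  by_cases h0 : σ.q = 0
  · rw [step_tri f hf h0]; exact keyt _ _ _ _
  · by_cases h1 : σ.q < (DD f hf σ.c).length
    · rw [step_res f hf h0 h1]; exact keyr _ _ _
    · rw [step_fin f hf h0 h1]; exact keyr _ _ _

lemma pos_fst_prefix (σ : MS Λ) (k : ℕ) (i : Option Λ) :
    (σ.pos i).1 <+: ((step f hf σ k).pos i).1 := by
  rcases pos_fst_cases f hf σ k i with h | ⟨j, h⟩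
  · rw [h]
  · rw [h]; exact ⟨[j], rfl⟩

section Path

variable (σp : ℕ → MS Λ)


lemma inv_path (hsp : ∀ t, ∃ k, σp (t + 1) = step f hf (σp t) k) (h0p : σp 0 = initMS) (t : ℕ) : Inv f hf (σp t) := by
  induction t with
  | zero => rw [h0p]; exact inv_init f hf
  | succ t ih =>
    obtain ⟨k, hk⟩ := hsp t
    rw [hk]; exact inv_step f hf ih k

lemma fst_prefix_path (hsp : ∀ t, ∃ k, σp (t + 1) = step f hf (σp t) k) {t t' : ℕ} (h : t ≤ t') (i : Option Λ) :
    ((σp t).pos i).1 <+: ((σp t').pos i).1 := by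
  induction t' with
  | zero =>
    have : t = 0 := by omega
    subst this; exact List.prefix_refl _
  | succ t' ih =>
    rcases Nat.lt_or_ge t (t' + 1) with h2 | h2
    · obtain ⟨k, hk⟩ := hsp t'
      refine (ih (by omega)).trans ?_
      rw [hk]
      exact pos_fst_prefix f hf _ k i
    · have : t = t' + 1 := by omega
      subst this; exact List.prefix_refl _

lemma phase_prog (hsp : ∀ t, ∃ k, σp (t + 1) = step f hf (σp t) k) (T : ℕ) (hq : (σp T).q = 0) :
    ∀ j, 1 ≤ j → j ≤ (DD f hf (σp T).c).length →
      (σp (T + j)).c = (σp T).c ∧ (σp (T + j)).q = j := by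
  intro j h1 h2
  induction j with
  | zero => omega
  | succ j ih =>
    rcases Nat.eq_or_lt_of_le h1 with h3 | h3
    · -- j + 1 = 1
      have hj : j = 0 := by omega
      subst hj
      obtain ⟨k, hk⟩ := hsp T
      rw [show T + 1 = T + 0 + 1 by omega, hk]
      rw [step_tri f hf hq]
      exact ⟨rfl, rfl⟩
    · have hj1 : 1 ≤ j := by omega
      obtain ⟨hc, hq'⟩ := ih hj1 (by omega)
      obtain ⟨k, hk⟩ := hsp (T + j)
      rw [show T + (j+1) = T + j + 1 by omega, hk]
      rw [step_res f hf (by omega) (by rw [hq', hc]; omega)]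
      constructor
      · show (σp (T+j)).c = (σp T).c
        exact hc
      · show (σp (T+j)).q + 1 = j + 1
        omega

lemma cycle_end (hsp : ∀ t, ∃ k, σp (t + 1) = step f hf (σp t) k) (T : ℕ) (hq : (σp T).q = 0) (hc1 : 1 ≤ (σp T).c) :
    (σp (T + (DD f hf (σp T).c).length + 1)).c = (σp T).c + 1 ∧
      (σp (T + (DD f hf (σp T).c).length + 1)).q = 0 := by
  set n := (DD f hf (σp T).c).length with hn
  have hn1 : 1 ≤ n := DD_len1 f hf hc1
  obtain ⟨hc, hq'⟩ := phase_prog f hf σp hsp T hq n hn1 le_rfl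
  obtain ⟨k, hk⟩ := hsp (T + n)
  rw [hk, step_fin f hf (by omega) (by rw [hq', hc, ← hn]; omega)]
  exact ⟨by rw [hc], rfl⟩

/-- start time of cycle `c` (uniform over all paths) -/
def tauT : ℕ → ℕ
  | 0 => 0
  | 1 => 0
  | (c+1) => tauT c + (DD f hf c).length + 1

lemma tau_spec (hsp : ∀ t, ∃ k, σp (t + 1) = step f hf (σp t) k) (h0p : σp 0 = initMS) : ∀ c, 1 ≤ c → (σp (tauT f hf c)).c = c ∧ (σp (tauT f hf c)).q = 0 := by
  intro c hc
  induction c with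
  | zero => omega
  | succ c ih =>
    rcases Nat.eq_or_lt_of_le hc with h | h
    · rw [show c + 1 = 1 by omega]
      show (σp (tauT f hf 1)).c = 1 ∧ (σp (tauT f hf 1)).q = 0
      rw [show tauT f hf 1 = 0 from rfl, h0p]
      exact ⟨rfl, rfl⟩
    · have hc1 : 1 ≤ c := by omega
      obtain ⟨ih1, ih2⟩ := ih hc1
      have he := cycle_end f hf σp hsp (tauT f hf c) ih2 (by omega)
      rw [ih1] at he
      have htt : tauT f hf (c + 1) = tauT f hf c + (DD f hf c).length + 1 := by
        match c, hc1 with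
        | (c'+1), _ => rfl
      rw [htt]
      exact ⟨he.1, he.2⟩

/-- length of the `Y`-coordinate position -/
def lenI (i : Option Λ) (σ : MS Λ) : ℕ := ((σ.pos i).1).length

lemma lenI_mono (hsp : ∀ t, ∃ k, σp (t + 1) = step f hf (σp t) k) {t t' : ℕ} (h : t ≤ t') (i : Option Λ) :
    lenI i (σp t) ≤ lenI i (σp t') :=
  (fst_prefix_path f hf σp hsp h i).length_le

lemma lenY_after_tri (hsp : ∀ t, ∃ k, σp (t + 1) = step f hf (σp t) k) (T : ℕ) (hq : (σp T).q = 0) (hc1 : 1 ≤ (σp T).c) :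
    ((σp (T+1)).adv = true ∧ lenI none (σp (T+1)) = lenI none (σp T) + 1) ∨
    ((σp (T+1)).adv = false ∧ ((σp (T+1)).pos none).1 = ((σp T).pos none).1 ∧
      2 ≤ (DD f hf (σp T).c).length) := by
  set n := (DD f hf (σp T).c).length with hn
  have hn1 : 1 ≤ n := DD_len1 f hf hc1
  obtain ⟨k, hk⟩ := hsp T
  rw [hk, step_tri f hf hq]
  by_cases h : k % n = 0
  · left
    constructor
    · simp [h, ← hn]
    · show ((triPos f hf (σp T).c ((DD f hf (σp T).c).getD (k % n) none) (k / n) (σp T).pos) none).1.length = _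
      rw [h, DD_getD_zero f hf hc1]
      rw [triPos_eq_single f hf _ _ (by exact hc1) rfl]
      simp [lenI]
  · right
    have hkn : k % n < n := Nat.mod_lt _ (by omega)
    have hne : (DD f hf (σp T).c).getD (k % n) none ≠ none :=
      DD_getD_ne_none f hf (by omega) (by rw [← hn]; omega)
    refine ⟨by simp [h, ← hn], ?_, ?_⟩
    · show ((triPos f hf (σp T).c ((DD f hf (σp T).c).getD (k % n) none) (k / n) (σp T).pos) none).1 = _
      have hrk : rk f hf (none : Option Λ) < rk f hf ((DD f hf (σp T).c).getD (k % n) none) := by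
        match hh : (DD f hf (σp T).c).getD (k % n) none with
        | Option.none => exact absurd hh hne
        | Option.some l =>
          show 0 < pre f hf l + 1
          omega
      rw [triPos_eq_before f hf _ _ (by exact hc1) (fun hcon => hne hcon.symm) hrk]
    · -- n ≥ 2 since k % n ≠ 0
      omega

lemma midphase (hsp : ∀ t, ∃ k, σp (t + 1) = step f hf (σp t) k) (T : ℕ) (hq : (σp T).q = 0) (hc1 : 1 ≤ (σp T).c) :
    ∀ j, 1 ≤ j → j ≤ (DD f hf (σp T).c).length →
      (σp (T + j)).pos none = (σp (T + 1)).pos none ∧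
        (σp (T + j)).adv = (σp (T + 1)).adv := by
  intro j h1 h2
  induction j with
  | zero => omega
  | succ j ih =>
    rcases Nat.eq_or_lt_of_le h1 with h3 | h3
    · have : j = 0 := by omega
      subst this
      exact ⟨rfl, rfl⟩
    · have hj1 : 1 ≤ j := by omega
      obtain ⟨ih1, ih2⟩ := ih hj1 (by omega)
      obtain ⟨hc, hq'⟩ := phase_prog f hf σp hsp T hq j hj1 (by omega)
      obtain ⟨k, hk⟩ := hsp (T + j)
      have hstep : σp (T + (j+1)) = step f hf (σp (T+j)) k := by
        rw [show T + (j+1) = T + j + 1 by omega, hk]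
      rw [hstep, step_res f hf (by omega) (by rw [hq', hc]; omega)]
      constructor
      · show resolvePos ((DD f hf (σp (T+j)).c).getD (σp (T+j)).q none) k ((σp (T+j)).pos) none = _
        rw [resolvePos_eq_other]
        · exact ih1
        · intro hcon
          refine DD_getD_ne_none f hf (c := (σp (T+j)).c) (m := (σp (T+j)).q) ?_ ?_ hcon.symm
          · rw [hq']; omega
          · rw [hq', hc]; omega
      · exact ih2

lemma lenY_cycle (hsp : ∀ t, ∃ k, σp (t + 1) = step f hf (σp t) k) (T : ℕ) (hq : (σp T).q = 0) (hc1 : 1 ≤ (σp T).c) :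
    lenI none (σp (T + (DD f hf (σp T).c).length + 1)) =
      lenI none (σp T) + (if (σp T).c = 1 then 2 else 1) := by
  set n := (DD f hf (σp T).c).length with hn
  have hn1 : 1 ≤ n := DD_len1 f hf hc1
  obtain ⟨hcn, hqn⟩ := phase_prog f hf σp hsp T hq n hn1 le_rfl
  obtain ⟨hpn, han⟩ := midphase f hf σp hsp T hq hc1 n hn1 le_rfl
  obtain ⟨k, hk⟩ := hsp (T + n)
  have hstep : σp (T + n + 1) = step f hf (σp (T + n)) k := hk
  rcases lenY_after_tri f hf σp hsp T hq hc1 with ⟨ha, hl⟩ | ⟨ha, hl, h2n⟩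
  · -- Y advanced at the triangular step
    by_cases hc : (σp T).c = 1
    · -- n = 1, final step also advances Y
      have hne1 : n = 1 := by rw [hn, hc, DD_one]; rfl
      rw [hstep, step_fin f hf (by omega) (by rw [hqn, hcn]; omega)]
      have hadv : (σp (T + n)).adv = true := by rw [han, ha]
      show (resolvePos _ k ((σp (T+n)).pos) none).1.length = _
      rw [hadv]
      have : (DD f hf (σp (T+n)).c).getD ((DD f hf (σp (T+n)).c).length - 1) none = none := by
        rw [hcn, hc]
        rw [show (DD f hf 1).length - 1 = 0 by rw [DD_one]; rfl]
        exact DD_getD_zero f hf (by omega)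
      rw [if_pos rfl, this, resolvePos_eq_target _ _ rfl]
      simp only [List.length_append, List.length_cons, List.length_nil]
      rw [if_pos hc]
      have : ((σp (T + n)).pos none).1.length = lenI none (σp (T+1)) := by
        rw [hpn]; rfl
      rw [this, hl]
    · -- c ≥ 2 : final step does not touch Y
      have h2c : 2 ≤ (σp T).c := by
        have := hc1; omega
      have h2n : 2 ≤ n := by rw [hn]; exact DD_two f hf h2c
      rw [hstep, step_fin f hf (by omega) (by rw [hqn, hcn]; omega)]
      have hadv : (σp (T + n)).adv = true := by rw [han, ha]
      show (resolvePos _ k ((σp (T+n)).pos) none).1.length = _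
      rw [hadv, if_pos rfl]
      rw [resolvePos_eq_other]
      · have : ((σp (T + n)).pos none).1.length = lenI none (σp (T+1)) := by
          rw [hpn]; rfl
        rw [if_neg hc]
        show ((σp (T + n)).pos none).1.length = lenI none (σp T) + 1
        rw [this, hl]
      · intro hcon
        refine DD_getD_ne_none f hf (m := (DD f hf (σp (T+n)).c).length - 1) ?_ ?_ hcon.symm
        · rw [hcn, ← hn]; omega
        · rw [hcn, ← hn]; omega
  · -- Y not advanced at the triangular step; the final step resolves Y
    have hcne : ¬ (σp T).c = 1 := by
      intro hc
      have hne1 : n = 1 := by rw [hn, hc, DD_one]; rfl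
      omega
    rw [hstep, step_fin f hf (by omega) (by rw [hqn, hcn]; omega)]
    have hadv : (σp (T + n)).adv = false := by rw [han, ha]
    show (resolvePos _ k ((σp (T+n)).pos) none).1.length = _
    rw [hadv, if_neg (by simp), resolvePos_eq_target _ _ rfl]
    simp only [List.length_append, List.length_cons, List.length_nil]
    rw [if_neg hcne]
    have h5 : ((σp (T + n)).pos none).1 = ((σp T).pos none).1 := by
      rw [hpn]
      exact hl
    show ((σp (T+n)).pos none).1.length + 1 = lenI none (σp T) + 1
    rw [h5]
    rfl

lemma lenY_tau (hsp : ∀ t, ∃ k, σp (t + 1) = step f hf (σp t) k) (h0p : σp 0 = initMS) : ∀ c, 1 ≤ c → lenI none (σp (tauT f hf c)) = (if c = 1 then 0 else c) := by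
  intro c hc
  induction c with
  | zero => omega
  | succ c ih =>
    rcases Nat.eq_or_lt_of_le hc with h | h
    · rw [show c + 1 = 1 by omega]
      rw [if_pos rfl]
      show ((((σp (tauT f hf 1))).pos none).1).length = 0
      rw [show tauT f hf 1 = 0 from rfl, h0p]
      rfl
    · have hc1 : 1 ≤ c := by omega
      have ihv := ih hc1
      obtain ⟨hsc, hsq⟩ := tau_spec f hf σp hsp h0p c hc1
      have htt : tauT f hf (c + 1) = tauT f hf c + (DD f hf c).length + 1 := by
        match c, hc1 with
        | (c'+1), _ => rfl
      have hcyc := lenY_cycle f hf σp hsp (tauT f hf c) hsq (by omega)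
      rw [hsc] at hcyc
      rw [htt, hcyc, ihv]
      split_ifs <;> omega

lemma adv_cycle (hsp : ∀ t, ∃ k, σp (t + 1) = step f hf (σp t) k) (T : ℕ) (hq : (σp T).q = 0) (hc1 : 1 ≤ (σp T).c) (i : Option Λ)
    (hi : rk f hf i < (σp T).c) :
    lenI i (σp T) + 1 ≤ lenI i (σp (T + (DD f hf (σp T).c).length + 1)) := by
  set n := (DD f hf (σp T).c).length with hn
  have hn1 : 1 ≤ n := DD_len1 f hf hc1
  obtain ⟨m, hm, hgm⟩ := List.getElem_of_mem ((mem_DD f hf).2 hi)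
  have hgd : (DD f hf (σp T).c).getD m none = i := by
    rw [List.getD_eq_getElem _ _ hm, hgm]
  by_cases hm0 : m = 0
  · -- i = none
    have hi0 : i = none := by
      rw [← hgd, hm0]
      exact DD_getD_zero f hf hc1
    subst hi0
    have := lenY_cycle f hf σp hsp T hq hc1
    rw [← hn] at this
    rw [this]
    split <;> omega
  · -- resolution phase m advances i
    have hm1 : 1 ≤ m := by omega
    obtain ⟨hcm, hqm⟩ := phase_prog f hf σp hsp T hq m hm1 (by omega)
    obtain ⟨k, hk⟩ := hsp (T + m)
    have h1 : lenI i (σp (T + m + 1)) = lenI i (σp (T + m)) + 1 := by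
      rw [hk, step_res f hf (by omega) (by rw [hqm, hcm, ← hn]; omega)]
      show ((resolvePos ((DD f hf (σp (T+m)).c).getD (σp (T+m)).q none) k ((σp (T+m)).pos)) i).1.length = _
      rw [hqm, hcm, hgd, resolvePos_eq_target _ _ rfl]
      simp [lenI]
    have h2 : lenI i (σp T) ≤ lenI i (σp (T + m)) :=
      lenI_mono f hf σp hsp (by omega) i
    have h3 : lenI i (σp (T + m + 1)) ≤ lenI i (σp (T + n + 1)) :=
      lenI_mono f hf σp hsp (by omega) i
    omega

lemma lenI_tau_lower (hsp : ∀ t, ∃ k, σp (t + 1) = step f hf (σp t) k) (h0p : σp 0 = initMS) (i : Option Λ) :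
    ∀ d c, 1 ≤ c → rk f hf i < c → d ≤ lenI i (σp (tauT f hf (c + d))) := by
  intro d
  induction d with
  | zero => intro c _ _; omega
  | succ d ih =>
    intro c hc1 hrk
    have hv := ih c hc1 hrk
    have hcd1 : 1 ≤ c + d := by omega
    obtain ⟨hsc, hsq⟩ := tau_spec f hf σp hsp h0p (c + d) hcd1
    have htt : tauT f hf (c + d + 1) = tauT f hf (c + d) + (DD f hf (c + d)).length + 1 := by
      match hh : c + d, hcd1 with
      | (c'+1), _ => rfl
    have hadv := adv_cycle f hf σp hsp (tauT f hf (c+d)) hsq (by omega) i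
      (by rw [hsc]; omega)
    rw [hsc] at hadv
    rw [show c + (d+1) = c + d + 1 by omega, htt]
    omega

end Path

end Product3

end PTAux

namespace PTAux

lemma sq_prefix (g : ℕ → ℕ) {n m : ℕ} (h : n ≤ m) :
    (List.range n).map g <+: (List.range m).map g := by
  have h1 : ((List.range m).map g).take n = (List.range n).map g := by
    rw [← List.map_take, List.take_range, min_eq_left h]
  rw [← h1]; exact List.take_prefix _ _

lemma prefix_getD_agree {a b : List ℕ} (h : a <+: b) {m : ℕ} (hm : m < a.length) :
    b.getD m 0 = a.getD m 0 := by
  obtain ⟨t, rfl⟩ := h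
  exact List.getD_append _ _ _ _ hm

section Product4

variable {Λ : Type} {Y : Type u} {X : Λ → Type u}
variable [TopologicalSpace Y] [∀ l, TopologicalSpace (X l)]
variable (NY : Norm Y) (NX : ∀ l, Norm (X l))
variable (f : ℕ → Λ) (hf : Function.Surjective f)

lemma zpf_none (z : Y × ∀ l, X l) : zpf z none = z.1 := rfl
lemma zpf_some (z : Y × ∀ l, X l) (l : Λ) : zpf z (some l) = z.2 l := rfl

lemma AAf_open (i : Option Λ) (s : List ℕ × ℕ) : IsOpen (AAf NY NX i s) :=
  isOpen_iUnion fun k => (NNf NY NX i).opn _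

lemma leafOf_nonemp (σ : MS Λ) : (leafOf NY NX σ).Nonempty := by
  have hx : ∀ i, ∃ x, x ∈ AAf NY NX i (σ.pos i) := fun i => AAf_nonemp NY NX i (σ.pos i)
  choose x hxm using hx
  refine ⟨(x none, fun l => x (some l)), ?_⟩
  intro i
  match i with
  | none => exact hxm none
  | some l => exact hxm (some l)

lemma leafOf_open {σ : MS Λ} (hinv : Inv f hf σ) : IsOpen (leafOf NY NX σ) := by
  have heq : leafOf NY NX σ =
      (Prod.fst ⁻¹' AAf NY NX none (σ.pos none)) ∩
        (Prod.snd ⁻¹' Set.pi {l : Λ | rk f hf (some l) < σ.c}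
          (fun l => AAf NY NX (some l) (σ.pos (some l)))) := by
    ext z
    simp only [leafOf, Set.mem_setOf_eq, Set.mem_inter_iff, Set.mem_preimage, Set.mem_pi]
    constructor
    · intro h
      exact ⟨h none, fun l _ => h (some l)⟩
    · rintro ⟨h1, h2⟩ i
      match i with
      | none => exact h1
      | some l =>
        by_cases hl : rk f hf (some l) < σ.c
        · exact h2 l hl
        · have hp := hinv.hout (some l) hl
          rw [hp, AAf_zero, (NNf NY NX (some l)).root]
          trivial
  rw [heq]
  refine IsOpen.inter ?_ ?_
  · exact (AAf_open NY NX none _).preimage continuous_fst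
  · refine IsOpen.preimage continuous_snd ?_
    refine isOpen_set_pi ?_ (fun l _ => AAf_open NY NX (some l) _)
    have hsub : {l : Λ | rk f hf (some l) < σ.c} ⊆ (pre f hf) ⁻¹' (Set.Iio σ.c) := by
      intro l hl
      simp only [Set.mem_preimage, Set.mem_Iio]
      have : pre f hf l + 1 < σ.c := hl
      omega
    refine Set.Finite.subset (Set.Finite.preimage ?_ (Set.finite_Iio _)) hsub
    exact Set.injOn_of_injective (pre_inj f hf)

section Path2

variable (σp : ℕ → MS Λ)

lemma AA_path_anti (hsp : ∀ t, ∃ k, σp (t + 1) = step f hf (σp t) k)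
    {t t' : ℕ} (h : t ≤ t') (i : Option Λ) :
    AAf NY NX i ((σp t').pos i) ⊆ AAf NY NX i ((σp t).pos i) := by
  induction t' with
  | zero =>
    have : t = 0 := by omega
    subst this; exact subset_rfl
  | succ t' ih =>
    rcases Nat.lt_or_ge t (t' + 1) with h2 | h2
    · obtain ⟨k, hk⟩ := hsp t'
      refine subset_trans ?_ (ih (by omega))
      rw [hk]
      exact AAf_pos_step_sub NY NX f hf _ k i
    · have : t = t' + 1 := by omega
      subst this; exact subset_rfl

/-- along any infinite path, the leaves intersect in exactly one point -/
lemma inter_path (hsp : ∀ t, ∃ k, σp (t + 1) = step f hf (σp t) k)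
    (h0p : σp 0 = initMS) :
    ∃ p, (⋂ t, leafOf NY NX (σp t)) = {p} := by
  -- each coordinate's node length is unbounded along the path
  have hunb : ∀ (i : Option Λ) (m : ℕ), ∃ t, m ≤ lenI i (σp t) := by
    intro i m
    refine ⟨tauT f hf (rk f hf i + 1 + m), ?_⟩
    exact lenI_tau_lower f hf σp hsp h0p i m (rk f hf i + 1) (by omega) (by omega)
  -- define the limit branch of each coordinate
  have hcoord : ∀ i : Option Λ, ∃ pt : ZXf Y X i,
      (⋂ t, AAf NY NX i ((σp t).pos i)) = {pt} := by
    intro i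
    obtain ⟨tf, htf⟩ := Classical.axiomOfChoice (hunb i)
    set gi : ℕ → ℕ := fun m => ((σp (tf (m+1))).pos i).1.getD m 0 with hgi
    have vic_eq : ∀ t, ((σp t).pos i).1 = (List.range (lenI i (σp t))).map gi := by
      intro t
      refine List.ext_getElem (by simp [lenI]) ?_
      intro m hm1 hm2
      have hm : m < lenI i (σp t) := hm1
      rw [List.getElem_map, List.getElem_range]
      show ((σp t).pos i).1[m] = ((σp (tf (m+1))).pos i).1.getD m 0
      refine Eq.trans (List.getD_eq_getElem (((σp t).pos i).1) 0 hm1).symm ?_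
      rcases le_total t (tf (m+1)) with hle | hle
      · exact (prefix_getD_agree (fst_prefix_path f hf σp hsp hle i) hm1).symm
      · have hm' : m < lenI i (σp (tf (m+1))) := by
          have := htf (m+1); omega
        exact prefix_getD_agree (fst_prefix_path f hf σp hsp hle i) hm'
    obtain ⟨pt, hpt⟩ := (NNf NY NX i).strict gi
    have hptmem : ∀ m, pt ∈ (NNf NY NX i).L ((List.range m).map gi) := by
      intro m
      have : pt ∈ ({pt} : Set (ZXf Y X i)) := rfl
      rw [← hpt] at this
      exact Set.mem_iInter.1 this m
    refine ⟨pt, ?_⟩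
    apply subset_antisymm
    · intro x hx
      have hx' : ∀ m, x ∈ (NNf NY NX i).L ((List.range m).map gi) := by
        intro m
        obtain ⟨t, ht⟩ := hunb i m
        have h1 : x ∈ AAf NY NX i ((σp t).pos i) := Set.mem_iInter.1 hx t
        have h2 : x ∈ (NNf NY NX i).L (((σp t).pos i).1) :=
          AAf_sub_L NY NX i _ h1
        rw [vic_eq t] at h2
        exact (NNf NY NX i).prefix_sub (sq_prefix gi ht) h2
      have : x ∈ ⋂ m, (NNf NY NX i).L ((List.range m).map gi) :=
        Set.mem_iInter.2 hx'
      rw [hpt] at this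
      exact this
    · intro x hx
      simp only [Set.mem_singleton_iff] at hx
      rw [hx]
      refine Set.mem_iInter.2 fun t => ?_
      -- find a later time where the coordinate has just advanced
      have hQ : ∃ t', t < t' ∧ lenI i (σp t) < lenI i (σp t') := by
        obtain ⟨t', ht'⟩ := hunb i (lenI i (σp t) + 1 + t)
        have hmono := lenI_mono f hf σp hsp (show t ≤ t' by
          by_contra hcon
          have := lenI_mono f hf σp hsp (show t' ≤ t by omega) i
          omega) i
        exact ⟨t', by
          constructor
          · by_contra hcon
            have := lenI_mono f hf σp hsp (show t' ≤ t by omega) i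
            omega
          · omega⟩
      set t1 := Nat.find hQ with ht1
      obtain ⟨ht1a, ht1b⟩ : t < t1 ∧ lenI i (σp t) < lenI i (σp t1) := Nat.find_spec hQ
      have ht1pos : 1 ≤ t1 := by omega
      have hprev : lenI i (σp (t1 - 1)) = lenI i (σp t) := by
        have h2 : ¬ (t < t1 - 1 ∧ lenI i (σp t) < lenI i (σp (t1 - 1))) :=
          Nat.find_min hQ (by omega)
        rcases Nat.lt_or_ge t (t1 - 1) with h3 | h3
        · have h4 := lenI_mono f hf σp hsp (show t ≤ t1 - 1 by omega) i
          have h5 : ¬ lenI i (σp t) < lenI i (σp (t1-1)) := fun hc => h2 ⟨h3, hc⟩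
          omega
        · have hte : t = t1 - 1 := by omega
          rw [hte]
      -- the step into t1 advanced coordinate i
      obtain ⟨k, hk⟩ := hsp (t1 - 1)
      have hk1 : σp t1 = step f hf (σp (t1 - 1)) k := by
        rw [show t1 - 1 + 1 = t1 by omega] at hk
        exact hk
      rcases pos_fst_cases f hf (σp (t1 - 1)) k i with hcase | ⟨j, hcase⟩
      · exfalso
        rw [hk1] at ht1b
        have : lenI i (σp (t1-1)) = lenI i (step f hf (σp (t1-1)) k) := by
          show _ = ((step f hf (σp (t1-1)) k).pos i).1.length
          rw [hcase]
          rfl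
        omega
      · have hAA1 : AAf NY NX i ((σp t1).pos i) =
            (NNf NY NX i).L (((σp t1).pos i).1) := by
          rw [hk1]
          show AAf NY NX i ((step f hf (σp (t1-1)) k).pos i) = _
          rw [hcase]
          exact AAf_zero NY NX i _
        have hmem : pt ∈ AAf NY NX i ((σp t1).pos i) := by
          rw [hAA1, vic_eq t1]
          exact hptmem _
        exact AA_path_anti NY NX f hf σp hsp (show t ≤ t1 by omega) i hmem
  choose pt hptspec using hcoord
  refine ⟨(pt none, fun l => pt (some l)), ?_⟩
  ext z
  simp only [Set.mem_iInter, Set.mem_singleton_iff]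
  constructor
  · intro h
    have hcc : ∀ i, zpf z i = pt i := by
      intro i
      have : zpf z i ∈ ⋂ t, AAf NY NX i ((σp t).pos i) :=
        Set.mem_iInter.2 fun t => h t i
      rw [hptspec i] at this
      exact this
    have h1 : z.1 = pt none := hcc none
    have h2 : ∀ l, z.2 l = pt (some l) := fun l => hcc (some l)
    exact Prod.ext h1 (funext h2)
  · intro h t i
    subst h
    have : zpf (pt none, fun l => pt (some l)) i = pt i := by
      match i with
      | none => rfl
      | some l => rfl
    refine (congrArg (· ∈ AAf NY NX i ((σp t).pos i)) this).mpr ?_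
    have hpm : pt i ∈ ⋂ t, AAf NY NX i ((σp t).pos i) := by
      rw [hptspec i]; rfl
    exact Set.mem_iInter.1 hpm t

end Path2

end Product4

end PTAux

namespace PTAux

section Product5

variable {Λ : Type} {Y : Type u} {X : Λ → Type u}
variable [TopologicalSpace Y] [∀ l, TopologicalSpace (X l)]
variable (NY : Norm Y) (NX : ∀ l, Norm (X l))
variable (f : ℕ → Λ) (hf : Function.Surjective f)

lemma mem_leaf_init (p : Y × ∀ l, X l) : p ∈ leafOf NY NX (mstate f hf ([] : List ℕ)) := by
  intro i
  show zpf p i ∈ AAf NY NX i (([], 0) : List ℕ × ℕ)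
  rw [AAf_zero, (NNf NY NX i).root]
  trivial

/-- the branch through a point, by recursive choice -/
noncomputable def nxt (p : Y × ∀ l, X l) (a : List ℕ) : List ℕ :=
  if h : p ∈ leafOf NY NX (mstate f hf a)
  then a ++ [Classical.choose (step_exists NY NX f hf (inv_mstate f hf a) h)]
  else a

noncomputable def brf (p : Y × ∀ l, X l) : ℕ → List ℕ
  | 0 => []
  | (t+1) => nxt NY NX f hf p (brf p t)

lemma brf_mem (p : Y × ∀ l, X l) (t : ℕ) :
    p ∈ leafOf NY NX (mstate f hf (brf NY NX f hf p t)) := by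
  induction t with
  | zero => exact mem_leaf_init NY NX f hf p
  | succ t ih =>
    show p ∈ leafOf NY NX (mstate f hf (nxt NY NX f hf p (brf NY NX f hf p t)))
    rw [nxt, dif_pos ih, mstate_concat]
    exact Classical.choose_spec (step_exists NY NX f hf (inv_mstate f hf _) ih)

lemma brf_mstep (p : Y × ∀ l, X l) (t : ℕ) :
    ∃ k, mstate f hf (brf NY NX f hf p (t+1)) = step f hf (mstate f hf (brf NY NX f hf p t)) k := by
  refine ⟨Classical.choose (step_exists NY NX f hf (inv_mstate f hf _) (brf_mem NY NX f hf p t)), ?_⟩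
  show mstate f hf (nxt NY NX f hf p (brf NY NX f hf p t)) = _
  rw [nxt, dif_pos (brf_mem NY NX f hf p t), mstate_concat]

/-- the growth property of the product tree -/
lemma growth
    (hunbY : ∀ y (V : Set Y), V ∈ nhds y → ∀ M, ∃ b, y ∈ NY.L b ∧ M ≤ b.length ∧ NY.GoodAt b V)
    (hcofX : ∀ l (x : X l) (W : Set (X l)), W ∈ nhds x → ∃ Cf : Set ℕ, Cf.Finite ∧
      ∀ b, x ∈ (NX l).L b → b.length ∉ Cf → (NX l).GoodAt b W)
    (p : Y × ∀ l, X l) (U : Set (Y × ∀ l, X l)) (hU : U ∈ nhds p) :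
    ∃ a : List ℕ, p ∈ leafOf NY NX (mstate f hf a) ∧
      ∃ K : ℕ, ∀ k, K ≤ k → leafOf NY NX (mstate f hf (a ++ [k])) ⊆ U := by
  -- decompose the neighbourhood
  obtain ⟨V, hV, W, hW, hVW⟩ := mem_nhds_prod_iff.1 (show U ∈ nhds (p.1, p.2) from hU)
  rw [nhds_pi] at hW
  obtain ⟨I, hIfin, t, ht, htW⟩ := Filter.mem_pi.1 hW
  -- cofinite rises for the Λ-coordinates
  have hcof' : ∀ l, ∃ Cf : Set ℕ, Cf.Finite ∧
      ∀ b, p.2 l ∈ (NX l).L b → b.length ∉ Cf → (NX l).GoodAt b (t l) :=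
    fun l => hcofX l (p.2 l) (t l) (ht l)
  choose Cf hCffin hCfspec using hcof'
  have hbl : ∀ l, ∃ bl, ∀ x ∈ Cf l, x ≤ bl := by
    intro l
    obtain ⟨bl, hbl⟩ := (hCffin l).bddAbove
    exact ⟨bl, fun x hx => hbl hx⟩
  choose bl hbl using hbl
  -- cycle bound
  set F := hIfin.toFinset with hF
  set M := 2 + F.sup (fun l => pre f hf l + 3 + bl l) with hM
  -- the Y witness node
  obtain ⟨b, hyb, hbM, hbgood⟩ := hunbY p.1 V hV M
  set cY := b.length with hcY
  have hcY2 : 2 ≤ cY := by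
    have : 2 ≤ M := by rw [hM]; omega
    omega
  have hcYl : ∀ l ∈ I, pre f hf l + 3 + bl l + 2 ≤ cY := by
    intro l hl
    have : pre f hf l + 3 + bl l ≤ F.sup (fun l => pre f hf l + 3 + bl l) :=
      Finset.le_sup (f := fun l => pre f hf l + 3 + bl l) (show l ∈ F from hIfin.mem_toFinset.2 hl)
    omega
  -- the path through p
  set σp : ℕ → MS Λ := fun t' => mstate f hf (brf NY NX f hf p t') with hσp
  have hsp : ∀ t', ∃ k, σp (t' + 1) = step f hf (σp t') k := fun t' => brf_mstep NY NX f hf p t'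
  have h0p : σp 0 = initMS := rfl
  have hmem : ∀ t', p ∈ leafOf NY NX (σp t') := fun t' => brf_mem NY NX f hf p t'
  set T := tauT f hf cY with hT
  obtain ⟨hTc, hTq⟩ := tau_spec f hf σp hsp h0p cY (by omega)
  -- the Y-coordinate node at time T is b
  have hlenY : lenI none (σp T) = cY := by
    have := lenY_tau f hf σp hsp h0p cY (by omega)
    rw [if_neg (by omega)] at this
    exact this
  have hpy : p.1 ∈ NY.L (((σp T).pos none).1) := by
    have h1 := hmem T none
    exact AAf_sub_L NY NX none _ h1
  have hYb : ((σp T).pos none).1 = b := NY.uniq_len hpy hyb hlenY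
  have hgoodY : NY.GoodAt (((σp T).pos none).1) V := by rw [hYb]; exact hbgood
  -- the Λ-coordinates at time T are good
  have hpxl : ∀ l, p.2 l ∈ (NX l).L (((σp T).pos (some l)).1) := by
    intro l
    have h1 := hmem T (some l)
    exact AAf_sub_L NY NX (some l) _ h1
  have hlenl : ∀ l ∈ I, bl l < lenI (some l) (σp T) := by
    intro l hl
    have h2 := hcYl l hl
    have h3 := lenI_tau_lower f hf σp hsp h0p (some l) (cY - (pre f hf l + 2)) (pre f hf l + 2)
      (by omega) (by show pre f hf l + 1 < pre f hf l + 2; omega)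
    rw [show pre f hf l + 2 + (cY - (pre f hf l + 2)) = cY by omega] at h3
    rw [hT]
    omega
  have hgoodl : ∀ l ∈ I, (NX l).GoodAt (((σp T).pos (some l)).1) (t l) := by
    intro l hl
    refine hCfspec l _ (hpxl l) ?_
    intro hin
    have := hbl l _ hin
    have := hlenl l hl
    show False
    have hll : lenI (some l) (σp T) = (((σp T).pos (some l)).1).length := rfl
    omega
  -- son bounds
  obtain ⟨βY, hβY⟩ := hgoodY.bound
  have hβl : ∀ l, ∃ βl, l ∈ I → ∀ k, βl ≤ k → (NX l).L (((σp T).pos (some l)).1 ++ [k]) ⊆ t l := by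
    intro l
    by_cases hl : l ∈ I
    · obtain ⟨β, hβ⟩ := (hgoodl l hl).bound
      exact ⟨β, fun _ => hβ⟩
    · exact ⟨0, fun h => absurd h hl⟩
  choose βl hβl using hβl
  set β := max βY (F.sup βl) with hβ
  set n := (DD f hf (σp T).c).length with hn
  have hn1 : 1 ≤ n := DD_len1 f hf (by rw [hTc]; omega)
  refine ⟨brf NY NX f hf p T, hmem T, β * n, ?_⟩
  intro k hk
  have hκβ : β ≤ k / n := (Nat.le_div_iff_mul_le (by omega)).2 hk
  intro z hz
  rw [mstate_concat] at hz
  have hz' : ∀ i, zpf z i ∈ AAf NY NX i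
      ((triPos f hf (σp T).c ((DD f hf (σp T).c).getD (k % n) none) (k / n) ((σp T).pos)) i) := by
    intro i
    have := hz i
    rw [show mstate f hf (brf NY NX f hf p T) = σp T from rfl] at this
    rw [step_tri f hf hTq] at this
    exact this
  set istar := (DD f hf (σp T).c).getD (k % n) none with histar
  set κ := k / n with hκ
  -- key: coordinates with good bounds land inside their targets
  have coordKey : ∀ (i : Option Λ) (S : Set (ZXf Y X i)), rk f hf i < (σp T).c →
      (∀ m, β ≤ m → (NNf NY NX i).L (((σp T).pos i).1 ++ [m]) ⊆ S) →
      zpf z i ∈ S := by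
    intro i S hin hgood
    have hzi := hz' i
    by_cases heq : i = istar
    · rw [triPos_eq_single f hf _ _ hin heq, AAf_zero] at hzi
      exact hgood _ (by omega) hzi
    · by_cases hrk : rk f hf i < rk f hf istar
      · rw [triPos_eq_before f hf _ _ hin heq hrk] at hzi
        obtain ⟨j, hj⟩ := Set.mem_iUnion.1 hzi
        exact hgood _ (by omega) hj
      · rw [triPos_eq_after f hf _ _ hin heq hrk] at hzi
        obtain ⟨j, hj⟩ := Set.mem_iUnion.1 hzi
        exact hgood _ (by omega) hj
  -- conclude
  have hz1 : z.1 ∈ V := by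
    refine coordKey none V (by rw [hTc]; show (0:ℕ) < cY; omega) ?_
    intro m hm
    refine hβY m ?_
    have : βY ≤ β := by rw [hβ]; exact le_max_left _ _
    omega
  have hz2 : ∀ l ∈ I, z.2 l ∈ t l := by
    intro l hl
    refine coordKey (some l) (t l) ?_ ?_
    · rw [hTc]
      show pre f hf l + 1 < cY
      have := hcYl l hl
      omega
    · intro m hm
      refine hβl l hl m ?_
      have : βl l ≤ F.sup βl := Finset.le_sup (f := βl) (show l ∈ F from hIfin.mem_toFinset.2 hl)
      have : βl l ≤ β := by rw [hβ]; exact le_trans this (le_max_right _ _)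
      omega
  have hzW : z.2 ∈ W := htW (fun l hl => hz2 l hl)
  have : (z.1, z.2) ∈ V ×ˢ W := ⟨hz1, hzW⟩
  exact hVW this

end Product5

end PTAux

namespace PTAux

section Assemble

variable {Λ : Type} {Y : Type u} {X : Λ → Type u}
variable [TopologicalSpace Y] [∀ l, TopologicalSpace (X l)]
variable (NY : Norm Y) (NX : ∀ l, Norm (X l))
variable (f : ℕ → Λ) (hf : Function.Surjective f)

/-- the product tree -/
noncomputable def prodTree : FoliageTree (Y × ∀ l, X l) where
  Node := List ℕ
  lt := seqLT
  lt_irrefl a h := h.2 rfl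
  lt_trans := seqLT_trans
  wellOrdered := wellOrderPrefix
  leaf a := leafOf NY NX (mstate f hf a)

lemma prodTree_sons (a : List ℕ) :
    (prodTree NY NX f hf).Sons a = Set.range (fun k => a ++ [k]) := by
  ext s
  constructor
  · intro hs
    obtain ⟨k, hk⟩ := seqLT_son_iff.1 hs
    exact ⟨k, hk.symm⟩
  · rintro ⟨k, hk⟩
    exact seqLT_son_iff.2 ⟨k, hk.symm⟩

lemma leaf_union (a : List ℕ) :
    leafOf NY NX (mstate f hf a) = ⋃ k, leafOf NY NX (mstate f hf (a ++ [k])) := by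
  apply subset_antisymm
  · intro z hz
    obtain ⟨k, hk⟩ := step_exists NY NX f hf (inv_mstate f hf a) hz
    exact Set.mem_iUnion.2 ⟨k, by rw [mstate_concat]; exact hk⟩
  · refine Set.iUnion_subset fun k => ?_
    rw [mstate_concat]
    exact leafOf_step_sub NY NX f hf _ k

lemma leaf_disj (a : List ℕ) {j k : ℕ} (hjk : j ≠ k) :
    Disjoint (leafOf NY NX (mstate f hf (a ++ [j]))) (leafOf NY NX (mstate f hf (a ++ [k]))) := by
  rw [mstate_concat, mstate_concat]
  exact step_disj NY NX f hf (inv_mstate f hf a) hjk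

lemma prodTree_isPiTree
    (hunbY : ∀ y (V : Set Y), V ∈ nhds y → ∀ M, ∃ b, y ∈ NY.L b ∧ M ≤ b.length ∧ NY.GoodAt b V)
    (hcofX : ∀ l (x : X l) (W : Set (X l)), W ∈ nhds x → ∃ Cf : Set ℕ, Cf.Finite ∧
      ∀ b, x ∈ (NX l).L b → b.length ∉ Cf → (NX l).GoodAt b W) :
    (prodTree NY NX f hf).IsPiTree := by
  constructor
  · refine ⟨?_, ?_, ?_, ?_, ?_⟩
    · -- OpenIn
      intro a
      exact leafOf_open NY NX f hf (inv_mstate f hf a)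
    · -- LocallyStrict
      intro a _
      constructor
      · rw [prodTree_sons NY NX f hf a, Set.biUnion_range]
        exact leaf_union NY NX f hf a
      · intro s hs t ht hst
        rw [prodTree_sons NY NX f hf a] at hs ht
        obtain ⟨j, rfl⟩ := hs
        obtain ⟨k, rfl⟩ := ht
        have hjk : j ≠ k := by intro h; apply hst; rw [h]
        exact leaf_disj NY NX f hf a hjk
    · -- ω,ω tree
      exact ⟨RelIso.refl seqLT⟩
    · -- StrictBranches
      refine ⟨⟨[]⟩, ?_⟩
      intro B hB
      have hBmax : IsMaxChain seqLT B := (isBranch_iff_isMaxChain _ B).1 hB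
      obtain ⟨ℓ, hlen, hpref, hBeq⟩ := maxChain_spec hBmax
      have hsp : ∀ t, ∃ k, mstate f hf (ℓ (t+1)) = step f hf (mstate f hf (ℓ t)) k := by
        intro t
        obtain ⟨k, hk⟩ := eq_concat_of_prefix_len (hpref t (t+1) (by omega))
          (by rw [hlen, hlen])
        exact ⟨k, by rw [hk, mstate_concat]⟩
      have h0p : mstate f hf (ℓ 0) = (initMS : MS Λ) := by
        have h1 : ℓ 0 = [] := List.length_eq_zero_iff.1 (hlen 0)
        rw [h1]; rfl
      obtain ⟨p, hp⟩ := inter_path NY NX f hf (fun n => mstate f hf (ℓ n)) hsp h0p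
      refine ⟨p, ?_⟩
      rw [hBeq]
      exact (Set.biInter_range).trans hp
    · -- root
      refine ⟨[], ?_, ?_⟩
      · intro x
        by_cases h : x = []
        · left; exact h.symm
        · right; exact ⟨List.nil_prefix, fun hh => h hh.symm⟩
      · exact Set.eq_univ_of_forall (fun z => mem_leaf_init NY NX f hf z)
  · -- GrowsInto
    intro p U hU
    obtain ⟨a, hpa, K, hK⟩ := growth NY NX f hf hunbY hcofX p U hU
    refine ⟨a, hpa, ?_⟩
    intro D hD hDne
    rw [Set.mem_singleton_iff] at hD
    subst hD
    refine ⟨⋃ s ∈ (fun k => a ++ [k]) '' {k | K ≤ k}, leafOf NY NX (mstate f hf s),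
      ?_, ?_, ?_⟩
    · refine ⟨(fun k => a ++ [k]) '' {k | K ≤ k}, ?_, ?_, rfl⟩
      · rw [prodTree_sons]
        rintro s ⟨k, _, rfl⟩
        exact ⟨k, rfl⟩
      · rw [prodTree_sons]
        have hsub : Set.range (fun k => a ++ [k]) \ ((fun k => a ++ [k]) '' {k | K ≤ k}) ⊆
            (fun k => a ++ [k]) '' {k | k < K} := by
          rintro s ⟨⟨k, rfl⟩, hns⟩
          rcases Nat.lt_or_ge k K with hlt | hge
          · exact ⟨k, hlt, rfl⟩
          · exact absurd ⟨k, hge, rfl⟩ hns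
        refine Set.Finite.subset (Set.Finite.image _ ?_) hsub
        exact Set.finite_Iio K
    · obtain ⟨z, hz⟩ := leafOf_nonemp NY NX (mstate f hf (a ++ [K]))
      refine ⟨z, ?_⟩
      refine Set.mem_biUnion ⟨K, show K ≤ K from le_rfl, rfl⟩ ?_
      exact hz
    · refine Set.iUnion₂_subset ?_
      rintro s ⟨k, hk, rfl⟩
      show leafOf NY NX (mstate f hf (a ++ [k])) ⊆ D
      exact hK k hk

end Assemble

end PTAux

/-- Corollary: product with a space having a π-tree, when each factor has a
π-tree whose Rise family is π-refined by the cofinite sets. -/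
theorem product_with_piTree_space_has_piTree
    {Λ : Type} [Countable Λ] [Nonempty Λ]
    {X : Λ → Type u} [∀ l, TopologicalSpace (X l)]
    (H : ∀ l, FoliageTree (X l)) (hH : ∀ l, (H l).IsPiTree)
    (hcof : ∀ l, PiRefines (cofin Set.univ) ((H l).Rise))
    {Y : Type u} [TopologicalSpace Y] (hY : ∃ G : FoliageTree Y, G.IsPiTree) :
    ∃ G : FoliageTree (Y × ∀ l, X l), G.IsPiTree := by
  obtain ⟨G, hG⟩ := hY
  obtain ⟨f, hf⟩ := exists_surjective_nat Λ
  refine ⟨PTAux.prodTree (PTAux.normOf G hG) (fun l => PTAux.normOf (H l) (hH l)) f hf, ?_⟩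
  refine PTAux.prodTree_isPiTree _ _ f hf ?_ ?_
  · exact PTAux.norm_unb (PTAux.normOf_grow G hG)
  · intro l x W hW
    exact PTAux.normOf_cof (H l) (hH l) (hcof l) x W hW
end
end

section
/- Suppose that Λ is either a natural number ≥ 2 or ω, and for each n ∈ Λ, δ_n is a nonempty family of nonempty subsets of ω with ⋂ δ_n = ∅. Suppose also that δ_0 has the finite intersection property and that for each n ∈ Λ with n ≠ 0 there is a family γ_n of subsets of ω such that |γ_n| ≤ ω, γ_n has the finite intersection property, and γ_n ≫ δ_n. Then there exists a sequence ⟨α_n⟩_{n∈Λ} of strictly increasing functions α_n : ω → ω such that: whenever k ∈ Λ and for each i ≤ k the set A_i is the image α_i[D] of some D ∈ δ_i, the intersection ⋂_{i≤k} A_i is infinite. -/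
open Set

universe u v

/-- Auxiliary: under FIP of a refining family and empty total intersection,
all finite intersections of the refining family are infinite. -/
theorem aux_inter_infinite_of_fip (δ γ : Set (Set ℕ)) (hδmem : ∀ D ∈ δ, D.Nonempty)
    (hδint : ⋂₀ δ = ∅) (hfip : HasFIP γ) (href : PiRefines γ δ) :
    ∀ t ⊆ γ, t.Finite → t.Nonempty → (⋂₀ t).Infinite := by
  intro t htγ htfin htne
  by_contra hfin
  rw [Set.not_infinite] at hfin
  have hx : ∀ x : ℕ, ∃ G ∈ γ, x ∉ G := by
    intro x
    have hx' : x ∉ ⋂₀ δ := by rw [hδint]; exact Set.notMem_empty x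
    rw [Set.mem_sInter] at hx'
    push_neg at hx'
    obtain ⟨E, hE, hxE⟩ := hx'
    obtain ⟨G, hGγ, _, hGE⟩ := href E hE (hδmem E hE)
    exact ⟨G, hGγ, fun hxG => hxE (hGE hxG)⟩
  choose G hGγ hGx using hx
  have ht'1 : t ∪ (G '' (⋂₀ t)) ⊆ γ :=
    Set.union_subset htγ (by rintro _ ⟨x, _, rfl⟩; exact hGγ x)
  have ht'2 : (t ∪ (G '' (⋂₀ t))).Finite := htfin.union (hfin.image G)
  obtain ⟨y, hy⟩ := hfip _ ht'1 ht'2 (htne.mono Set.subset_union_left)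
  have hyS : y ∈ ⋂₀ t := fun A hA => hy A (Or.inl hA)
  exact hGx y (hy (G y) (Or.inr ⟨y, hyS, rfl⟩))

/-- Auxiliary: a countable family whose finite intersections are all infinite
has an "enumerated pseudo-intersection". -/
theorem aux_exists_pseudo (γ : Set (Set ℕ)) (hc : γ.Countable)
    (hinf : ∀ t ⊆ γ, t.Finite → t.Nonempty → (⋂₀ t).Infinite) :
    ∃ e : ℕ → ℕ, StrictMono e ∧ ∀ G ∈ γ, {j | e j ∉ G}.Finite := by
  rcases γ.eq_empty_or_nonempty with h | hne
  · exact ⟨id, strictMono_id, by simp [h]⟩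
  obtain ⟨g, hg⟩ := hc.exists_eq_range hne
  have hH : ∀ j : ℕ, (⋂₀ (g '' Set.Iic j)).Infinite := by
    intro j
    refine hinf _ ?_ ((Set.finite_Iic j).image g)
      ⟨g 0, Set.mem_image_of_mem g (by simp)⟩
    rw [hg]; exact Set.image_subset_range g _
  have step : ∀ j (prev : ℕ), ∃ b, b ∈ ⋂₀ (g '' Set.Iic j) ∧ prev < b := by
    intro j prev
    obtain ⟨b, hb⟩ := ((hH j).diff (Set.finite_Iic prev)).nonempty
    exact ⟨b, hb.1, by simpa using hb.2⟩
  choose f hf1 hf2 using step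
  refine ⟨fun j => Nat.rec (motive := fun _ => ℕ) (f 0 0) (fun j ih => f (j+1) ih) j,
    ?_, ?_⟩
  · refine strictMono_nat_of_lt_succ (fun j => ?_)
    exact hf2 (j+1) _
  · intro G hG
    rw [hg] at hG
    obtain ⟨m, rfl⟩ := hG
    apply (Set.finite_Iio m).subset
    intro j hj
    simp only [Set.mem_setOf_eq] at hj
    by_contra hjm
    have hmj : m ≤ j := le_of_not_gt (by simpa using hjm)
    have hej : (Nat.rec (motive := fun _ => ℕ) (f 0 0) (fun j ih => f (j+1) ih) j : ℕ)
        ∈ ⋂₀ (g '' Set.Iic j) := by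
      cases j with
      | zero => exact hf1 0 0
      | succ j => exact hf1 (j+1) _
    exact hj (hej (g m) (Set.mem_image_of_mem g hmj))

/-- Lemma on shifting filters (Lemma `lem.sdvig.filtrov` of the paper). -/
theorem exists_strictMono_shifts
    (Λ : Set ℕ) (hΛ : (∃ n, 2 ≤ n ∧ Λ = Set.Iio n) ∨ Λ = Set.univ)
    (δ : ℕ → Set (Set ℕ))
    (hδne : ∀ n ∈ Λ, (δ n).Nonempty)
    (hδmem : ∀ n ∈ Λ, ∀ D ∈ δ n, D.Nonempty)
    (hδint : ∀ n ∈ Λ, ⋂₀ δ n = ∅)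
    (h0 : HasFIP (δ 0))
    (hγ : ∀ n ∈ Λ, n ≠ 0 →
      ∃ γ : Set (Set ℕ), γ.Countable ∧ HasFIP γ ∧ PiRefines γ (δ n)) :
    ∃ α : ℕ → ℕ → ℕ, (∀ n ∈ Λ, StrictMono (α n)) ∧
      ∀ k ∈ Λ, ∀ D : ℕ → Set ℕ, (∀ i ≤ k, D i ∈ δ i) →
        (⋂ i ≤ k, (α i) '' (D i)).Infinite := by
  classical
  have h0Λ : (0 : ℕ) ∈ Λ := by
    rcases hΛ with ⟨N, hN2, rfl⟩ | rfl
    · exact by simpa using (by omega : 0 < N)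
    · trivial
  have hdc : ∀ {i k : ℕ}, k ∈ Λ → i ≤ k → i ∈ Λ := by
    intro i k hk hik
    rcases hΛ with ⟨N, hN2, rfl⟩ | rfl
    · simp only [Set.mem_Iio] at *; omega
    · trivial
  -- every member of δ 0 is infinite
  have hD0inf : ∀ D ∈ δ 0, D.Infinite := by
    intro D hD
    have := aux_inter_infinite_of_fip (δ 0) (δ 0) (hδmem 0 h0Λ) (hδint 0 h0Λ) h0
      (fun E hE hEne => ⟨E, hE, hEne, subset_rfl⟩) {D} (by simpa using hD)
      (Set.finite_singleton D) ⟨D, rfl⟩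
    simpa using this
  -- pseudo-intersection enumerations for n ∈ Λ, n ≠ 0
  have hP : ∀ n : ℕ, ∃ e : ℕ → ℕ, StrictMono e ∧
      (n ∈ Λ → n ≠ 0 → ∀ D ∈ δ n, {j | e j ∉ D}.Finite) := by
    intro n
    by_cases hn : n ∈ Λ ∧ n ≠ 0
    · obtain ⟨γ, hγc, hγfip, hγref⟩ := hγ n hn.1 hn.2
      have hinf := aux_inter_infinite_of_fip (δ n) γ (hδmem n hn.1) (hδint n hn.1)
        hγfip hγref
      obtain ⟨e, he, hpe⟩ := aux_exists_pseudo γ hγc hinf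
      refine ⟨e, he, fun _ _ D hD => ?_⟩
      obtain ⟨G, hGγ, _, hGD⟩ := hγref D hD (hδmem n hn.1 D hD)
      refine (hpe G hGγ).subset (fun j hj => ?_)
      simp only [Set.mem_setOf_eq] at *
      exact fun hjG => hj (hGD hjG)
    · exact ⟨id, strictMono_id, fun h1 h2 => absurd ⟨h1, h2⟩ hn⟩
  choose e he hpe using hP
  -- the common fast-growing sequence
  set z : ℕ → ℕ := fun j => j + ∑ m ∈ Finset.range (j+1), e m j with hzdef
  have hF1 : ∀ n j, n ≤ j → e n j ≤ z j := by
    intro n j hnj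
    have hmem : n ∈ Finset.range (j+1) := Finset.mem_range.mpr (by omega)
    have h : e n j ≤ ∑ m ∈ Finset.range (j+1), e m j := by
      simpa using Finset.single_le_sum (f := fun m => e m j) (fun _ _ => Nat.zero_le _) hmem
    simp only [hzdef]
    omega
  have hF2 : ∀ n j, n ≤ j → z j + e n (j+1) + 1 ≤ z (j+1) + e n j := by
    intro n j hnj
    have hmem : n ∈ Finset.range (j+1) := Finset.mem_range.mpr (by omega)
    have h1 : e n j + ∑ m ∈ (Finset.range (j+1)).erase n, e m j
        = ∑ m ∈ Finset.range (j+1), e m j :=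
      Finset.add_sum_erase _ (fun m => e m j) hmem
    have h2 : e n (j+1) + ∑ m ∈ (Finset.range (j+1)).erase n, e m j
        ≤ ∑ m ∈ Finset.range (j+1), e m (j+1) := by
      rw [← Finset.add_sum_erase _ (fun m => e m (j+1)) hmem]
      refine Nat.add_le_add_left (Finset.sum_le_sum fun m _ => ?_) _
      exact (he m).monotone (Nat.le_succ j)
    have h3 : ∑ m ∈ Finset.range (j+1), e m (j+1)
        ≤ ∑ m ∈ Finset.range (j+1+1), e m (j+1) :=
      Finset.sum_le_sum_of_subset (Finset.range_subset_range.mpr (by omega))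
    simp only [hzdef]
    omega
  have hzmono : StrictMono z := by
    refine strictMono_nat_of_lt_succ (fun j => ?_)
    have h1 := hF2 j j le_rfl
    have h2 : e j j < e j (j+1) := he j (lt_add_one j)
    omega
  -- the index function and the shifts
  have hexJ : ∀ n x : ℕ, ∃ j, n ≤ j ∧ x ≤ e n j := by
    intro n x
    exact ⟨max n x, le_max_left _ _, le_trans (le_max_right _ _) ((he n).le_apply)⟩
  set J : ℕ → ℕ → ℕ := fun n x => Nat.find (hexJ n x) with hJdef
  have hJ1 : ∀ n x, n ≤ J n x ∧ x ≤ e n (J n x) := fun n x => Nat.find_spec (hexJ n x)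
  have hJmin : ∀ n x j, n ≤ j → x ≤ e n j → J n x ≤ j := by
    intro n x j h1 h2; exact Nat.find_min' (hexJ n x) ⟨h1, h2⟩
  have hJlt : ∀ n x j, j < J n x → n ≤ j → e n j < x := by
    intro n x j hj hnj
    have := Nat.find_min (hexJ n x) hj
    push_neg at this
    exact this hnj
  set α : ℕ → ℕ → ℕ := fun n => if n ∈ Λ ∧ n ≠ 0 then
      (fun x => z (J n x) - (e n (J n x) - x)) else z with hαdef
  have hα_eq : ∀ n x, (n ∈ Λ ∧ n ≠ 0) → α n x = z (J n x) - (e n (J n x) - x) := by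
    intro n x hn
    simp only [hαdef]
    rw [if_pos hn]
  have hα_eq0 : ∀ n x, ¬(n ∈ Λ ∧ n ≠ 0) → α n x = z x := by
    intro n x hn
    simp only [hαdef]
    rw [if_neg hn]
  -- computing α on the pseudo-intersection
  have hJe : ∀ n j, n ≤ j → J n (e n j) = j := by
    intro n j hnj
    refine le_antisymm (hJmin n _ j hnj le_rfl) ?_
    have h := (hJ1 n (e n j)).2
    exact (he n).le_iff_le.mp h
  have hαe : ∀ n j, n ∈ Λ → n ≠ 0 → n ≤ j → α n (e n j) = z j := by
    intro n j h1 h2 hnj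
    rw [hα_eq n (e n j) ⟨h1, h2⟩, hJe n j hnj]
    simp
  -- strict monotonicity
  have hαmono : ∀ n, StrictMono (α n) := by
    intro n
    by_cases hn : n ∈ Λ ∧ n ≠ 0
    · intro x y hxy
      rw [hα_eq n x hn, hα_eq n y hn]
      have hjx := hJ1 n x
      have hjy := hJ1 n y
      have hle : J n x ≤ J n y := hJmin n x _ hjy.1 (le_trans hxy.le hjy.2)
      have h1 : e n (J n x) ≤ z (J n x) := hF1 _ _ hjx.1
      have h2 : e n (J n y) ≤ z (J n y) := hF1 _ _ hjy.1
      rcases eq_or_lt_of_le hle with heq | hlt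
      · have hx2 := hjx.2
        have hy2 := hjy.2
        rw [heq] at hx2 h1 ⊢
        omega
      · have hny1 : n ≤ J n y - 1 := by omega
        have hgap := hF2 n (J n y - 1) hny1
        have hsucc : J n y - 1 + 1 = J n y := by omega
        rw [hsucc] at hgap
        have hyy : e n (J n y - 1) < y := hJlt n y _ (by omega) hny1
        have hmz : z (J n x) ≤ z (J n y - 1) := hzmono.monotone (by omega)
        have hx2 := hjx.2
        have hy2 := hjy.2
        omega
    · intro x y hxy
      rw [hα_eq0 n x hn, hα_eq0 n y hn]
      exact hzmono hxy
  refine ⟨α, fun n _ => hαmono n, ?_⟩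
  intro k hk D hD
  -- the finite "bad" set of indices
  set B : Set ℕ := ⋃ i ∈ Finset.Icc 1 k, ({j | e i j ∉ D i} ∪ Set.Iio i) with hBdef
  have hBfin : B.Finite := by
    refine Set.Finite.biUnion (Finset.finite_toSet _) (fun i hi => ?_)
    simp only [Finset.coe_Icc, Set.mem_Icc] at hi
    exact Set.Finite.union
      (hpe i (hdc hk hi.2) (by omega) (D i) (hD i hi.2)) (Set.finite_Iio i)
  have hJinf : ((D 0) \ B).Infinite :=
    (hD0inf (D 0) (hD 0 (Nat.zero_le k))).diff hBfin
  have hzimg : (z '' (D 0 \ B)).Infinite :=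
    hJinf.image (Set.injOn_of_injective hzmono.injective)
  refine hzimg.mono ?_
  rintro _ ⟨j, ⟨hjD0, hjB⟩, rfl⟩
  simp only [Set.mem_iInter]
  intro i hik
  by_cases hi0 : i = 0
  · subst hi0
    refine ⟨j, hjD0, ?_⟩
    rw [hα_eq0 0 j (fun h => h.2 rfl)]
  · have hiΛ : i ∈ Λ := hdc hk hik
    have hi1 : 1 ≤ i := Nat.one_le_iff_ne_zero.mpr hi0
    have hnotB : j ∉ ({j | e i j ∉ D i} ∪ Set.Iio i) := by
      intro hmem
      exact hjB (Set.mem_biUnion (Finset.mem_Icc.mpr ⟨hi1, hik⟩) hmem)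
    simp only [Set.mem_union, Set.mem_setOf_eq, Set.mem_Iio, not_or, not_lt,
      not_not] at hnotB
    exact ⟨e i j, hnotB.1, hαe i j hiΛ hi0 hnotB.2⟩
end

section
/- Suppose that F is a π-tree on a topological space X and α : ω → ω is a strictly increasing function. Then there exists a π-tree H on X such that α[rise_F(p,U)] ⊆ rise_H(p,U) for all p ∈ X and all neighbourhoods U of p in X. -/
open Set

universe u v

namespace Perestrojka
open FoliageTree

def dig : ℕ → ℕ → List ℕ
  | 0, _ => []
  | 1, j => [j]
  | (d+2), j => j.unpair.1 :: dig (d+1) j.unpair.2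

def undig : List ℕ → ℕ
  | [] => 0
  | [j] => j
  | (a :: b :: r) => Nat.pair a (undig (b :: r))

@[simp] lemma dig_length : ∀ d j, (dig d j).length = d
  | 0, _ => rfl
  | 1, _ => rfl
  | (d+2), j => by simp [dig, dig_length (d+1)]

lemma undig_cons {l : List ℕ} (hl : l ≠ []) (a : ℕ) :
    undig (a :: l) = Nat.pair a (undig l) := by
  cases l with
  | nil => exact absurd rfl hl
  | cons b r => rfl

lemma dig_undig : ∀ h : List ℕ, dig h.length (undig h) = h
  | [] => rfl
  | [j] => rfl
  | (a :: b :: r) => by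
    have ih := dig_undig (b :: r)
    show dig ((b :: r).length + 1) (undig (a :: b :: r)) = a :: b :: r
    have h2 : (b :: r).length + 1 = r.length + 2 := by simp
    rw [undig_cons (by simp) a, h2]
    show (Nat.pair a (undig (b :: r))).unpair.1 ::
        dig (r.length + 1) (Nat.pair a (undig (b :: r))).unpair.2 = a :: b :: r
    rw [Nat.unpair_pair]
    have : r.length + 1 = (b :: r).length := by simp
    rw [this, ih]

lemma undig_dig : ∀ d, 1 ≤ d → ∀ j, undig (dig d j) = j := by
  intro d
  induction d with
  | zero => omega
  | succ d ih =>
    intro _ j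
    cases d with
    | zero => rfl
    | succ d =>
      show undig (j.unpair.1 :: dig (d+1) j.unpair.2) = j
      have hne : dig (d+1) j.unpair.2 ≠ [] := by
        intro h
        have := dig_length (d+1) j.unpair.2
        rw [h] at this; simp at this
      rw [undig_cons hne, ih (by omega), Nat.pair_unpair]

section Decode

variable (m : ℕ → ℕ)

def dstep (s : List ℕ × List ℕ) (i : ℕ) : List ℕ × List ℕ :=
  if s.2.length + 1 = m s.1.length then (s.1 ++ [undig (s.2 ++ [i])], []) else (s.1, s.2 ++ [i])

def decode (t : List ℕ) : List ℕ × List ℕ := t.foldl (dstep m) ([], [])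

def A (n : ℕ) : ℕ := ∑ i ∈ Finset.range n, m i

variable {m}

lemma A_succ (n : ℕ) : A m (n + 1) = A m n + m n := Finset.sum_range_succ m n

lemma A_le {a b : ℕ} (h : a ≤ b) : A m a ≤ A m b :=
  Finset.sum_le_sum_of_subset (Finset.range_subset_range.2 h)

lemma A_mono (hm : ∀ n, 1 ≤ m n) {a b : ℕ} (h : a < b) : A m a < A m b := by
  induction b with
  | zero => omega
  | succ b ih =>
    rw [A_succ]
    rcases Nat.lt_succ_iff_lt_or_eq.1 h with h' | rfl
    · exact lt_of_lt_of_le (ih h') (by have := hm b; omega)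
    · have := hm a; omega

/-- uniqueness of the block decomposition -/
lemma block_unique (hm : ∀ n, 1 ≤ m n) {k r n : ℕ} (hr : r < m k)
    (h1 : A m n ≤ A m k + r) (h2 : A m k + r < A m (n + 1)) : k = n := by
  by_contra hkn
  rcases Nat.lt_or_ge k n with h | h
  · have hle : A m (k + 1) ≤ A m n := A_le (Nat.succ_le_of_lt h)
    rw [A_succ] at hle; omega
  · have hk : n < k := lt_of_le_of_ne h (Ne.symm hkn)
    have hle : A m (n + 1) ≤ A m k := A_le (Nat.succ_le_of_lt hk)
    omega

lemma decode_nil : decode m [] = ([], []) := rfl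

lemma decode_concat (t : List ℕ) (i : ℕ) :
    decode m (t ++ [i]) = dstep m (decode m t) i := by
  unfold decode
  rw [List.foldl_append]
  rfl

lemma decode_snd_lt (hm : ∀ n, 1 ≤ m n) (t : List ℕ) :
    (decode m t).2.length < m (decode m t).1.length := by
  induction t using List.reverseRecOn with
  | nil => simpa [decode_nil] using Nat.lt_of_lt_of_le Nat.zero_lt_one (hm 0)
  | append_singleton t i ih =>
    rw [decode_concat]
    unfold dstep
    split
    · exact Nat.lt_of_lt_of_le Nat.zero_lt_one (hm _)
    · rename_i hne
      simp only [List.length_append, List.length_singleton]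
      rcases Nat.lt_or_ge ((decode m t).2.length + 1) (m (decode m t).1.length) with h | h
      · exact h
      · omega

lemma decode_length (t : List ℕ) :
    t.length = A m (decode m t).1.length + (decode m t).2.length := by
  induction t using List.reverseRecOn with
  | nil => simp [decode_nil, A]
  | append_singleton t i ih =>
    rw [decode_concat]
    unfold dstep
    split
    · rename_i heq
      simp only [List.length_append, List.length_singleton, List.length_nil]
      rw [A_succ]
      omega
    · simp only [List.length_append, List.length_singleton]
      omega

/-- feeding a full block -/
lemma feed_full : ∀ (h : List ℕ) (v g : List ℕ), h ≠ [] →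
    g.length + h.length = m v.length →
    h.foldl (dstep m) (v, g) = (v ++ [undig (g ++ h)], []) := by
  intro h
  induction h with
  | nil => intro v g hne; exact absurd rfl hne
  | cons i h ih =>
    intro v g _ hlen
    cases h with
    | nil =>
      simp only [List.foldl_cons, List.foldl_nil]
      unfold dstep
      rw [if_pos (by simpa using hlen)]
    | cons b r =>
      simp only [List.foldl_cons]
      have hlt : g.length + 1 < m v.length := by
        simp only [List.length_cons] at hlen; omega
      have hd : dstep m (v, g) i = (v, g ++ [i]) := by
        unfold dstep; rw [if_neg (by simp; omega)]
      rw [hd]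
      have h2 := ih v (g ++ [i]) (by simp) (by simp at hlen ⊢; omega)
      rw [List.foldl_cons] at h2
      rw [h2]
      simp

lemma feed_partial : ∀ (h : List ℕ) (v g : List ℕ),
    g.length + h.length < m v.length →
    h.foldl (dstep m) (v, g) = (v, g ++ h) := by
  intro h
  induction h with
  | nil => intro v g _; simp
  | cons i h ih =>
    intro v g hlen
    simp only [List.foldl_cons]
    unfold dstep
    rw [if_neg (by simp at hlen ⊢; omega)]
    have := ih v (g ++ [i]) (by simp at hlen ⊢; omega)
    unfold dstep at this
    simpa [List.append_assoc] using this

lemma exists_enc (hm : ∀ n, 1 ≤ m n) : ∀ v : List ℕ, ∃ t : List ℕ,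
    decode m t = (v, []) ∧ t.length = A m v.length := by
  intro v
  induction v using List.reverseRecOn with
  | nil => exact ⟨[], decode_nil, by simp [A]⟩
  | append_singleton v j ih =>
    obtain ⟨t, ht, hlen⟩ := ih
    refine ⟨t ++ dig (m v.length) j, ?_, ?_⟩
    · unfold decode
      rw [List.foldl_append]
      show (dig (m v.length) j).foldl (dstep m) (decode m t) = _
      rw [ht]
      have hne : dig (m v.length) j ≠ [] := by
        intro h; have := dig_length (m v.length) j; rw [h] at this
        simp at this; have := hm v.length; omega
      rw [feed_full _ v [] hne (by simp [dig_length])]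
      simp [undig_dig _ (hm v.length) j]
    · simp [dig_length, hlen, A_succ]

/-- evolution of decode along extensions -/
lemma decode_evolve : ∀ (s : List ℕ) (v g : List ℕ),
    v <+: (s.foldl (dstep m) (v, g)).1 ∧
    ((s.foldl (dstep m) (v, g)).1 = v → g <+: (s.foldl (dstep m) (v, g)).2) ∧
    (∀ j, v ++ [j] <+: (s.foldl (dstep m) (v, g)).1 → g <+: dig (m v.length) j) := by
  intro s
  induction s with
  | nil =>
    intro v g
    refine ⟨List.prefix_refl _, fun _ => List.prefix_refl _, fun j h => ?_⟩
    exact absurd (h.length_le) (by simp)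
  | cons i s ih =>
    intro v g
    simp only [List.foldl_cons]
    by_cases hc : g.length + 1 = m v.length
    · have hd : dstep m (v, g) i = (v ++ [undig (g ++ [i])], []) := by
        unfold dstep; rw [if_pos (by simpa using hc)]
      rw [hd]
      set j0 := undig (g ++ [i]) with hj0
      have hdig : dig (m v.length) j0 = g ++ [i] := by
        have := dig_undig (g ++ [i])
        rwa [show (g ++ [i]).length = m v.length by simpa using hc] at this
      obtain ⟨h1, h2, h3⟩ := ih (v ++ [j0]) []
      refine ⟨(List.prefix_append v [j0]).trans h1, ?_, ?_⟩
      · intro hv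
        exfalso
        have := h1.length_le
        rw [hv] at this
        simp at this
      · intro j hj
        have hj0j : j = j0 := by
          have hcomp := List.prefix_or_prefix_of_prefix hj h1
          have : v ++ [j] = v ++ [j0] := by
            rcases hcomp with h | h
            · exact h.eq_of_length (by simp)
            · exact (h.eq_of_length (by simp)).symm
          simpa using List.append_cancel_left this
        rw [hj0j, hdig]
        exact List.prefix_append g [i]
    · have hd : dstep m (v, g) i = (v, g ++ [i]) := by
        unfold dstep; rw [if_neg (by simpa using hc)]
      rw [hd]
      obtain ⟨h1, h2, h3⟩ := ih v (g ++ [i])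
      refine ⟨h1, ?_, ?_⟩
      · intro hv
        exact (List.prefix_append g [i]).trans (h2 hv)
      · intro j hj
        exact (List.prefix_append g [i]).trans (h3 j hj)

end Decode
lemma seqLT_length {a b : List ℕ} (h : seqLT a b) : a.length < b.length :=
  Nat.lt_of_le_of_ne h.1.length_le fun he => h.2 (h.1.eq_of_length he)

lemma seqLT_of_prefix {a b : List ℕ} (h : a <+: b) (hne : a ≠ b) : seqLT a b := ⟨h, hne⟩

lemma prefix_seqLT_or_eq {a b : List ℕ} (h : a <+: b) : seqLT a b ∨ a = b := by
  by_cases he : a = b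
  · exact Or.inr he
  · exact Or.inl ⟨h, he⟩

lemma seqLT_append_singleton (t : List ℕ) (i : ℕ) : seqLT t (t ++ [i]) :=
  ⟨List.prefix_append t [i], fun h => by simpa using congrArg List.length h⟩

lemma seqLT_trans {a b c : List ℕ} (h1 : seqLT a b) (h2 : seqLT b c) : seqLT a c :=
  ⟨h1.1.trans h2.1, fun he => by
    have h3 := seqLT_length h1; have h4 := seqLT_length h2
    rw [he] at h3; omega⟩

variable {X : Type u}

def listTree (L : List ℕ → Set X) : FoliageTree X where
  Node := List ℕ
  lt := seqLT
  lt_irrefl a h := h.2 rfl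
  lt_trans h1 h2 := seqLT_trans h1 h2
  wellOrdered a :=
    { trichotomous := by
        rintro ⟨x, hx⟩ ⟨y, hy⟩ hn1 hn2
        rcases List.prefix_or_prefix_of_prefix hx.1 hy.1 with h | h
        · rcases prefix_seqLT_or_eq h with h | h
          · exact absurd h hn1
          · exact Subtype.ext h
        · rcases prefix_seqLT_or_eq h with h | h
          · exact absurd h hn2
          · exact Subtype.ext h.symm
      wf := Subrelation.wf
          (fun {x y} h => seqLT_length h)
          (InvImage.wf (fun x : {b : List ℕ // seqLT b a} => x.1.length)
            Nat.lt_wfRel.wf) }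
  leaf := L

@[simp] lemma listTree_leaf (L : List ℕ → Set X) (t : List ℕ) :
    (listTree L).leaf t = L t := rfl

lemma listTree_mem_sons {L : List ℕ → Set X} {t s : List ℕ} :
    s ∈ (listTree L).Sons t ↔ ∃ i, s = t ++ [i] := by
  constructor
  · rintro ⟨h1, h2⟩
    obtain ⟨u, hu⟩ := h1.1
    cases u with
    | nil => exact absurd (by simpa using hu) h1.2
    | cons i u' =>
      cases u' with
      | nil => exact ⟨i, hu.symm⟩
      | cons b r =>
        exfalso
        refine h2 ⟨t ++ [i], seqLT_append_singleton t i, ?_⟩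
        refine ⟨⟨b :: r, by rw [← hu]; simp⟩, fun he => ?_⟩
        have := congrArg List.length he
        rw [← hu] at this; simp at this
  · rintro ⟨i, rfl⟩
    refine ⟨seqLT_append_singleton t i, ?_⟩
    rintro ⟨u, hu1, hu2⟩
    have := seqLT_length hu1; have := seqLT_length hu2
    simp at this; omega

lemma listTree_height (L : List ℕ → Set X) (t : List ℕ) :
    (listTree L).height t = t.length := by
  have iso : (fun (x y : {b : List ℕ // seqLT b t}) => seqLT x.1 y.1) ≃r
      ((· < ·) : Fin t.length → Fin t.length → Prop) := by
    refine ⟨⟨fun u => ⟨u.1.length, seqLT_length u.2⟩,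
      fun i => ⟨t.take i.1, ⟨List.take_prefix _ _, fun h => by
        have := congrArg List.length h
        simp at this; omega⟩⟩, ?_, ?_⟩, ?_⟩
    · rintro ⟨u, hu⟩
      exact Subtype.ext (List.prefix_iff_eq_take.1 hu.1).symm
    · rintro ⟨i, hi⟩
      apply Fin.ext
      simp
      omega
    · rintro ⟨u, hu⟩ ⟨w, hw⟩
      show u.length < w.length ↔ seqLT u w
      constructor
      · intro hlen
        rcases List.prefix_or_prefix_of_prefix hu.1 hw.1 with h | h
        · exact ⟨h, fun he => by rw [he] at hlen; omega⟩
        · have := h.length_le; omega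
      · exact seqLT_length
  have h1 : (listTree L).height t = @Ordinal.type (Fin t.length) (· < ·) _ := by
    unfold FoliageTree.height
    exact @Ordinal.type_eq _ _ _ _ ((listTree L).wellOrdered t) _ |>.2 ⟨iso⟩
  rw [h1, Ordinal.type_fin]

lemma listTree_shoot_iff {L : List ℕ → Set X} {t : List ℕ} {S : Set X} :
    S ∈ (listTree L).shoot t ↔
      ∃ J : Set ℕ, (Jᶜ : Set ℕ).Finite ∧ S = ⋃ j ∈ J, L (t ++ [j]) := by
  have hinj : Function.Injective (fun j : ℕ => t ++ [j]) := by
    intro a b h; simpa using List.append_cancel_left h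
  have hsons : (listTree L).Sons t = (fun j : ℕ => t ++ [j]) '' Set.univ := by
    ext s; exact (listTree_mem_sons (L := L)).trans
      ⟨fun ⟨i, h⟩ => ⟨i, trivial, h.symm⟩, fun ⟨i, _, h⟩ => ⟨i, h.symm⟩⟩
  constructor
  · rintro ⟨C, hC1, hC2, rfl⟩
    refine ⟨{j | t ++ [j] ∈ C}, ?_, ?_⟩
    · have : (fun j : ℕ => t ++ [j]) '' {j | t ++ [j] ∈ C}ᶜ ⊆ (listTree L).Sons t \ C := by
        rintro s ⟨j, hj, rfl⟩
        exact ⟨listTree_mem_sons.2 ⟨j, rfl⟩, hj⟩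
      have hfin := hC2.subset this
      exact (Set.Finite.of_finite_image hfin (hinj.injOn)).subset (by intro x hx; exact hx)
    · ext p
      simp only [Set.mem_iUnion]
      constructor
      · rintro ⟨s, hs, hp⟩
        obtain ⟨i, rfl⟩ := listTree_mem_sons.1 (hC1 hs)
        exact ⟨i, hs, hp⟩
      · rintro ⟨j, hj, hp⟩
        exact ⟨t ++ [j], hj, hp⟩
  · rintro ⟨J, hJ, rfl⟩
    refine ⟨(fun j : ℕ => t ++ [j]) '' J, ?_, ?_, ?_⟩
    · rintro s ⟨j, _, rfl⟩; exact listTree_mem_sons.2 ⟨j, rfl⟩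
    · have : (listTree L).Sons t \ (fun j : ℕ => t ++ [j]) '' J ⊆
          (fun j : ℕ => t ++ [j]) '' Jᶜ := by
        rintro s ⟨hs, hs2⟩
        obtain ⟨i, rfl⟩ := listTree_mem_sons.1 hs
        exact ⟨i, fun hi => hs2 ⟨i, hi, rfl⟩, rfl⟩
      exact (hJ.image _).subset this
    · exact (Set.biUnion_image (f := (fun j : ℕ => t ++ [j] : ℕ → (listTree L).Node)) (s := J)
        (g := (listTree L).leaf)).symm


lemma prefix_mono_of_mono {v : ℕ → List ℕ} (hv : ∀ n, v n <+: v (n+1)) :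
    ∀ {a b : ℕ}, a ≤ b → v a <+: v b := by
  intro a b h
  induction b with
  | zero => rw [Nat.le_zero.1 h]
  | succ b ih =>
    rcases Nat.eq_or_lt_of_le h with rfl | h'
    · exact List.prefix_refl _
    · exact (ih (Nat.lt_succ_iff.1 h')).trans (hv b)

/-- The set of prefixes of a growing sequence of lists is a branch. -/
lemma branch_of_mono (L : List ℕ → Set X) (v : ℕ → List ℕ)
    (hv : ∀ n, v n <+: v (n+1)) (hl : ∀ n, n ≤ (v n).length) :
    (listTree L).IsBranch {u : List ℕ | ∃ n, u <+: v n} := by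
  constructor
  · rintro x ⟨a, hx⟩ y ⟨b, hy⟩
    have hx' : x <+: v (max a b) := hx.trans (prefix_mono_of_mono hv (le_max_left a b))
    have hy' : y <+: v (max a b) := hy.trans (prefix_mono_of_mono hv (le_max_right a b))
    rcases List.prefix_or_prefix_of_prefix hx' hy' with h | h
    · rcases prefix_seqLT_or_eq h with h | h
      · exact Or.inl h
      · exact Or.inr (Or.inl h)
    · rcases prefix_seqLT_or_eq h with h | h
      · exact Or.inr (Or.inr h)
      · exact Or.inr (Or.inl h.symm)
  · intro C hC hBC
    apply Set.Subset.antisymm hBC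
    intro c hc
    set n := c.length + 1 with hn
    have hvn : v n ∈ C := hBC ⟨n, List.prefix_refl _⟩
    rcases hC c hc (v n) hvn with h | h | h
    · exact ⟨n, h.1⟩
    · exfalso; have := hl n; rw [← h] at this; omega
    · exfalso; have h1 := seqLT_length h; have := hl n; omega

/-- Every branch of a list tree is the set of prefixes of a function. -/
lemma branch_structure {L : List ℕ → Set X} {B : Set (List ℕ)}
    (hB : (listTree L).IsBranch B) :
    ∃ f : ℕ → List ℕ, (∀ k, (f k).length = k) ∧ (∀ k, f k <+: f (k+1)) ∧
      B = Set.range f := by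
  have hins : ∀ u : List ℕ, (∀ c ∈ B, seqLT u c ∨ u = c ∨ seqLT c u) → u ∈ B := by
    intro u hu
    have hchain : (listTree L).IsChainN (insert u B) := by
      rintro x hx y hy
      rcases hx with rfl | hx
      · rcases hy with rfl | hy
        · exact Or.inr (Or.inl rfl)
        · exact hu y hy
      · rcases hy with rfl | hy
        · rcases hu x hx with h | h | h
          · exact Or.inr (Or.inr h)
          · exact Or.inr (Or.inl h.symm)
          · exact Or.inl h
        · exact hB.1 x hx y hy
    have := hB.2 _ hchain (Set.subset_insert u B)
    rw [this]; exact Set.mem_insert u B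
  have hpre : ∀ u b, b ∈ B → u <+: b → u ∈ B := by
    intro u b hb hub
    apply hins
    intro c hc
    rcases hB.1 b hb c hc with h | h | h
    · rcases prefix_seqLT_or_eq (hub.trans h.1) with h' | h'
      · exact Or.inl h'
      · exact Or.inr (Or.inl h')
    · rw [← h]
      rcases prefix_seqLT_or_eq hub with h' | h'
      · exact Or.inl h'
      · exact Or.inr (Or.inl h')
    · rcases List.prefix_or_prefix_of_prefix h.1 hub with h' | h'
      · rcases prefix_seqLT_or_eq h' with h'' | h''
        · exact Or.inr (Or.inr h'')
        · exact Or.inr (Or.inl h''.symm)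
      · rcases prefix_seqLT_or_eq h' with h'' | h''
        · exact Or.inl h''
        · exact Or.inr (Or.inl h'')
  have hnil : [] ∈ B := by
    apply hins
    intro c _
    rcases prefix_seqLT_or_eq (List.nil_prefix (l := c)) with h | h
    · exact Or.inl h
    · exact Or.inr (Or.inl h)
  have hex : ∀ k, ∃ b ∈ B, b.length = k := by
    intro k
    induction k with
    | zero => exact ⟨[], hnil, rfl⟩
    | succ k ih =>
      obtain ⟨b, hb, hbl⟩ := ih
      have hgt : ∃ c ∈ B, k < c.length := by
        by_contra hno
        push_neg at hno
        have hu : b ++ [0] ∈ B := by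
          apply hins
          intro c hc
          rcases hB.1 c hc b hb with h | h | h
          · exact Or.inr (Or.inr (seqLT_trans h (seqLT_append_singleton b 0)))
          · exact Or.inr (Or.inr (h ▸ seqLT_append_singleton b 0))
          · exfalso; have := seqLT_length h; have := hno c hc; omega
        have := hno _ hu
        simp [hbl] at this
      obtain ⟨c, hc, hcl⟩ := hgt
      refine ⟨c.take (k+1), hpre _ c hc (List.take_prefix _ _), by simp; omega⟩
  have huniq : ∀ b b', b ∈ B → b' ∈ B → b.length = b'.length → b = b' := by
    intro b b' hb hb' hlen
    rcases hB.1 b hb b' hb' with h | h | h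
    · exfalso; have := seqLT_length h; omega
    · exact h
    · exfalso; have := seqLT_length h; omega
  choose f hf hfl using hex
  refine ⟨f, hfl, ?_, ?_⟩
  · intro k
    rcases hB.1 _ (hf k) _ (hf (k+1)) with h | h | h
    · exact h.1
    · exfalso; have := congrArg List.length h; rw [hfl, hfl] at this; omega
    · exfalso; have := seqLT_length h; rw [hfl, hfl] at this; omega
  · ext b
    constructor
    · intro hb
      exact ⟨b.length, (huniq _ _ (hf b.length) hb (hfl b.length)).symm ▸ rfl⟩
    · rintro ⟨k, rfl⟩
      exact hf k


section HTree

variable {X : Type u} (m : ℕ → ℕ) (L : List ℕ → Set X)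

def HLeaf (t : List ℕ) : Set X :=
  ⋃ j, ⋃ (_ : (decode m t).2 <+: dig (m (decode m t).1.length) j),
    L ((decode m t).1 ++ [j])

variable {m} {L}

lemma mem_HLeaf {t : List ℕ} {p : X} :
    p ∈ HLeaf m L t ↔ ∃ j, (decode m t).2 <+: dig (m (decode m t).1.length) j ∧
      p ∈ L ((decode m t).1 ++ [j]) := by
  simp [HLeaf]

lemma HLeaf_full (h1 : ∀ w, L w = ⋃ j, L (w ++ [j])) {t v : List ℕ}
    (ht : decode m t = (v, [])) : HLeaf m L t = L v := by
  unfold HLeaf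
  rw [ht]
  rw [h1 v]
  ext p
  simp

lemma mem_HLeaf_concat (hm : ∀ n, 1 ≤ m n) (h1 : ∀ w, L w = ⋃ j, L (w ++ [j]))
    {t : List ℕ} (i : ℕ) {p : X} :
    p ∈ HLeaf m L (t ++ [i]) ↔
      ∃ j, (decode m t).2 ++ [i] <+: dig (m (decode m t).1.length) j ∧
        p ∈ L ((decode m t).1 ++ [j]) := by
  set v := (decode m t).1 with hv
  set g := (decode m t).2 with hg
  have hd := decode_concat (m := m) t i
  by_cases hc : g.length + 1 = m v.length
  · have hdec : decode m (t ++ [i]) = (v ++ [undig (g ++ [i])], []) := by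
      rw [hd]; unfold dstep; rw [if_pos (by rw [← hv, ← hg]; exact hc)]
    set j0 := undig (g ++ [i]) with hj0
    have hdigj0 : dig (m v.length) j0 = g ++ [i] := by
      have := dig_undig (g ++ [i])
      rwa [show (g ++ [i]).length = m v.length by simpa using hc] at this
    rw [mem_HLeaf, hdec]
    simp only
    constructor
    · rintro ⟨j', _, hp⟩
      refine ⟨j0, by rw [hdigj0], ?_⟩
      rw [h1 (v ++ [j0])]
      exact Set.mem_iUnion.2 ⟨j', hp⟩
    · rintro ⟨j, hpre, hp⟩
      have hj : j = j0 := by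
        have hlen : (g ++ [i]).length = (dig (m v.length) j).length := by
          simp [dig_length]; omega
        have heq : dig (m v.length) j = g ++ [i] := (hpre.eq_of_length hlen).symm
        have := undig_dig (m v.length) (by omega) j
        rw [heq] at this
        exact this.symm
      rw [hj] at hp
      rw [h1 (v ++ [j0])] at hp
      obtain ⟨j', hp⟩ := Set.mem_iUnion.1 hp
      exact ⟨j', List.nil_prefix, hp⟩
  · have hdec : decode m (t ++ [i]) = (v, g ++ [i]) := by
      rw [hd]; unfold dstep; rw [if_neg (by rw [← hv, ← hg]; exact hc)]
    rw [mem_HLeaf, hdec]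

lemma prefix_snoc {u w : List ℕ} (h : u <+: w) (hlen : u.length < w.length) :
    ∃ a, u ++ [a] <+: w := by
  obtain ⟨s, rfl⟩ := h
  cases s with
  | nil => simp at hlen
  | cons a s => exact ⟨a, ⟨s, by simp⟩⟩

lemma HLeaf_union (hm : ∀ n, 1 ≤ m n) (h1 : ∀ w, L w = ⋃ j, L (w ++ [j]))
    (t : List ℕ) : HLeaf m L t = ⋃ i, HLeaf m L (t ++ [i]) := by
  ext p
  simp only [Set.mem_iUnion]
  constructor
  · intro hp
    obtain ⟨j, hpre, hp⟩ := mem_HLeaf.1 hp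
    have hlt : (decode m t).2.length < (dig (m (decode m t).1.length) j).length := by
      rw [dig_length]; exact decode_snd_lt hm t
    obtain ⟨a, ha⟩ := prefix_snoc hpre hlt
    exact ⟨a, (mem_HLeaf_concat hm h1 a).2 ⟨j, ha, hp⟩⟩
  · rintro ⟨i, hp⟩
    obtain ⟨j, hpre, hp⟩ := (mem_HLeaf_concat hm h1 i).1 hp
    exact mem_HLeaf.2 ⟨j, (List.prefix_append _ [i]).trans hpre, hp⟩

lemma HLeaf_disjoint (hm : ∀ n, 1 ≤ m n) (h1 : ∀ w, L w = ⋃ j, L (w ++ [j]))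
    (h2 : ∀ w (j j' : ℕ), j ≠ j' → Disjoint (L (w ++ [j])) (L (w ++ [j'])))
    (t : List ℕ) {i i' : ℕ} (h : i ≠ i') :
    Disjoint (HLeaf m L (t ++ [i])) (HLeaf m L (t ++ [i'])) := by
  rw [Set.disjoint_left]
  intro p hp hp'
  obtain ⟨j, hpre, hpj⟩ := (mem_HLeaf_concat hm h1 i).1 hp
  obtain ⟨j', hpre', hpj'⟩ := (mem_HLeaf_concat hm h1 i').1 hp'
  by_cases hjj : j = j'
  · subst hjj
    have : (decode m t).2 ++ [i] = (decode m t).2 ++ [i'] := by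
      rcases List.prefix_or_prefix_of_prefix hpre hpre' with hcomp | hcomp
      · exact hcomp.eq_of_length (by simp)
      · exact (hcomp.eq_of_length (by simp)).symm
    exact h (by simpa using List.append_cancel_left this)
  · exact Set.disjoint_left.1 (h2 _ j j' hjj) hpj hpj'

lemma shoot_key (hm : ∀ n, 1 ≤ m n) (h1 : ∀ w, L w = ⋃ j, L (w ++ [j]))
    (h5 : ∀ w, (L w).Nonempty) (t : List ℕ) (U : Set X)
    (hsh : PiRefines ((listTree L).shoot (decode m t).1) {U}) :
    PiRefines ((listTree (HLeaf m L)).shoot t) {U} := by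
  intro D hD hDne
  rw [Set.mem_singleton_iff] at hD
  subst hD
  obtain ⟨G, hG, hGne, hGU⟩ := hsh D rfl hDne
  obtain ⟨J, hJfin, rfl⟩ := listTree_shoot_iff.1 hG
  set v := (decode m t).1 with hv
  set g := (decode m t).2 with hg
  set d := m v.length with hdd
  have hgd : g.length < d := decode_snd_lt hm t
  set I : Set ℕ := {i | ∀ j, g ++ [i] <+: dig d j → j ∈ J} with hI
  have hIc : (Iᶜ : Set ℕ).Finite := by
    have hsub : (Iᶜ : Set ℕ) ⊆ (fun j => (dig d j).getD g.length 0) '' Jᶜ := by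
      intro i hi
      simp only [hI, Set.mem_compl_iff, Set.mem_setOf_eq, not_forall] at hi
      obtain ⟨j, hpre, hjJ⟩ := hi
      refine ⟨j, hjJ, ?_⟩
      have hlen : g.length < (dig d j).length := by rw [dig_length]; exact hgd
      have hget := hpre.getElem (i := g.length) (by simp)
      show (dig d j).getD g.length 0 = i
      rw [List.getD_eq_getElem _ _ hlen, ← hget]
      simp
    exact (hJfin.image _).subset hsub
  refine ⟨⋃ i ∈ I, HLeaf m L (t ++ [i]), listTree_shoot_iff.2 ⟨I, hIc, rfl⟩, ?_, ?_⟩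
  · have hIne : I.Nonempty := by
      rcases Set.eq_empty_or_nonempty I with h | h
      · exfalso
        have : (Iᶜ : Set ℕ) = Set.univ := by rw [h]; simp
        rw [this] at hIc
        exact Set.infinite_univ hIc
      · exact h
    obtain ⟨i, hi⟩ := hIne
    set padded := g ++ i :: List.replicate (d - g.length - 1) 0 with hpad
    have hpadlen : padded.length = d := by simp [hpad]; omega
    set jp := undig padded with hjp
    have hdigjp : dig d jp = padded := by
      have := dig_undig padded
      rwa [hpadlen] at this
    obtain ⟨p0, hp0⟩ := h5 (v ++ [jp])
    refine ⟨p0, Set.mem_biUnion hi ?_⟩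
    refine (mem_HLeaf_concat hm h1 i).2 ⟨jp, ?_, hp0⟩
    rw [← hv, ← hg, ← hdd, hdigjp, hpad]
    exact ⟨List.replicate (d - g.length - 1) 0, by simp⟩
  · intro p hp
    simp only [Set.mem_iUnion] at hp
    obtain ⟨i, hi, hpi⟩ := hp
    obtain ⟨j, hpre, hpj⟩ := (mem_HLeaf_concat hm h1 i).1 hpi
    exact hGU (Set.mem_biUnion (hi j hpre) hpj)

end HTree

section Transfer

variable {X : Type u} {F : FoliageTree X} (e : F.lt ≃r seqLT)

/-- the leaf function of the list model of `F`. -/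
def Lf : List ℕ → Set X := fun w => F.leaf (e.symm w)

lemma Lf_apply_e (x : F.Node) : Lf e (e x) = F.leaf x := by
  simp [Lf]

lemma lt_iff {x y : F.Node} : F.lt x y ↔ seqLT (e x) (e y) := e.map_rel_iff.symm

lemma mem_sons_iff {x s : F.Node} :
    s ∈ F.Sons x ↔ (e s) ∈ (listTree (Lf e)).Sons (e x) := by
  show (F.lt x s ∧ ¬ ∃ t, F.lt x t ∧ F.lt t s) ↔
    (seqLT (e x) (e s) ∧ ¬ ∃ u, seqLT (e x) u ∧ seqLT u (e s))
  rw [← lt_iff e]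
  refine and_congr_right fun _ => not_congr ⟨?_, ?_⟩
  · rintro ⟨t, h1, h2⟩
    exact ⟨e t, (lt_iff e).1 h1, (lt_iff e).1 h2⟩
  · rintro ⟨u, h1, h2⟩
    refine ⟨e.symm u, ?_, ?_⟩
    · rw [lt_iff e, e.apply_symm_apply]; exact h1
    · rw [lt_iff e, e.apply_symm_apply]; exact h2

lemma nonmax (w : List ℕ) : ¬ F.IsMaxNode (e.symm w) := by
  intro h
  refine h ⟨e.symm (w ++ [0]), ?_⟩
  rw [lt_iff e, e.apply_symm_apply, e.apply_symm_apply]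
  exact seqLT_append_singleton w 0

lemma Lf_union (hLS : F.LocallyStrict) (w : List ℕ) :
    Lf e w = ⋃ j, Lf e (w ++ [j]) := by
  obtain ⟨hun, _⟩ := hLS (e.symm w) (nonmax e w)
  show F.leaf (e.symm w) = _
  rw [hun]
  ext p
  simp only [Set.mem_iUnion]
  constructor
  · rintro ⟨s, hs, hp⟩
    have hmem := (mem_sons_iff e).1 hs
    rw [e.apply_symm_apply] at hmem
    obtain ⟨i, hi⟩ := listTree_mem_sons.1 hmem
    refine ⟨i, ?_⟩
    rw [← hi, Lf_apply_e]
    exact hp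
  · rintro ⟨j, hp⟩
    refine ⟨e.symm (w ++ [j]), ?_, hp⟩
    rw [mem_sons_iff e, e.apply_symm_apply, e.apply_symm_apply]
    exact listTree_mem_sons.2 ⟨j, rfl⟩

lemma Lf_disjoint (hLS : F.LocallyStrict) (w : List ℕ) {j j' : ℕ} (h : j ≠ j') :
    Disjoint (Lf e (w ++ [j])) (Lf e (w ++ [j'])) := by
  obtain ⟨_, hdisj⟩ := hLS (e.symm w) (nonmax e w)
  have hmem : ∀ i : ℕ, e.symm (w ++ [i]) ∈ F.Sons (e.symm w) := by
    intro i
    rw [mem_sons_iff e, e.apply_symm_apply, e.apply_symm_apply]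
    exact listTree_mem_sons.2 ⟨i, rfl⟩
  refine hdisj _ (hmem j) _ (hmem j') fun he => h ?_
  have := congrArg e he
  rw [e.apply_symm_apply, e.apply_symm_apply] at this
  simpa using List.append_cancel_left this

lemma Lf_univ (hr : ∃ r, F.IsRoot r ∧ F.leaf r = Set.univ) : Lf e [] = Set.univ := by
  obtain ⟨r, hroot, hleaf⟩ := hr
  have : r = e.symm [] := by
    rcases hroot (e.symm []) with h | h
    · exact h
    · exfalso
      rw [lt_iff e, e.apply_symm_apply] at h
      have := seqLT_length h
      simp at this
  show F.leaf (e.symm []) = Set.univ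
  rw [← this, hleaf]

lemma branch_transfer {B : Set (List ℕ)} (hB : (listTree (Lf e)).IsBranch B) :
    F.IsBranch (e.symm '' B) := by
  constructor
  · rintro x ⟨u, hu, rfl⟩ y ⟨u', hu', rfl⟩
    rcases hB.1 u hu u' hu' with h | h | h
    · exact Or.inl (by rw [lt_iff e, e.apply_symm_apply, e.apply_symm_apply]; exact h)
    · exact Or.inr (Or.inl (by rw [h]))
    · exact Or.inr (Or.inr (by rw [lt_iff e, e.apply_symm_apply, e.apply_symm_apply]; exact h))
  · intro C hC hBC
    have hchain : (listTree (Lf e)).IsChainN (e '' C) := by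
      rintro u ⟨x, hx, rfl⟩ u' ⟨y, hy, rfl⟩
      rcases hC x hx y hy with h | h | h
      · exact Or.inl ((lt_iff e).1 h)
      · exact Or.inr (Or.inl (by rw [h]))
      · exact Or.inr (Or.inr ((lt_iff e).1 h))
    have hBsub : B ⊆ e '' C := by
      intro u hu
      refine ⟨e.symm u, hBC ⟨u, hu, rfl⟩, e.apply_symm_apply u⟩
    have := hB.2 _ hchain hBsub
    rw [this]
    ext x
    constructor
    · rintro ⟨_, ⟨y, hy, rfl⟩, rfl⟩
      convert hy using 1
      exact e.symm_apply_apply y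
    · intro hx
      exact ⟨e x, ⟨x, hx, rfl⟩, e.symm_apply_apply x⟩

lemma Lf_branch_inter (hSB : F.StrictBranches) {B : Set (List ℕ)}
    (hB : (listTree (Lf e)).IsBranch B) : ∃ q, ⋂ u ∈ B, Lf e u = {q} := by
  obtain ⟨q, hq⟩ := hSB.2 _ (branch_transfer e hB)
  refine ⟨q, ?_⟩
  rw [← hq, Set.biInter_image]
  rfl

lemma Lf_nonempty (hSB : F.StrictBranches) (w : List ℕ) : (Lf e w).Nonempty := by
  have hmono : ∀ n, w ++ List.replicate n 0 <+: w ++ List.replicate (n+1) 0 := by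
    intro n
    rw [List.replicate_succ', ← List.append_assoc]
    exact List.prefix_append _ _
  have hbr := branch_of_mono (Lf e) (fun n => w ++ List.replicate n 0) hmono
    (fun n => by simp)
  obtain ⟨q, hq⟩ := Lf_branch_inter e hSB hbr
  refine ⟨q, ?_⟩
  have hqmem : q ∈ ⋂ u ∈ {u : List ℕ | ∃ n, u <+: w ++ List.replicate n 0}, Lf e u := by
    exact (Set.ext_iff.1 hq q).2 rfl
  have hw : w ∈ {u : List ℕ | ∃ n, u <+: w ++ List.replicate n 0} :=
    ⟨0, by simp⟩
  exact Set.biInter_subset_of_mem hw hqmem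

lemma height_transfer (x : F.Node) : F.height x = ((e x).length : Ordinal) := by
  have iso : (fun a b : {b : F.Node // F.lt b x} => F.lt a.1 b.1) ≃r
      (fun a b : {u : List ℕ // seqLT u (e x)} => seqLT a.1 b.1) :=
    { toFun := fun u => ⟨e u.1, (lt_iff e).1 u.2⟩
      invFun := fun w => ⟨e.symm w.1, by
        rw [lt_iff e, e.apply_symm_apply]; exact w.2⟩
      left_inv := fun u => Subtype.ext (e.symm_apply_apply u.1)
      right_inv := fun w => Subtype.ext (e.apply_symm_apply w.1)
      map_rel_iff' := fun {a b} => e.map_rel_iff }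
  have h1 : F.height x = (listTree (Lf e)).height (e x) := by
    unfold FoliageTree.height
    exact (@Ordinal.type_eq _ _ _ _ (F.wellOrdered x)
      ((listTree (Lf e)).wellOrdered (e x))).2 ⟨iso⟩
  rw [h1, listTree_height]

lemma shoot_transfer (x : F.Node) :
    F.shoot x ⊆ (listTree (Lf e)).shoot (e x) := by
  rintro S ⟨C, hC1, hC2, rfl⟩
  refine ⟨e '' C, ?_, ?_, ?_⟩
  · rintro u ⟨s, hs, rfl⟩
    have := (mem_sons_iff e).1 (hC1 hs)
    exact this
  · have hsub : (listTree (Lf e)).Sons (e x) \ e '' C ⊆ e '' (F.Sons x \ C) := by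
      rintro u ⟨hu1, hu2⟩
      refine ⟨e.symm u, ⟨?_, fun hc => hu2 ⟨_, hc, e.apply_symm_apply u⟩⟩, e.apply_symm_apply u⟩
      rw [mem_sons_iff e]
      exact (congrArg (· ∈ (listTree (Lf e)).Sons (e x)) (e.apply_symm_apply u)).mpr hu1
    exact (hC2.image e).subset hsub
  · refine Eq.trans ?_ (Set.biUnion_image (f := (e : F.Node → (listTree (Lf e)).Node)) (s := C)
      (g := (listTree (Lf e)).leaf)).symm
    apply Set.iUnion₂_congr
    intro s _
    rw [listTree_leaf, Lf_apply_e]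

end Transfer

section Assembly

variable {X : Type u}

lemma decode_append (m : ℕ → ℕ) (t s : List ℕ) :
    decode m (t ++ s) = s.foldl (dstep m) (decode m t) := by
  unfold decode
  rw [List.foldl_append]

lemma sons_union (L' : List ℕ → Set X) (t : List ℕ) :
    ⋃ s ∈ (listTree L').Sons t, (listTree L').leaf s = ⋃ i, L' (t ++ [i]) := by
  ext p
  simp only [Set.mem_iUnion, listTree_leaf]
  constructor
  · rintro ⟨s, hs, hp⟩
    obtain ⟨i, rfl⟩ := listTree_mem_sons.1 hs
    exact ⟨i, hp⟩
  · rintro ⟨i, hp⟩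
    exact ⟨t ++ [i], listTree_mem_sons.2 ⟨i, rfl⟩, hp⟩

lemma L_antitone {L : List ℕ → Set X} (h1 : ∀ w, L w = ⋃ j, L (w ++ [j])) :
    ∀ (s u : List ℕ), L (u ++ s) ⊆ L u := by
  intro s
  induction s using List.reverseRecOn with
  | nil => intro u; simp
  | append_singleton s i ih =>
    intro u
    rw [← List.append_assoc]
    refine Set.Subset.trans ?_ (ih u)
    rw [h1 (u ++ s)]
    exact Set.subset_iUnion (fun j => L ((u ++ s) ++ [j])) i

lemma L_antitone' {L : List ℕ → Set X} (h1 : ∀ w, L w = ⋃ j, L (w ++ [j]))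
    {u w : List ℕ} (h : u <+: w) : L w ⊆ L u := by
  obtain ⟨s, rfl⟩ := h
  exact L_antitone h1 s u

lemma piRefines_mono {γ γ' δ : Set (Set X)} (h : γ ⊆ γ') (hp : PiRefines γ δ) :
    PiRefines γ' δ := by
  intro D hD hDne
  obtain ⟨G, hG, hg2, hg3⟩ := hp D hD hDne
  exact ⟨G, h hG, hg2, hg3⟩

lemma H_strict_branches {m : ℕ → ℕ} {L : List ℕ → Set X} (hm : ∀ n, 1 ≤ m n)
    (h1 : ∀ w, L w = ⋃ j, L (w ++ [j]))
    (hSBG : ∀ B : Set (List ℕ), (listTree L).IsBranch B → ∃ q, ⋂ u ∈ B, L u = {q}) :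
    ∀ B : Set (List ℕ), (listTree (HLeaf m L)).IsBranch B → ∃ q, ⋂ t ∈ B, HLeaf m L t = {q} := by
  intro B hB
  obtain ⟨f, hflen, hfmono, rfl⟩ := branch_structure hB
  have hfpre : ∀ {a b : ℕ}, a ≤ b → f a <+: f b := prefix_mono_of_mono hfmono
  have hkey : ∀ n, (decode m (f (A m n))).1.length = n ∧ (decode m (f (A m n))).2 = [] := by
    intro n
    have hlen := decode_length (m := m) (f (A m n))
    rw [hflen] at hlen
    have hsnd := decode_snd_lt hm (f (A m n))
    have hk : (decode m (f (A m n))).1.length = n := by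
      refine block_unique hm hsnd (le_of_eq hlen) ?_
      rw [← hlen]
      exact A_mono hm (Nat.lt_succ_self n)
    have hk2 : A m (decode m (f (A m n))).1.length = A m n := by rw [hk]
    refine ⟨hk, List.length_eq_zero_iff.1 (by omega)⟩
  set vF : ℕ → List ℕ := fun n => (decode m (f (A m n))).1 with hvF
  have hdecfull : ∀ n, decode m (f (A m n)) = (vF n, []) := by
    intro n
    exact Prod.ext_iff.2 ⟨rfl, (hkey n).2⟩
  have hlenF : ∀ n, (vF n).length = n := fun n => (hkey n).1
  have hvFmono : ∀ n, vF n <+: vF (n+1) := by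
    intro n
    obtain ⟨s, hs⟩ := hfpre (A_le (Nat.le_succ n))
    have hdec := decode_append m (f (A m n)) s
    rw [hs, hdecfull n] at hdec
    have h2 := (decode_evolve (m := m) s (vF n) []).1
    rw [← hdec, hdecfull (n+1)] at h2
    exact h2
  have hbrG := branch_of_mono L vF hvFmono (fun n => le_of_eq (hlenF n).symm)
  obtain ⟨q, hq⟩ := hSBG _ hbrG
  refine ⟨q, Set.Subset.antisymm ?_ ?_⟩
  · intro x hx
    rw [← hq]
    apply Set.mem_biInter
    rintro u ⟨n, hun⟩
    have hx1 : x ∈ HLeaf m L (f (A m n)) :=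
      Set.biInter_subset_of_mem (Set.mem_range_self (A m n)) hx
    rw [HLeaf_full h1 (hdecfull n)] at hx1
    exact L_antitone' h1 hun hx1
  · apply Set.singleton_subset_iff.2
    have hqmem : ∀ u, (∃ n, u <+: vF n) → q ∈ L u := by
      intro u hu
      have hqm : q ∈ ⋂ u ∈ {u : List ℕ | ∃ n, u <+: vF n}, L u := by exact (Set.ext_iff.1 hq q).2 rfl
      exact Set.biInter_subset_of_mem (show u ∈ {u : List ℕ | ∃ n, u <+: vF n} from hu) hqm
    apply Set.mem_biInter
    rintro t ⟨k, rfl⟩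
    set v := (decode m (f k)).1 with hv
    set g := (decode m (f k)).2 with hg
    set n := v.length with hn
    have hklen := decode_length (m := m) (f k)
    rw [hflen, ← hv, ← hg] at hklen
    rw [← hn] at hklen
    have hsnd : g.length < m n := decode_snd_lt hm (f k)
    have hAk1 : A m n ≤ k := by omega
    have hAk2 : k < A m (n + 1) := by rw [A_succ]; omega
    have hveq : v = vF n := by
      obtain ⟨s, hs⟩ := hfpre hAk1
      have hdec := decode_append m (f (A m n)) s
      rw [hs, hdecfull n] at hdec
      have h2 := (decode_evolve (m := m) s (vF n) []).1
      rw [← hdec] at h2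
      exact (h2.eq_of_length (by rw [hlenF n, ← hn])).symm
    obtain ⟨a, ha⟩ := prefix_snoc (hveq ▸ hvFmono n) (by rw [hveq, hlenF (n+1), hlenF n]; omega)
    have hvsucc : vF (n+1) = v ++ [a] :=
      (ha.eq_of_length (by simp [hveq, hlenF])).symm
    obtain ⟨s2, hs2⟩ := hfpre (le_of_lt hAk2)
    have hdec2 := decode_append m (f k) s2
    rw [hs2, hdecfull (n+1)] at hdec2
    have hev := (decode_evolve (m := m) s2 v g).2.2 a (by
      have : (s2.foldl (dstep m) (v, g)).1 = vF (n + 1) := by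
        rw [hv, hg]
        rw [show ((decode m (f k)).1, (decode m (f k)).2) = decode m (f k) from rfl, ← hdec2]
      rw [this, hvsucc])
    apply mem_HLeaf.2
    refine ⟨a, hev, ?_⟩
    rw [← hvsucc]
    exact hqmem _ ⟨n + 1, List.prefix_refl _⟩

end Assembly

end Perestrojka

open Perestrojka in
/-- Lemma on rebuilding a π-tree along a strictly increasing function
(Lemma `lem.perestrojka` of the paper). -/
theorem exists_piTree_with_shifted_rise
    {X : Type u} [TopologicalSpace X] (F : FoliageTree X) (hF : F.IsPiTree)
    (α : ℕ → ℕ) (hα : StrictMono α) :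
    ∃ H : FoliageTree X, H.IsPiTree ∧
      ∀ p : X, ∀ U ∈ nhds p, α '' F.rise p U ⊆ H.rise p U := by
  classical
  obtain ⟨⟨hOpen, hLS, hOO, hSB, hroot⟩, hGrow⟩ := hF
  obtain ⟨e⟩ := hOO
  have h1 : ∀ w, Lf e w = ⋃ j, Lf e (w ++ [j]) := Lf_union e hLS
  have h2 : ∀ w (j j' : ℕ), j ≠ j' → Disjoint (Lf e (w ++ [j])) (Lf e (w ++ [j'])) :=
    fun w j j' h => Lf_disjoint e hLS w h
  have h3 : Lf e [] = Set.univ := Lf_univ e hroot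
  have h4 : ∀ w, IsOpen (Lf e w) := fun w => hOpen _
  have h5 : ∀ w, (Lf e w).Nonempty := Lf_nonempty e hSB
  have hSBG : ∀ B : Set (List ℕ), (listTree (Lf e)).IsBranch B →
      ∃ q, ⋂ u ∈ B, Lf e u = {q} := fun B hB => Lf_branch_inter e hSB hB
  set m : ℕ → ℕ := fun n => if n = 0 then α 1 else α (n + 1) - α n with hmdef
  have hm : ∀ n, 1 ≤ m n := by
    intro n
    have h01 := hα Nat.zero_lt_one
    by_cases h : n = 0
    · subst h; simp only [hmdef, if_pos rfl]; omega
    · have hs := hα (Nat.lt_succ_self n)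
      simp only [Nat.succ_eq_add_one] at hs
      simp only [hmdef, if_neg h]; omega
  have hA : ∀ n, 1 ≤ n → A m n = α n := by
    intro n hn
    induction n with
    | zero => omega
    | succ k ih =>
      by_cases hk : k = 0
      · subst hk
        show A m 1 = α 1
        rw [A_succ]
        have hA0 : A m 0 = 0 := rfl
        rw [hA0]
        simp [hmdef]
      · have hk1 := hα (Nat.lt_succ_self k)
        simp only [Nat.succ_eq_add_one] at hk1
        rw [A_succ, ih (by omega)]
        simp only [hmdef, if_neg hk]
        omega
  refine ⟨listTree (HLeaf m (Lf e)), ⟨⟨?_, ?_, ?_, ?_, ?_⟩, ?_⟩, ?_⟩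
  · -- OpenIn
    intro t
    show IsOpen (HLeaf m (Lf e) t)
    unfold HLeaf
    exact isOpen_iUnion fun j => isOpen_iUnion fun _ => h4 _
  · -- LocallyStrict
    intro t _
    constructor
    · show HLeaf m (Lf e) t = _
      rw [HLeaf_union hm h1 t, ← sons_union (HLeaf m (Lf e)) t]
    · intro s hs s' hs' hne
      obtain ⟨i, rfl⟩ := listTree_mem_sons.1 hs
      obtain ⟨i', rfl⟩ := listTree_mem_sons.1 hs'
      exact HLeaf_disjoint hm h1 h2 t fun h => hne (by rw [h])
  · exact ⟨RelIso.refl seqLT⟩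
  · exact ⟨⟨([] : List ℕ)⟩, H_strict_branches hm h1 hSBG⟩
  · refine ⟨([] : List ℕ), fun x => ?_, ?_⟩
    · rcases prefix_seqLT_or_eq (List.nil_prefix (l := x)) with h | h
      · exact Or.inr h
      · exact Or.inl h
    · show HLeaf m (Lf e) [] = Set.univ
      rw [HLeaf_full h1 decode_nil, h3]
  · -- GrowsInto
    intro p U hU
    obtain ⟨z, hz, hsh⟩ := hGrow p U hU
    obtain ⟨t, hdec, hlen⟩ := exists_enc hm (e z)
    refine ⟨t, ?_, ?_⟩
    · show p ∈ HLeaf m (Lf e) t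
      rw [HLeaf_full h1 hdec, Lf_apply_e]
      exact hz
    · apply shoot_key hm h1 h5
      rw [hdec]
      exact piRefines_mono (shoot_transfer e z) hsh
  · -- rise inclusion
    intro p U hU
    rintro _ ⟨n, ⟨z, hz, hsh, hht⟩, rfl⟩
    have hlen : (e z).length = n := by
      have h := height_transfer e z
      rw [hht] at h
      exact_mod_cast h.symm
    by_cases hn : n = 0
    · subst hn
      have hznil : e z = [] := List.length_eq_zero_iff.1 hlen
      have hpz : p ∈ Lf e [] := by rw [← hznil, Lf_apply_e]; exact hz
      rw [h1 []] at hpz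
      obtain ⟨j0, hj0⟩ := Set.mem_iUnion.1 hpz
      have hm0 : α 0 < m 0 := by
        simp only [hmdef, if_pos rfl]
        exact hα Nat.zero_lt_one
      set t : List ℕ := (dig (m 0) j0).take (α 0) with htdef
      have htlen : t.length = α 0 := by
        rw [htdef, List.length_take, dig_length]; omega
      have hdect : decode m t = ([], t) := by
        have hfp := feed_partial (m := m) t [] [] (by
          simp only [List.length_nil, Nat.zero_add]
          rw [htlen]; exact hm0)
        show t.foldl (dstep m) ([], []) = ([], t)
        simpa using hfp
      refine ⟨t, ?_, ?_, ?_⟩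
      · show p ∈ HLeaf m (Lf e) t
        apply mem_HLeaf.2
        rw [hdect]
        exact ⟨j0, List.take_prefix _ _, hj0⟩
      · apply shoot_key hm h1 h5
        rw [hdect]
        have hsub := shoot_transfer e z
        rw [hznil] at hsub
        exact piRefines_mono hsub hsh
      · show (listTree (HLeaf m (Lf e))).height t = _
        rw [listTree_height, htlen]
    · obtain ⟨t, hdec, htlen⟩ := exists_enc hm (e z)
      refine ⟨t, ?_, ?_, ?_⟩
      · show p ∈ HLeaf m (Lf e) t
        rw [HLeaf_full h1 hdec, Lf_apply_e]
        exact hz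
      · apply shoot_key hm h1 h5
        rw [hdec]
        exact piRefines_mono (shoot_transfer e z) hsh
      · show (listTree (HLeaf m (Lf e))).height t = _
        rw [listTree_height, htlen, hlen, hA n (by omega)]
end

section
/- For each Λ that is either a natural number ≥ 2 or ω, there is an indexed family ⟨a(n,v,i) : n ∈ ω, v ∈ ω^{2n}, i ∈ Λ∩(n+1)⟩ such that: (a1) a(n,v,i) ∈ ω^n for all n ∈ ω, v ∈ ω^{2n}, i ∈ Λ∩(n+1); and (a2) for all n ∈ ω, v ∈ ω^{2n}, and m ∈ ω, the set ((∏_{i∈Λ∩(n+1)} S̃^m_{a(n,v,i)}) \ (∏_{i∈Λ∩(n+1)} S̃^{m+1}_{a(n,v,i)})) · (ω^ω)^{Λ∩{n+1}} is equal to the pairwise disjoint union over l ∈ ω of the sets ∏_{i∈Λ∩(n+2)} S_{a(n+1, v⌢⟨m,l⟩, i)}. -/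
/-- The cylinder of all infinite extensions of a finite sequence
`x ∈ ω^{<ω}`. -/
def cyl (x : List ℕ) : Set (ℕ → ℕ) := {p | ∀ j : Fin x.length, p j = x.get j}

/-- `cylT x m = ⋃ {cyl (x ⌢ ⟨l⟩) : l ≥ m}` (the set `S̃^m_x` of the paper). -/
def cylT (x : List ℕ) (m : ℕ) : Set (ℕ → ℕ) := ⋃ l ∈ {l : ℕ | m ≤ l}, cyl (x ++ [l])

lemma mem_cyl_append {p : ℕ → ℕ} {x : List ℕ} {l : ℕ} :
    p ∈ cyl (x ++ [l]) ↔ p ∈ cyl x ∧ p x.length = l := by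
  unfold cyl
  simp only [Set.mem_setOf_eq]
  constructor
  · intro h
    refine ⟨fun j => ?_, ?_⟩
    · have hj : (j : ℕ) < (x ++ [l]).length := by simp
      have := h ⟨j, hj⟩
      simpa [List.get_eq_getElem, List.getElem_append_left j.isLt] using this
    · have hj : x.length < (x ++ [l]).length := by simp
      have := h ⟨x.length, hj⟩
      simpa [List.get_eq_getElem, List.getElem_append_right (Nat.le_refl x.length)] using this
  · rintro ⟨h1, h2⟩ j
    rcases Nat.lt_or_ge (j : ℕ) x.length with hlt | hge
    · have := h1 ⟨j, hlt⟩
      simpa [List.get_eq_getElem, List.getElem_append_left hlt] using this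
    · have hj : (j : ℕ) = x.length := by have := j.isLt; simp at this; omega
      simp [List.get_eq_getElem]
      rw [List.getElem_append_right (by omega)]
      simp [hj, h2]

lemma mem_cylT {p : ℕ → ℕ} {x : List ℕ} {m : ℕ} :
    p ∈ cylT x m ↔ p ∈ cyl x ∧ m ≤ p x.length := by
  unfold cylT
  simp only [Set.mem_iUnion, Set.mem_setOf_eq, exists_prop]
  constructor
  · rintro ⟨l, hl, h⟩
    rw [mem_cyl_append] at h
    exact ⟨h.1, by omega⟩
  · rintro ⟨h1, h2⟩
    exact ⟨p x.length, h2, mem_cyl_append.2 ⟨h1, rfl⟩⟩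

lemma mem_cyl_ofFn {p : ℕ → ℕ} {s : ℕ} {f : Fin s → ℕ} :
    p ∈ cyl (List.ofFn f) ↔ ∀ j : Fin s, p j = f j := by
  unfold cyl
  simp only [Set.mem_setOf_eq]
  constructor
  · intro h j
    have := h (Fin.cast (List.length_ofFn (f := f)).symm j)
    simpa [List.get_ofFn] using this
  · intro h j
    rw [List.get_ofFn]
    exact h (Fin.cast (List.length_ofFn (f := f)) j)

/-- The data type used to index the pieces of the partition at one step. -/
def DT (t s : ℕ) : Type := {f : Fin t → ℕ // ∃ i, f i = 0} × (Fin s → ℕ)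

instance (t s : ℕ) : Encodable (DT t s) := by unfold DT; infer_instance

lemma DT.infinite {t s : ℕ} (h1 : 1 ≤ t) (h2 : 2 ≤ t ∨ 1 ≤ s) : Infinite (DT t s) := by
  unfold DT
  have hne : Nonempty {f : Fin t → ℕ // ∃ i, f i = 0} :=
    ⟨⟨fun _ => 0, ⟨⟨0, by omega⟩, rfl⟩⟩⟩
  rcases h2 with h2 | h2
  · have : Infinite {f : Fin t → ℕ // ∃ i, f i = 0} := by
      apply Infinite.of_injective
        (fun m : ℕ => (⟨fun j => if (j : ℕ) = 1 then m else 0, ⟨⟨0, by omega⟩, by simp⟩⟩ :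
          {f : Fin t → ℕ // ∃ i, f i = 0}))
      intro m m' hmm
      have := congrArg (fun f => f.1 ⟨1, by omega⟩) hmm
      simpa using this
    exact Prod.infinite_of_left
  · have : Infinite (Fin s → ℕ) := by
      apply Infinite.of_injective (fun m : ℕ => (fun _ => m : Fin s → ℕ))
      intro m m' hmm
      have := congrFun hmm ⟨0, by omega⟩
      simpa using this
    exact Prod.infinite_of_right

/-- The recursive construction of the family `a`. -/
noncomputable def afam (t S : ℕ → ℕ) (e : ∀ n, ℕ ≃ DT (t (n + 1)) (S n)) :
    ℕ → List ℕ → ℕ → List ℕ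
  | 0, _, _ => []
  | n + 1, w, i =>
    if h : i < t (n + 1) then
      afam t S e n (w.take (2 * n)) i ++
        [w.getD (2 * n) 0 + (e n (w.getD (2 * n + 1) 0)).1.1 ⟨i, h⟩]
    else List.ofFn (e n (w.getD (2 * n + 1) 0)).2

theorem main_aux (Λ : Set ℕ) (t : ℕ → ℕ)
    (H1 : ∀ n, Λ ∩ Set.Iio n = Set.Iio (t n))
    (H2 : ∀ n, 1 ≤ t (n + 1))
    (H3 : ∀ n, t (n + 2) = t (n + 1) + 1 ∨ (t (n + 2) = t (n + 1) ∧ 2 ≤ t (n + 1))) :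
    ∃ a : ℕ → List ℕ → ℕ → List ℕ,
      (∀ (n : ℕ) (v : List ℕ), v.length = 2 * n →
        ∀ i ∈ Λ ∩ Set.Iio (n + 1), (a n v i).length = n) ∧
      (∀ (n : ℕ) (v : List ℕ), v.length = 2 * n → ∀ m : ℕ,
        (({p : ℕ → ℕ → ℕ | ∀ i ∈ Λ ∩ Set.Iio (n + 1), p i ∈ cylT (a n v i) m} \
            {p : ℕ → ℕ → ℕ | ∀ i ∈ Λ ∩ Set.Iio (n + 1), p i ∈ cylT (a n v i) (m + 1)}) =
          ⋃ l : ℕ, {p : ℕ → ℕ → ℕ | ∀ i ∈ Λ ∩ Set.Iio (n + 2),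
            p i ∈ cyl (a (n + 1) (v ++ [m, l]) i)}) ∧
        ∀ l l' : ℕ, l ≠ l' →
          Disjoint
            {p : ℕ → ℕ → ℕ | ∀ i ∈ Λ ∩ Set.Iio (n + 2),
              p i ∈ cyl (a (n + 1) (v ++ [m, l]) i)}
            {p : ℕ → ℕ → ℕ | ∀ i ∈ Λ ∩ Set.Iio (n + 2),
              p i ∈ cyl (a (n + 1) (v ++ [m, l']) i)}) := by
  have hmem : ∀ n i, i ∈ Λ ∩ Set.Iio n ↔ i < t n := by
    intro n i; rw [H1]; exact Set.mem_Iio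
  have tle : ∀ n, t n ≤ n := by
    intro n
    by_contra h
    have : n ∈ Λ ∩ Set.Iio n := by rw [H1]; exact Set.mem_Iio.2 (by omega)
    exact absurd this.2 (by simp)
  have hsucc : ∀ n, t (n + 2) = t (n + 1) + 1 → t (n + 1) = n + 1 := by
    intro n h
    have h1 : t (n + 1) ∈ Λ ∩ Set.Iio (n + 2) := by rw [hmem]; omega
    have h2 : t (n + 1) ∉ Λ ∩ Set.Iio (n + 1) := by rw [hmem]; omega
    have := tle (n + 1)
    by_contra hc
    exact h2 (by constructor; exact h1.1; exact Set.mem_Iio.2 (by have := h1.2; omega))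
  set S : ℕ → ℕ := fun n => if t (n + 2) = t (n + 1) + 1 then n + 1 else 0 with hS
  have hinf : ∀ n, Infinite (DT (t (n + 1)) (S n)) := by
    intro n
    apply DT.infinite (H2 n)
    by_cases h : t (n + 2) = t (n + 1) + 1
    · right; simp [hS, h]
    · left; rcases H3 n with h' | h'
      · exact absurd h' h
      · exact h'.2
  have e : ∀ n, ℕ ≃ DT (t (n + 1)) (S n) := fun n =>
    (@Denumerable.eqv _ (@Denumerable.ofEncodableOfInfinite _ _ (hinf n))).symm
  set a : ℕ → List ℕ → ℕ → List ℕ := afam t S e with ha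
  -- computation lemmas
  have hlt_eq : ∀ (n : ℕ) (v : List ℕ), v.length = 2 * n → ∀ m l i (h : i < t (n + 1)),
      a (n + 1) (v ++ [m, l]) i = a n v i ++ [m + (e n l).1.1 ⟨i, h⟩] := by
    intro n v hv m l i h
    have h1 : (v ++ [m, l]).take (2 * n) = v := by
      rw [← hv]; exact List.take_left
    have h2 : (v ++ [m, l]).getD (2 * n) 0 = m := by
      rw [← hv, List.getD_append_right _ _ _ _ (le_refl _)]; simp
    have h3 : (v ++ [m, l]).getD (2 * n + 1) 0 = l := by
      rw [← hv, List.getD_append_right _ _ _ _ (by omega)]; simp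
    rw [ha]
    show (if h : i < t (n + 1) then _ else _) = _
    rw [dif_pos h, h1, h2, h3]
  have hge_eq : ∀ (n : ℕ) (v : List ℕ), v.length = 2 * n → ∀ m l i, ¬ i < t (n + 1) →
      a (n + 1) (v ++ [m, l]) i = List.ofFn (e n l).2 := by
    intro n v hv m l i h
    have h3 : (v ++ [m, l]).getD (2 * n + 1) 0 = l := by
      rw [← hv, List.getD_append_right _ _ _ _ (by omega)]; simp
    rw [ha]
    show (if h : i < t (n + 1) then _ else _) = _
    rw [dif_neg h, h3]
  refine ⟨a, ?_, ?_⟩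
  · -- lengths
    intro n
    induction n with
    | zero => intro v hv i hi; rfl
    | succ n ih =>
      intro v hv i hi
      rw [hmem] at hi
      by_cases h : i < t (n + 1)
      · rw [ha]
        show (List.length (if h : i < t (n + 1) then _ else _)) = n + 1
        rw [dif_pos h]
        rw [List.length_append]
        have htake : (v.take (2 * n)).length = 2 * n := by
          rw [List.length_take]; omega
        have := ih (v.take (2 * n)) htake i (by rw [hmem]; exact h)
        rw [← ha] at *
        simp [this]
      · have hi2 : i < t (n + 2) := hi
        have hS1 : t (n + 2) = t (n + 1) + 1 := by
          rcases H3 n with h' | h'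
          · exact h'
          · omega
        rw [ha]
        show (List.length (if h : i < t (n + 1) then _ else _)) = n + 1
        rw [dif_neg h]
        simp [hS, hS1]
  · intro n v hv m
    constructor
    · ext p
      simp only [Set.mem_diff, Set.mem_setOf_eq, Set.mem_iUnion]
      constructor
      · rintro ⟨h1, h2⟩
        push_neg at h2
        obtain ⟨i0, hi0, hni0⟩ := h2
        rw [hmem] at hi0
        have hc : ∀ i, i < t (n + 1) →
            p i ∈ cyl (a n v i) ∧ m ≤ p i (a n v i).length := by
          intro i h
          have := h1 i (by rw [hmem]; exact h)
          rwa [mem_cylT] at this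
        have h0 : p i0 ((a n v i0).length) = m := by
          have h' := hc i0 hi0
          rw [mem_cylT] at hni0
          push_neg at hni0
          have := hni0 h'.1
          omega
        set k : Fin (t (n + 1)) → ℕ := fun i => p i.1 ((a n v i.1).length) - m with hk
        have hk0 : ∃ i, k i = 0 := ⟨⟨i0, hi0⟩, by simp [hk, h0]⟩
        set d : DT (t (n + 1)) (S n) := ⟨⟨k, hk0⟩, fun j => p (n + 1) j⟩ with hd
        refine ⟨(e n).symm d, ?_⟩
        intro i hi
        have hiΛ := hi.1
        have hi2 : i < n + 2 := hi.2
        by_cases h : i < t (n + 1)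
        · rw [hlt_eq n v hv m _ i h, (e n).apply_symm_apply, mem_cyl_append]
          refine ⟨(hc i h).1, ?_⟩
          have := (hc i h).2
          simp only [hd, hk]
          omega
        · have hin1 : i = n + 1 := by
            by_contra hc'
            have : i ∈ Λ ∩ Set.Iio (n + 1) := ⟨hiΛ, Set.mem_Iio.2 (by omega)⟩
            rw [hmem] at this
            exact h this
          rw [hge_eq n v hv m _ i h, (e n).apply_symm_apply, mem_cyl_ofFn]
          intro j
          simp [hd, hin1]
      · rintro ⟨l, h⟩
        have hmain : ∀ i, ∀ hi : i < t (n + 1),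
            p i ∈ cyl (a n v i) ∧ p i (a n v i).length = m + (e n l).1.1 ⟨i, hi⟩ := by
          intro i hi
          have hi' : i ∈ Λ ∩ Set.Iio (n + 2) := by
            have : i ∈ Λ ∩ Set.Iio (n + 1) := by rw [hmem]; exact hi
            exact ⟨this.1, Set.mem_Iio.2 (by have := this.2; simp at this; omega)⟩
          have := h i hi'
          rwa [hlt_eq n v hv m l i hi, mem_cyl_append] at this
        constructor
        · intro i hi
          rw [hmem] at hi
          rw [mem_cylT]
          refine ⟨(hmain i hi).1, ?_⟩
          rw [(hmain i hi).2]; omega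
        · intro hall
          obtain ⟨i1, h10⟩ := (e n l).1.2
          have hin : (i1 : ℕ) ∈ Λ ∩ Set.Iio (n + 1) := by rw [hmem]; exact i1.isLt
          have := hall i1 hin
          rw [mem_cylT] at this
          have h2 := this.2
          have h3 := (hmain i1 i1.isLt).2
          simp only [Fin.eta] at h3
          omega
    · intro l l' hll
      rw [Set.disjoint_left]
      intro p hp hp'
      simp only [Set.mem_setOf_eq] at hp hp'
      apply hll
      apply (e n).injective
      have hfst : (e n l).1 = (e n l').1 := by
        apply Subtype.ext
        funext i
        have hi' : (i : ℕ) ∈ Λ ∩ Set.Iio (n + 2) := by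
          have : (i : ℕ) ∈ Λ ∩ Set.Iio (n + 1) := by rw [hmem]; exact i.isLt
          exact ⟨this.1, Set.mem_Iio.2 (by have := i.isLt; have := tle (n + 1); omega)⟩
        have e1 := hp i hi'
        have e2 := hp' i hi'
        rw [hlt_eq n v hv m l i i.isLt, mem_cyl_append] at e1
        rw [hlt_eq n v hv m l' i i.isLt, mem_cyl_append] at e2
        have := e1.2
        have := e2.2
        simp only [Fin.eta] at *
        omega
      have hsnd : (e n l).2 = (e n l').2 := by
        funext j
        have hS1 : t (n + 2) = t (n + 1) + 1 := by
          by_contra hcon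
          have := j.isLt
          simp [hS, hcon] at this
        have ht1 : t (n + 1) = n + 1 := hsucc n hS1
        have hin : (n + 1) ∈ Λ ∩ Set.Iio (n + 2) := by rw [hmem]; omega
        have hnot : ¬ (n + 1) < t (n + 1) := by omega
        have e1 := hp (n + 1) hin
        have e2 := hp' (n + 1) hin
        rw [hge_eq n v hv m l _ hnot, mem_cyl_ofFn] at e1
        rw [hge_eq n v hv m l' _ hnot, mem_cyl_ofFn] at e2
        rw [← e1 j, e2 j]
      exact Prod.ext hfst hsnd

/-- Lemma `lem.a(n,v,i)` of the paper.  Subsets of `^{I}(ω^ω)` for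
`I ⊆ ℕ` are encoded as subsets of `ℕ → (ℕ → ℕ)` constrained only on the
coordinates in `I`. -/
theorem exists_coherent_cylinder_family
    (Λ : Set ℕ) (hΛ : (∃ k, 2 ≤ k ∧ Λ = Set.Iio k) ∨ Λ = Set.univ) :
    ∃ a : ℕ → List ℕ → ℕ → List ℕ,
      (∀ (n : ℕ) (v : List ℕ), v.length = 2 * n →
        ∀ i ∈ Λ ∩ Set.Iio (n + 1), (a n v i).length = n) ∧
      (∀ (n : ℕ) (v : List ℕ), v.length = 2 * n → ∀ m : ℕ,
        (({p : ℕ → ℕ → ℕ | ∀ i ∈ Λ ∩ Set.Iio (n + 1), p i ∈ cylT (a n v i) m} \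
            {p : ℕ → ℕ → ℕ | ∀ i ∈ Λ ∩ Set.Iio (n + 1), p i ∈ cylT (a n v i) (m + 1)}) =
          ⋃ l : ℕ, {p : ℕ → ℕ → ℕ | ∀ i ∈ Λ ∩ Set.Iio (n + 2),
            p i ∈ cyl (a (n + 1) (v ++ [m, l]) i)}) ∧
        ∀ l l' : ℕ, l ≠ l' →
          Disjoint
            {p : ℕ → ℕ → ℕ | ∀ i ∈ Λ ∩ Set.Iio (n + 2),
              p i ∈ cyl (a (n + 1) (v ++ [m, l]) i)}
            {p : ℕ → ℕ → ℕ | ∀ i ∈ Λ ∩ Set.Iio (n + 2),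
              p i ∈ cyl (a (n + 1) (v ++ [m, l']) i)}) := by
  rcases hΛ with ⟨k, hk, rfl⟩ | rfl
  · refine main_aux _ (fun n => min k n) ?_ ?_ ?_
    · intro n; exact Set.Iio_inter_Iio
    · intro n; show 1 ≤ min k (n + 1); omega
    · intro n
      show min k (n + 2) = min k (n + 1) + 1 ∨ (min k (n + 2) = min k (n + 1) ∧ 2 ≤ min k (n + 1))
      omega
  · refine main_aux _ (fun n => n) ?_ ?_ ?_
    · intro n; simp
    · intro n; show 1 ≤ n + 1; omega
    · intro n; show n + 2 = n + 1 + 1 ∨ _; left; rfl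
end
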